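/- arXiv:2005.08678 — 7 statements merged into one kernel-verified Lean document; each statement's English description precedes it below -/
import Mathlib

section
/- Let Λ ⊆ ℝ and α > 0. Then the upper average circular density of Λ satisfies D⁺_circ(Λ) = limsup_{r→∞} (2α/(πr²)) ∫₀^r #(((Λ∖{0}) × αℤ) ∩ B_t(0)) dt/t, where B_t(0) denotes the open Euclidean disk of radius t centered at the origin in ℝ² and # denotes cardinality. -/
open MeasureTheory Filter Set
open scoped ENNReal

/-- The chord sum `∑_{λ ∈ Λ ∩ [−t,t]} √(t² − λ²)`, valued in `ℝ≥0∞`. -/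
noncomputable def circChordSum (Λ : Set ℝ) (t : ℝ) : ℝ≥0∞ :=
  ∑' lam : (Λ ∩ Set.Icc (-t) t : Set ℝ), ENNReal.ofReal (Real.sqrt (t ^ 2 - (lam : ℝ) ^ 2))

/-- Upper average circular density
`D⁺_circ(Λ) = limsup_{r→∞} (4/(πr²)) ∫₀^r (∑_{λ ∈ Λ∩[−t,t]} √(t²−λ²)) dt/t`
(automatically `∞` if `Λ` is uncountable, since the inner sum is then eventually infinite). -/
noncomputable def circDensity (Λ : Set ℝ) : ℝ≥0∞ :=
  Filter.limsup (fun r : ℝ =>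
    ENNReal.ofReal (4 / (Real.pi * r ^ 2)) *
      ∫⁻ t in Set.Ioc (0 : ℝ) r, circChordSum Λ t / ENNReal.ofReal t) Filter.atTop

namespace CircAux

/-- fiber over x: admissible second coordinates -/
def Vset (α x t : ℝ) : Set ℝ := {y : ℝ | (∃ k : ℤ, y = α * k) ∧ x ^ 2 + y ^ 2 < t ^ 2}

lemma Vset_empty {α x t : ℝ} (h : t ^ 2 ≤ x ^ 2) : Vset α x t = ∅ := by
  ext y
  simp only [Vset, mem_setOf_eq, mem_empty_iff_false, iff_false, not_and]
  intro _
  nlinarith [sq_nonneg y]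

lemma Vset_eq_image {α x t : ℝ} (hα : 0 < α) (h : x ^ 2 < t ^ 2) :
    Vset α x t = (fun k : ℤ => α * (k : ℝ)) ''
      ↑(Finset.Ioo (-⌈Real.sqrt (t ^ 2 - x ^ 2) / α⌉) ⌈Real.sqrt (t ^ 2 - x ^ 2) / α⌉) := by
  set s := Real.sqrt (t ^ 2 - x ^ 2) with hs
  have hs0 : 0 ≤ s := Real.sqrt_nonneg _
  have hs2 : s ^ 2 = t ^ 2 - x ^ 2 := Real.sq_sqrt (by linarith)
  set b := s / α with hb
  ext y
  simp only [Vset, mem_setOf_eq, Set.mem_image, Finset.coe_Ioo, Set.mem_Ioo]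
  constructor
  · rintro ⟨⟨k, rfl⟩, hlt⟩
    have h1 : (α * (k : ℝ)) ^ 2 < s ^ 2 := by nlinarith
    have h2 : |α * (k : ℝ)| < s := by
      have := abs_lt_of_sq_lt_sq' h1 hs0
      exact abs_lt.mpr this
    have h3 : |(k : ℝ)| < b := by
      rw [abs_mul, abs_of_pos hα] at h2
      rw [hb, lt_div_iff₀ hα]; linarith
    have habs := abs_lt.mp h3
    refine ⟨k, ⟨?_, Int.lt_ceil.mpr habs.2⟩, rfl⟩
    have : -k < ⌈b⌉ := Int.lt_ceil.mpr (by push_cast; linarith)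
    omega
  · rintro ⟨k, ⟨hk1, hk2⟩, rfl⟩
    have hbpos : 0 < b := div_pos (Real.sqrt_pos.mpr (by linarith)) hα
    have h3 : (⌈b⌉ : ℝ) - 1 < b := by
      have := Int.ceil_lt_add_one (R := ℝ) b
      linarith
    have hkb : |(k : ℝ)| < b := by
      have h1 : (k : ℝ) ≤ (⌈b⌉ : ℝ) - 1 := by exact_mod_cast Int.le_sub_one_iff.mpr hk2
      have h2 : -(k : ℝ) ≤ (⌈b⌉ : ℝ) - 1 := by
        have h2' : -k ≤ ⌈b⌉ - 1 := by omega
        exact_mod_cast h2'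
      rw [abs_lt]; constructor <;> linarith
    refine ⟨⟨k, rfl⟩, ?_⟩
    have h4 : |(k : ℝ)| * α < s := by
      have := (lt_div_iff₀ hα).mp hkb
      linarith
    have h5 : |α * (k : ℝ)| < s := by
      rw [abs_mul, abs_of_pos hα]; linarith
    have h6 := abs_lt.mp h5
    nlinarith

lemma Vset_encard {α x t : ℝ} (hα : 0 < α) (h : x ^ 2 < t ^ 2) :
    (Vset α x t).encard =
      (((2 * ⌈Real.sqrt (t ^ 2 - x ^ 2) / α⌉ - 1).toNat : ℕ) : ℕ∞) := by
  rw [Vset_eq_image hα h]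
  rw [Function.Injective.encard_image (fun k₁ k₂ hk => by
    have := mul_left_cancel₀ hα.ne' hk; exact_mod_cast this)]
  rw [Set.encard_coe_eq_coe_finsetCard, Int.card_Ioo]
  congr 1
  omega

end CircAux

namespace CircAux

noncomputable def vv (α x t : ℝ) : ℝ≥0∞ := ((Vset α x t).encard : ℝ≥0∞)

noncomputable def ee (t x : ℝ) : ℝ≥0∞ := (Set.Ioo (-t) t).indicator (fun _ => (1 : ℝ≥0∞)) x

lemma ee_eq_one {t x : ℝ} (ht : 0 < t) (h : x ^ 2 < t ^ 2) : ee t x = 1 := by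
  have := abs_lt_of_sq_lt_sq' h ht.le
  simp [ee, Set.indicator_of_mem, Set.mem_Ioo.mpr this]

lemma ee_eq_zero {t x : ℝ} (h : t ^ 2 ≤ x ^ 2) : ee t x = 0 := by
  have : x ∉ Set.Ioo (-t) t := by
    intro hx
    rcases Set.mem_Ioo.mp hx with ⟨h1, h2⟩
    nlinarith [sq_lt_sq' h1 h2]
  simp [ee, Set.indicator_of_notMem this]

lemma vv_ofReal {α x t : ℝ} (hα : 0 < α) (h : x ^ 2 < t ^ 2) :
    vv α x t = ENNReal.ofReal (2 * (⌈Real.sqrt (t ^ 2 - x ^ 2) / α⌉ : ℝ) - 1) := by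
  rw [vv, Vset_encard hα h]
  rw [ENat.toENNReal_coe, ← ENNReal.ofReal_natCast]
  congr 1
  have h0 : (0:ℤ) ≤ 2 * ⌈Real.sqrt (t ^ 2 - x ^ 2) / α⌉ - 1 := by
    have : (1:ℤ) ≤ ⌈Real.sqrt (t ^ 2 - x ^ 2) / α⌉ := by
      apply Int.one_le_ceil_iff.mpr
      exact div_pos (Real.sqrt_pos.mpr (by linarith)) hα
    omega
  rw [← Int.cast_natCast, Int.toNat_of_nonneg h0]
  push_cast; ring

lemma key_bounds {α t : ℝ} (hα : 0 < α) (ht : 0 < t) (x : ℝ) :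
    ENNReal.ofReal (2 * Real.sqrt (t ^ 2 - x ^ 2) / α) ≤ vv α x t + ee t x ∧
    vv α x t ≤ ENNReal.ofReal (2 * Real.sqrt (t ^ 2 - x ^ 2) / α) + ee t x ∧
    ENNReal.ofReal (Real.sqrt (t ^ 2 - x ^ 2) * α⁻¹) ≤ vv α x t ∧
    ENNReal.ofReal (Real.sqrt 3 * t) * ee t x ≤
      ENNReal.ofReal (Real.sqrt ((2 * t) ^ 2 - x ^ 2)) := by
  rcases lt_or_ge (x ^ 2) (t ^ 2) with h | h
  · set s := Real.sqrt (t ^ 2 - x ^ 2) with hsdef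
    have hs0 : 0 < s := Real.sqrt_pos.mpr (by linarith)
    set b := s / α with hb
    have hbpos : 0 < b := div_pos hs0 hα
    have hm1 : (1 : ℝ) ≤ (⌈b⌉ : ℝ) := by exact_mod_cast Int.one_le_ceil_iff.mpr hbpos
    have hbm : b ≤ (⌈b⌉ : ℝ) := Int.le_ceil b
    have hmb : (⌈b⌉ : ℝ) < b + 1 := by
      have := Int.ceil_lt_add_one (R := ℝ) b
      exact_mod_cast this
    have hvv := vv_ofReal hα h
    have hee := ee_eq_one ht h
    have h2b : 2 * s / α = 2 * b := by rw [hb]; ring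
    refine ⟨?_, ?_, ?_, ?_⟩
    · rw [hvv, hee, ← ENNReal.ofReal_one, ← ENNReal.ofReal_add (by linarith) zero_le_one]
      apply ENNReal.ofReal_le_ofReal
      rw [h2b]; linarith
    · rw [hvv, hee, ← ENNReal.ofReal_one, ← ENNReal.ofReal_add (by positivity) zero_le_one]
      apply ENNReal.ofReal_le_ofReal
      rw [h2b]; linarith
    · rw [hvv]
      apply ENNReal.ofReal_le_ofReal
      have : s * α⁻¹ = b := by rw [hb]; ring
      rw [this]; linarith
    · rw [hee, mul_one]
      apply ENNReal.ofReal_le_ofReal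
      have h3 : Real.sqrt 3 * t = Real.sqrt (3 * t ^ 2) := by
        rw [Real.sqrt_mul (by norm_num), Real.sqrt_sq ht.le]
      rw [h3]
      apply Real.sqrt_le_sqrt
      nlinarith
  · have hvv : vv α x t = 0 := by
      rw [vv, Vset_empty h]; simp
    have hee := ee_eq_zero h
    have hs : Real.sqrt (t ^ 2 - x ^ 2) = 0 := by
      apply Real.sqrt_eq_zero_of_nonpos; linarith
    refine ⟨?_, ?_, ?_, ?_⟩
    · simp [hs, hvv, hee]
    · simp [hvv]
    · simp [hs]
    · simp [hee]

end CircAux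

namespace CircAux

noncomputable def Cp (Λ : Set ℝ) (t : ℝ) : ℝ≥0∞ :=
  ∑' x : ↥(Λ \ {0}), ENNReal.ofReal (Real.sqrt (t ^ 2 - (x : ℝ) ^ 2))

noncomputable def nf (Λ : Set ℝ) (t : ℝ) : ℝ≥0∞ := ∑' x : ↥(Λ \ {0}), ee t (x : ℝ)

noncomputable def Nf (Λ : Set ℝ) (α t : ℝ) : ℝ≥0∞ := ∑' x : ↥(Λ \ {0}), vv α (x : ℝ) t

def Sset (Λ : Set ℝ) (α t : ℝ) : Set (ℝ × ℝ) :=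
  {p : ℝ × ℝ | p.1 ∈ Λ ∧ p.1 ≠ 0 ∧ (∃ k : ℤ, p.2 = α * k) ∧ p.1 ^ 2 + p.2 ^ 2 < t ^ 2}

def Sequiv (Λ : Set ℝ) (α t : ℝ) : ↥(Sset Λ α t) ≃ Σ x : ↥(Λ \ {0}), ↥(Vset α (x : ℝ) t) where
  toFun p := ⟨⟨p.1.1, ⟨p.2.1, by simpa using p.2.2.1⟩⟩, ⟨p.1.2, ⟨p.2.2.2.1, p.2.2.2.2⟩⟩⟩
  invFun σ := ⟨(σ.1.1, σ.2.1), ⟨σ.1.2.1, by simpa using σ.1.2.2, σ.2.2.1, σ.2.2.2⟩⟩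
  left_inv p := rfl
  right_inv σ := rfl

lemma encard_S_eq (Λ : Set ℝ) (α t : ℝ) : ((Sset Λ α t).encard : ℝ≥0∞) = Nf Λ α t := by
  have h1 : ((Sset Λ α t).encard : ℝ≥0∞) = ∑' (_ : ↥(Sset Λ α t)), (1 : ℝ≥0∞) :=
    (ENNReal.tsum_set_one _).symm
  have h2 : (∑' (_ : ↥(Sset Λ α t)), (1 : ℝ≥0∞)) =
      ∑' (_ : Σ x : ↥(Λ \ {0}), ↥(Vset α (x : ℝ) t)), (1 : ℝ≥0∞) :=
    Equiv.tsum_eq (Sequiv Λ α t) (fun _ => (1 : ℝ≥0∞))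
  have h3 : (∑' (_ : Σ x : ↥(Λ \ {0}), ↥(Vset α (x : ℝ) t)), (1 : ℝ≥0∞)) =
      ∑' (x : ↥(Λ \ {0})), ∑' (_ : ↥(Vset α (x : ℝ) t)), (1 : ℝ≥0∞) :=
    ENNReal.tsum_sigma' _
  rw [h1, h2, h3]
  unfold Nf vv
  exact tsum_congr fun x => ENNReal.tsum_set_one _

lemma nf_encard (Λ : Set ℝ) (t : ℝ) :
    nf Λ t = (((Λ \ {0}) ∩ Set.Ioo (-t) t).encard : ℝ≥0∞) := by
  have h1 : nf Λ t = ∑' x : ℝ, Set.indicator (Λ \ {0})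
      (fun y => Set.indicator (Set.Ioo (-t) t) (fun _ => (1 : ℝ≥0∞)) y) x :=
    tsum_subtype (Λ \ {0}) (fun y => Set.indicator (Set.Ioo (-t) t) (fun _ => (1 : ℝ≥0∞)) y)
  have h2 : (((Λ \ {0}) ∩ Set.Ioo (-t) t).encard : ℝ≥0∞)
      = ∑' (_ : ↥((Λ \ {0}) ∩ Set.Ioo (-t) t)), (1 : ℝ≥0∞) := (ENNReal.tsum_set_one _).symm
  have h3 : (∑' (_ : ↥((Λ \ {0}) ∩ Set.Ioo (-t) t)), (1 : ℝ≥0∞)) =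
      ∑' x : ℝ, Set.indicator ((Λ \ {0}) ∩ Set.Ioo (-t) t) (fun _ => (1 : ℝ≥0∞)) x :=
    tsum_subtype ((Λ \ {0}) ∩ Set.Ioo (-t) t) (fun _ => (1 : ℝ≥0∞))
  rw [h1, h2, h3, Set.indicator_indicator]

lemma I2 {Λ : Set ℝ} {α t : ℝ} (hα : 0 < α) (ht : 0 < t) :
    ENNReal.ofReal (2 / α) * Cp Λ t ≤ Nf Λ α t + nf Λ t := by
  rw [Cp, ← ENNReal.tsum_mul_left, Nf, nf, ← ENNReal.tsum_add]
  apply ENNReal.tsum_le_tsum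
  intro x
  rw [← ENNReal.ofReal_mul (by positivity)]
  have h : 2 / α * Real.sqrt (t ^ 2 - (x : ℝ) ^ 2) = 2 * Real.sqrt (t ^ 2 - (x : ℝ) ^ 2) / α := by
    ring
  rw [h]
  exact (key_bounds hα ht x).1

lemma I3 {Λ : Set ℝ} {α t : ℝ} (hα : 0 < α) (ht : 0 < t) :
    Nf Λ α t ≤ ENNReal.ofReal (2 / α) * Cp Λ t + nf Λ t := by
  rw [Cp, ← ENNReal.tsum_mul_left, Nf, nf, ← ENNReal.tsum_add]
  apply ENNReal.tsum_le_tsum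
  intro x
  rw [← ENNReal.ofReal_mul (by positivity)]
  have h : 2 / α * Real.sqrt (t ^ 2 - (x : ℝ) ^ 2) = 2 * Real.sqrt (t ^ 2 - (x : ℝ) ^ 2) / α := by
    ring
  rw [h]
  exact (key_bounds hα ht x).2.1

lemma Ic {Λ : Set ℝ} {α t : ℝ} (hα : 0 < α) (ht : 0 < t) :
    ENNReal.ofReal α⁻¹ * Cp Λ t ≤ Nf Λ α t := by
  rw [Cp, ← ENNReal.tsum_mul_left, Nf]
  apply ENNReal.tsum_le_tsum
  intro x
  rw [← ENNReal.ofReal_mul (by positivity), mul_comm]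
  exact (key_bounds hα ht x).2.2.1

lemma I4 {Λ : Set ℝ} {α t : ℝ} (hα : 0 < α) (ht : 0 < t) :
    ENNReal.ofReal (Real.sqrt 3 * t) * nf Λ t ≤ Cp Λ (2 * t) := by
  rw [nf, ← ENNReal.tsum_mul_left, Cp]
  apply ENNReal.tsum_le_tsum
  intro x
  exact (key_bounds hα ht x).2.2.2

lemma Cp_le_chord {Λ : Set ℝ} {t : ℝ} (ht : 0 ≤ t) : Cp Λ t ≤ circChordSum Λ t := by
  set ff : ℝ → ℝ≥0∞ := fun x => ENNReal.ofReal (Real.sqrt (t ^ 2 - x ^ 2)) with hff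
  have e1 : Cp Λ t = ∑' x : ℝ, Set.indicator (Λ \ {0}) ff x := tsum_subtype (Λ \ {0}) ff
  have e2 : circChordSum Λ t = ∑' x : ℝ, Set.indicator (Λ ∩ Set.Icc (-t) t) ff x :=
    tsum_subtype (Λ ∩ Set.Icc (-t) t) ff
  rw [e1, e2]
  apply ENNReal.tsum_le_tsum
  intro x
  by_cases hx : x ∈ Λ \ {0}
  · rw [Set.indicator_of_mem hx]
    by_cases hx2 : x ∈ Λ ∩ Set.Icc (-t) t
    · rw [Set.indicator_of_mem hx2]
    · rw [Set.indicator_of_notMem hx2]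
      have hxt : t ^ 2 - x ^ 2 ≤ 0 := by
        rcases not_and_or.mp hx2 with h | h
        · exact absurd hx.1 h
        · rw [Set.mem_Icc, not_and_or] at h
          rcases h with h' | h'
          · push_neg at h'; nlinarith
          · push_neg at h'; nlinarith
      simp [hff, Real.sqrt_eq_zero_of_nonpos hxt]
  · simp [Set.indicator_of_notMem hx]

lemma chord_le_Cp {Λ : Set ℝ} {t : ℝ} (ht : 0 ≤ t) :
    circChordSum Λ t ≤ Cp Λ t + ENNReal.ofReal t := by
  set ff : ℝ → ℝ≥0∞ := fun x => ENNReal.ofReal (Real.sqrt (t ^ 2 - x ^ 2)) with hff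
  have e1 : Cp Λ t = ∑' x : ℝ, Set.indicator (Λ \ {0}) ff x := tsum_subtype (Λ \ {0}) ff
  have e2 : circChordSum Λ t = ∑' x : ℝ, Set.indicator (Λ ∩ Set.Icc (-t) t) ff x :=
    tsum_subtype (Λ ∩ Set.Icc (-t) t) ff
  have e3 : (∑' (x : ↥({(0:ℝ)} : Set ℝ)), ff (x : ℝ)) = ∑' x : ℝ, Set.indicator {(0:ℝ)} ff x :=
    tsum_subtype ({(0:ℝ)} : Set ℝ) ff
  have h0 : (∑' x : ℝ, Set.indicator {(0:ℝ)} ff x) = ENNReal.ofReal t := by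
    rw [← e3, tsum_singleton]
    simp [hff, Real.sqrt_sq ht]
  rw [e1, e2, ← h0, ← ENNReal.tsum_add]
  apply ENNReal.tsum_le_tsum
  intro x
  by_cases hx : x ∈ Λ ∩ Set.Icc (-t) t
  · rw [Set.indicator_of_mem hx]
    by_cases hx0 : x = 0
    · subst hx0
      rw [Set.indicator_of_mem (Set.mem_singleton (0:ℝ))]
      exact le_add_self
    · rw [Set.indicator_of_mem (show x ∈ Λ \ {0} from ⟨hx.1, by simpa using hx0⟩)]
      exact le_self_add
  · simp [Set.indicator_of_notMem hx]

lemma Cp_mono {Λ : Set ℝ} {s t : ℝ} (hs : 0 ≤ s) (hst : s ≤ t) : Cp Λ s ≤ Cp Λ t := by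
  apply ENNReal.tsum_le_tsum
  intro x
  apply ENNReal.ofReal_le_ofReal
  apply Real.sqrt_le_sqrt
  nlinarith

end CircAux

namespace CircAux

lemma limsup_le_limsup_of_le_add {f g e : ℝ → ℝ≥0∞}
    (h : ∀ᶠ r in atTop, f r ≤ g r + e r) (he : Tendsto e atTop (nhds 0)) :
    Filter.limsup f Filter.atTop ≤ Filter.limsup g Filter.atTop := by
  refine ENNReal.le_of_forall_pos_le_add fun δ hδ hlt => ?_
  have hδ2 : (0 : ℝ≥0∞) < (δ : ℝ≥0∞) / 2 := by
    apply ENNReal.div_pos (by exact_mod_cast hδ.ne') (by norm_num)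
  have h1 : Filter.limsup g Filter.atTop < Filter.limsup g Filter.atTop + (δ : ℝ≥0∞) / 2 :=
    ENNReal.lt_add_right hlt.ne hδ2.ne'
  have h2 : ∀ᶠ r in atTop, g r < Filter.limsup g Filter.atTop + (δ : ℝ≥0∞) / 2 :=
    Filter.eventually_lt_of_limsup_lt h1
  have h3 : ∀ᶠ r in atTop, e r < (δ : ℝ≥0∞) / 2 := he.eventually_lt_const hδ2
  have h4 : ∀ᶠ r in atTop, f r ≤ Filter.limsup g Filter.atTop + (δ : ℝ≥0∞) := by
    filter_upwards [h, h2, h3] with r hf hg heb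
    calc f r ≤ g r + e r := hf
    _ ≤ (Filter.limsup g Filter.atTop + (δ : ℝ≥0∞) / 2) + (δ : ℝ≥0∞) / 2 :=
        add_le_add hg.le heb.le
    _ = Filter.limsup g Filter.atTop + (δ : ℝ≥0∞) := by rw [add_assoc, ENNReal.add_halves]
  exact limsup_le_of_le (by isBoundedDefault) h4

variable (Λ : Set ℝ) (α : ℝ)

noncomputable def JC (r : ℝ) : ℝ≥0∞ := ∫⁻ t in Set.Ioc (0:ℝ) r, circChordSum Λ t / ENNReal.ofReal t
noncomputable def JCp (r : ℝ) : ℝ≥0∞ := ∫⁻ t in Set.Ioc (0:ℝ) r, Cp Λ t / ENNReal.ofReal t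
noncomputable def JN (r : ℝ) : ℝ≥0∞ := ∫⁻ t in Set.Ioc (0:ℝ) r, Nf Λ α t / ENNReal.ofReal t

lemma JCp_def (r : ℝ) : JCp Λ r = ∫⁻ t in Set.Ioc (0:ℝ) r, Cp Λ t / ENNReal.ofReal t := rfl
lemma JN_def (r : ℝ) : JN Λ α r = ∫⁻ t in Set.Ioc (0:ℝ) r, Nf Λ α t / ENNReal.ofReal t := rfl

lemma JCp_le_JC (r : ℝ) : JCp Λ r ≤ JC Λ r := by
  apply lintegral_mono_ae
  rw [ae_restrict_iff' measurableSet_Ioc]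
  exact ae_of_all _ fun t ht => ENNReal.div_le_div_right (Cp_le_chord ht.1.le) _

lemma JC_le_JCp (r : ℝ) (hr : 0 ≤ r) : JC Λ r ≤ JCp Λ r + ENNReal.ofReal r := by
  have step : JC Λ r ≤ ∫⁻ t in Set.Ioc (0:ℝ) r, (Cp Λ t / ENNReal.ofReal t + 1) := by
    apply lintegral_mono_ae
    rw [ae_restrict_iff' measurableSet_Ioc]
    refine ae_of_all _ fun t ht => ?_
    have h1 : circChordSum Λ t / ENNReal.ofReal t
        ≤ (Cp Λ t + ENNReal.ofReal t) / ENNReal.ofReal t :=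
      ENNReal.div_le_div_right (chord_le_Cp ht.1.le) _
    refine h1.trans ?_
    rw [ENNReal.add_div]
    gcongr
    rw [ENNReal.div_self (by simpa using ht.1) ENNReal.ofReal_ne_top]
  refine step.trans ?_
  rw [lintegral_add_right _ measurable_const, JCp_def]
  simp [Real.volume_Ioc, hr]

lemma JN_le (r : ℝ) {H : ℝ → ℝ≥0∞} (hH : Measurable H)
    (hn : ∀ t ∈ Set.Ioc (0:ℝ) r, nf Λ t / ENNReal.ofReal t ≤ H t) (hα : 0 < α) :
    JN Λ α r ≤ ENNReal.ofReal (2/α) * JCp Λ r + ∫⁻ t in Set.Ioc (0:ℝ) r, H t := by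
  have step : JN Λ α r ≤ ∫⁻ t in Set.Ioc (0:ℝ) r,
      (ENNReal.ofReal (2/α) * (Cp Λ t / ENNReal.ofReal t) + H t) := by
    apply lintegral_mono_ae
    rw [ae_restrict_iff' measurableSet_Ioc]
    refine ae_of_all _ fun t ht => ?_
    calc Nf Λ α t / ENNReal.ofReal t
        ≤ (ENNReal.ofReal (2/α) * Cp Λ t + nf Λ t) / ENNReal.ofReal t :=
          ENNReal.div_le_div_right (I3 hα ht.1) _
    _ = ENNReal.ofReal (2/α) * Cp Λ t / ENNReal.ofReal t + nf Λ t / ENNReal.ofReal t := by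
          rw [ENNReal.add_div]
    _ ≤ ENNReal.ofReal (2/α) * (Cp Λ t / ENNReal.ofReal t) + H t := by
          rw [mul_div_assoc]
          exact add_le_add le_rfl (hn t ht)
  refine step.trans ?_
  rw [lintegral_add_right _ hH, lintegral_const_mul' _ _ ENNReal.ofReal_ne_top, JCp_def]

lemma le_JN (r : ℝ) {H : ℝ → ℝ≥0∞} (hH : Measurable H)
    (hn : ∀ t ∈ Set.Ioc (0:ℝ) r, nf Λ t / ENNReal.ofReal t ≤ H t) (hα : 0 < α) :
    ENNReal.ofReal (2/α) * JCp Λ r ≤ JN Λ α r + ∫⁻ t in Set.Ioc (0:ℝ) r, H t := by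
  have step : ENNReal.ofReal (2/α) * JCp Λ r
      ≤ ∫⁻ t in Set.Ioc (0:ℝ) r, (Nf Λ α t / ENNReal.ofReal t + H t) := by
    rw [JCp_def, ← lintegral_const_mul' _ _ ENNReal.ofReal_ne_top]
    apply lintegral_mono_ae
    rw [ae_restrict_iff' measurableSet_Ioc]
    refine ae_of_all _ fun t ht => ?_
    calc ENNReal.ofReal (2/α) * (Cp Λ t / ENNReal.ofReal t)
        = ENNReal.ofReal (2/α) * Cp Λ t / ENNReal.ofReal t := by rw [mul_div_assoc]
    _ ≤ (Nf Λ α t + nf Λ t) / ENNReal.ofReal t := ENNReal.div_le_div_right (I2 hα ht.1) _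
    _ = Nf Λ α t / ENNReal.ofReal t + nf Λ t / ENNReal.ofReal t := by rw [ENNReal.add_div]
    _ ≤ Nf Λ α t / ENNReal.ofReal t + H t := add_le_add le_rfl (hn t ht)
  refine step.trans ?_
  rw [lintegral_add_right _ hH, JN_def]

lemma inv_alpha_JCp_le_JN (r : ℝ) (hα : 0 < α) :
    ENNReal.ofReal α⁻¹ * JCp Λ r ≤ JN Λ α r := by
  rw [JCp_def, JN_def, ← lintegral_const_mul' _ _ ENNReal.ofReal_ne_top]
  apply lintegral_mono_ae
  rw [ae_restrict_iff' measurableSet_Ioc]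
  refine ae_of_all _ fun t ht => ?_
  rw [← mul_div_assoc]
  exact ENNReal.div_le_div_right (Ic hα ht.1) _

lemma Cp_le_two_JC (r : ℝ) (hr : 0 < r) : Cp Λ r ≤ 2 * JC Λ (2 * r) := by
  have key : Cp Λ r * ENNReal.ofReal 2⁻¹ ≤ JC Λ (2 * r) := by
    have h1 : ∫⁻ _t in Set.Ioc r (2*r), (Cp Λ r * (ENNReal.ofReal (2*r))⁻¹)
        ≤ JC Λ (2*r) := by
      rw [setLIntegral_const]
      refine le_trans ?_ (lintegral_mono_set (Set.Ioc_subset_Ioc_left hr.le))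
      rw [← setLIntegral_const]
      apply lintegral_mono_ae
      rw [ae_restrict_iff' measurableSet_Ioc]
      refine ae_of_all _ fun t ht => ?_
      have hCt : Cp Λ r ≤ circChordSum Λ t :=
        (Cp_mono hr.le ht.1.le).trans (Cp_le_chord (by linarith [ht.1] : (0:ℝ) ≤ t))
      calc Cp Λ r * (ENNReal.ofReal (2*r))⁻¹
          ≤ circChordSum Λ t * (ENNReal.ofReal t)⁻¹ := by
            apply mul_le_mul' hCt
            exact ENNReal.inv_le_inv.mpr (ENNReal.ofReal_le_ofReal ht.2)
      _ = circChordSum Λ t / ENNReal.ofReal t := by rw [div_eq_mul_inv]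
    rw [setLIntegral_const] at h1
    have hvol : volume (Set.Ioc r (2*r)) = ENNReal.ofReal r := by
      rw [Real.volume_Ioc]; congr 1; ring
    rw [hvol] at h1
    refine le_trans (le_of_eq ?_) h1
    rw [mul_assoc]
    congr 1
    rw [mul_comm, ← div_eq_mul_inv, ← ENNReal.ofReal_div_of_pos (by positivity)]
    congr 1
    field_simp
  have h2 : ENNReal.ofReal 2⁻¹ * 2 = 1 := by
    rw [show (2:ℝ≥0∞) = ENNReal.ofReal 2 by simp, ← ENNReal.ofReal_mul (by norm_num)]
    norm_num
  calc Cp Λ r = Cp Λ r * (ENNReal.ofReal 2⁻¹ * 2) := by rw [h2, mul_one]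
  _ = Cp Λ r * ENNReal.ofReal 2⁻¹ * 2 := (mul_assoc _ _ _).symm
  _ ≤ JC Λ (2*r) * 2 := mul_le_mul_left key 2
  _ = 2 * JC Λ (2*r) := mul_comm _ _

end CircAux

namespace CircAux

lemma id2 {α r : ℝ} (hα : 0 < α) :
    ENNReal.ofReal (2 * α / (Real.pi * r ^ 2)) * ENNReal.ofReal (2 / α)
      = ENNReal.ofReal (4 / (Real.pi * r ^ 2)) := by
  rw [← ENNReal.ofReal_mul (by positivity)]
  congr 1
  rw [div_mul_div_comm, show (2*α)*2 = α*4 by ring,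
    show Real.pi*r^2*α = α*(Real.pi*r^2) by ring, mul_div_mul_left _ _ hα.ne']

lemma id3 {α r : ℝ} (hα : 0 < α) :
    ENNReal.ofReal (4 / (Real.pi * r ^ 2))
      = 2 * (ENNReal.ofReal (2 * α / (Real.pi * r ^ 2)) * ENNReal.ofReal α⁻¹) := by
  rw [← ENNReal.ofReal_mul (by positivity),
    show (2:ℝ≥0∞) = ENNReal.ofReal 2 by simp, ← ENNReal.ofReal_mul (by norm_num)]
  congr 1
  have h : 2*α/(Real.pi*r^2)*α⁻¹ = 2/(Real.pi*r^2) := by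
    rw [div_mul_eq_mul_div, mul_assoc, mul_inv_cancel₀ hα.ne', mul_one]
  rw [h]
  ring

lemma id1 {r : ℝ} (hr : 0 < r) :
    ENNReal.ofReal (4 / (Real.pi * r ^ 2)) * ENNReal.ofReal r
      = ENNReal.ofReal (4 / (Real.pi * r)) := by
  rw [← ENNReal.ofReal_mul (by positivity)]
  congr 1
  have hπ := Real.pi_pos
  field_simp

lemma AB2 (Λ : Set ℝ) {α : ℝ} (hα : 0 < α) {r : ℝ} (hr : 0 < r) :
    ENNReal.ofReal (4 / (Real.pi * r ^ 2)) * JC Λ r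
      ≤ 2 * (ENNReal.ofReal (2 * α / (Real.pi * r ^ 2)) * JN Λ α r)
        + ENNReal.ofReal (4 / (Real.pi * r)) := by
  calc ENNReal.ofReal (4 / (Real.pi * r ^ 2)) * JC Λ r
      ≤ ENNReal.ofReal (4 / (Real.pi * r ^ 2)) * (JCp Λ r + ENNReal.ofReal r) :=
        mul_le_mul_right (JC_le_JCp Λ r hr.le) _
  _ = ENNReal.ofReal (4 / (Real.pi * r ^ 2)) * JCp Λ r
        + ENNReal.ofReal (4 / (Real.pi * r ^ 2)) * ENNReal.ofReal r := mul_add _ _ _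
  _ ≤ 2 * (ENNReal.ofReal (2 * α / (Real.pi * r ^ 2)) * JN Λ α r)
        + ENNReal.ofReal (4 / (Real.pi * r)) := by
      rw [id1 hr]
      apply add_le_add_left
      rw [id3 hα, mul_assoc, mul_assoc]
      exact mul_le_mul_right (mul_le_mul_right (inv_alpha_JCp_le_JN Λ α r hα) _) _

lemma eps2_tendsto : Tendsto (fun r : ℝ => ENNReal.ofReal (4 / (Real.pi * r))) atTop (nhds 0) := by
  have h : Tendsto (fun r : ℝ => 4 / (Real.pi * r)) atTop (nhds 0) := by
    have : (fun r : ℝ => 4 / (Real.pi * r)) = fun r : ℝ => (4 / Real.pi) * r⁻¹ := by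
      funext r; field_simp
    rw [this]
    simpa using tendsto_inv_atTop_zero.const_mul (4 / Real.pi)
  simpa using ENNReal.tendsto_ofReal h

lemma eps1_tendsto {α c₁ K₂ : ℝ} :
    Tendsto (fun r : ℝ => ENNReal.ofReal (2*α/(Real.pi*r^2) * (c₁ + K₂*r))) atTop (nhds 0) := by
  have base : Tendsto (fun r : ℝ =>
      (2*α*c₁/Real.pi)*(r⁻¹*r⁻¹) + (2*α*K₂/Real.pi)*r⁻¹) atTop (nhds 0) := by
    have h2 : Tendsto (fun r : ℝ => r⁻¹) atTop (nhds 0) := tendsto_inv_atTop_zero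
    have h1 := h2.mul h2
    rw [mul_zero] at h1
    simpa using (h1.const_mul (2*α*c₁/Real.pi)).add (h2.const_mul (2*α*K₂/Real.pi))
  have hre : Tendsto (fun r : ℝ => 2*α/(Real.pi*r^2) * (c₁ + K₂*r)) atTop (nhds 0) := by
    apply base.congr'
    filter_upwards [eventually_gt_atTop (0:ℝ)] with r hr
    have hπ := Real.pi_pos
    field_simp
  simpa using ENNReal.tendsto_ofReal hre

lemma main (Λ : Set ℝ) {α : ℝ} (hα : 0 < α) :
    Filter.limsup (fun r : ℝ => ENNReal.ofReal (4 / (Real.pi * r ^ 2)) * JC Λ r) Filter.atTop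
      = Filter.limsup (fun r : ℝ =>
          ENNReal.ofReal (2 * α / (Real.pi * r ^ 2)) * JN Λ α r) Filter.atTop := by
  set A := fun r : ℝ => ENNReal.ofReal (4 / (Real.pi * r ^ 2)) * JC Λ r with hAdef
  set B := fun r : ℝ => ENNReal.ofReal (2 * α / (Real.pi * r ^ 2)) * JN Λ α r with hBdef
  have hAB2 : ∀ᶠ r in atTop, A r ≤ 2 * B r + ENNReal.ofReal (4 / (Real.pi * r)) :=
    (eventually_gt_atTop 0).mono fun r hr => AB2 Λ hα hr
  by_cases hLA : Filter.limsup A Filter.atTop = ⊤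
  · have h1 : Filter.limsup A Filter.atTop ≤ Filter.limsup (fun r => 2 * B r) Filter.atTop :=
      limsup_le_limsup_of_le_add hAB2 eps2_tendsto
    rw [ENNReal.limsup_const_mul_of_ne_top (by norm_num : (2:ℝ≥0∞) ≠ ⊤)] at h1
    rw [hLA] at h1 ⊢
    have h2 : 2 * Filter.limsup B Filter.atTop = ⊤ := top_le_iff.mp h1
    rcases ENNReal.mul_eq_top.mp h2 with ⟨_, h⟩ | ⟨h, _⟩
    · exact h.symm
    · norm_num at h
  · -- finite case
    obtain ⟨s₀, hs₀⟩ : ∃ s₀ : ℝ, ∀ r ≥ s₀, A r ≤ Filter.limsup A Filter.atTop + 1 :=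
      eventually_atTop.mp ((Filter.eventually_lt_of_limsup_lt
        (ENNReal.lt_add_right hLA one_ne_zero)).mono fun r hr => hr.le)
    set r₀ := max s₀ 1 with hr₀def
    have hr₀1 : (1:ℝ) ≤ r₀ := le_max_right _ _
    have hr₀pos : (0:ℝ) < r₀ := by linarith
    set L' := (Filter.limsup A Filter.atTop + 1).toReal with hL'def
    have hL'0 : 0 ≤ L' := ENNReal.toReal_nonneg
    have hL' : Filter.limsup A Filter.atTop + 1 = ENNReal.ofReal L' :=
      (ENNReal.ofReal_toReal (ENNReal.add_ne_top.mpr ⟨hLA, ENNReal.one_ne_top⟩)).symm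
    set K := 2 * L' * Real.pi with hKdef
    have hK0 : 0 ≤ K := by positivity
    have hCp : ∀ u, r₀ ≤ u → Cp Λ u ≤ ENNReal.ofReal (K * u ^ 2) := by
      intro u hu
      have hu1 : (1:ℝ) ≤ u := le_trans hr₀1 hu
      have hu0 : (0:ℝ) < u := by linarith
      have h2u : A (2*u) ≤ ENNReal.ofReal L' := by
        rw [← hL']
        exact hs₀ (2*u) (by
          have : s₀ ≤ r₀ := le_max_left _ _
          linarith)
      have hc0 : (0:ℝ) < 4 / (Real.pi * (2*u) ^ 2) := by positivity
      have hJC : JC Λ (2*u) ≤ ENNReal.ofReal (L' * (Real.pi * (2*u)^2) / 4) := by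
        have hb0 : ENNReal.ofReal (4 / (Real.pi * (2*u) ^ 2)) ≠ 0 :=
          (ENNReal.ofReal_pos.mpr hc0).ne'
        have h2u' : JC Λ (2*u) * ENNReal.ofReal (4 / (Real.pi * (2*u) ^ 2))
            ≤ ENNReal.ofReal L' := by rw [mul_comm]; exact h2u
        have := (ENNReal.le_div_iff_mul_le (Or.inl hb0)
          (Or.inl ENNReal.ofReal_ne_top)).mpr h2u'
        refine this.trans (le_of_eq ?_)
        rw [← ENNReal.ofReal_div_of_pos hc0]
        congr 1
        rw [div_div_eq_mul_div]
      calc Cp Λ u ≤ 2 * JC Λ (2*u) := Cp_le_two_JC Λ u hu0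
      _ ≤ 2 * ENNReal.ofReal (L' * (Real.pi * (2*u)^2) / 4) := mul_le_mul_right hJC _
      _ = ENNReal.ofReal (K * u ^ 2) := by
          rw [show (2:ℝ≥0∞) = ENNReal.ofReal 2 by simp, ← ENNReal.ofReal_mul (by norm_num)]
          congr 1
          rw [hKdef]; ring
    set K₂ := 4 * K / Real.sqrt 3 with hK₂def
    have hs3 : (0:ℝ) < Real.sqrt 3 := Real.sqrt_pos.mpr (by norm_num)
    have hK₂0 : 0 ≤ K₂ := by positivity
    have hnf_large : ∀ t, r₀ ≤ t → nf Λ t / ENNReal.ofReal t ≤ ENNReal.ofReal K₂ := by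
      intro t ht
      have ht0 : (0:ℝ) < t := lt_of_lt_of_le hr₀pos ht
      have h4 := I4 (Λ := Λ) hα ht0
      have hCp2t : Cp Λ (2*t) ≤ ENNReal.ofReal (K * (2*t) ^ 2) := hCp _ (by linarith)
      have hnft : nf Λ t ≤ ENNReal.ofReal (K * (2*t) ^ 2 / (Real.sqrt 3 * t)) := by
        rw [ENNReal.ofReal_div_of_pos (by positivity)]
        have h4' : nf Λ t * ENNReal.ofReal (Real.sqrt 3 * t)
            ≤ ENNReal.ofReal (K * (2*t) ^ 2) := by rw [mul_comm]; exact h4.trans hCp2t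
        exact (ENNReal.le_div_iff_mul_le
          (Or.inl (ENNReal.ofReal_pos.mpr (by positivity)).ne')
          (Or.inl ENNReal.ofReal_ne_top)).mpr h4'
      calc nf Λ t / ENNReal.ofReal t
          ≤ ENNReal.ofReal (K * (2*t) ^ 2 / (Real.sqrt 3 * t)) / ENNReal.ofReal t :=
            ENNReal.div_le_div_right hnft _
      _ = ENNReal.ofReal (K * (2*t) ^ 2 / (Real.sqrt 3 * t) / t) :=
            (ENNReal.ofReal_div_of_pos ht0).symm
      _ ≤ ENNReal.ofReal K₂ := by
            apply ENNReal.ofReal_le_ofReal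
            apply le_of_eq
            rw [hK₂def]
            field_simp
            ring
    have hnfr₀ : nf Λ r₀ ≠ ⊤ := by
      have h1 := hnf_large r₀ le_rfl
      have h2 : nf Λ r₀ ≤ ENNReal.ofReal K₂ * ENNReal.ofReal r₀ :=
        (ENNReal.div_le_iff_le_mul (Or.inl (ENNReal.ofReal_pos.mpr hr₀pos).ne')
          (Or.inl ENNReal.ofReal_ne_top)).mp h1
      exact (h2.trans_lt (by
        rw [← ENNReal.ofReal_mul hK₂0]
        exact ENNReal.ofReal_lt_top)).ne
    have hGfin : ((Λ \ {0}) ∩ Set.Ioo (-r₀) r₀).Finite := by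
      rw [nf_encard] at hnfr₀
      apply Set.encard_ne_top_iff.mp
      intro h
      rw [h] at hnfr₀
      simp at hnfr₀
    set M := (hGfin.toFinset.card : ℝ) with hMdef
    have hM0 : 0 ≤ M := Nat.cast_nonneg _
    have hM : ∀ t, t ≤ r₀ → nf Λ t ≤ ENNReal.ofReal M := by
      intro t ht
      rw [nf_encard]
      calc ((((Λ \ {0}) ∩ Set.Ioo (-t) t)).encard : ℝ≥0∞)
          ≤ (((Λ \ {0}) ∩ Set.Ioo (-r₀) r₀).encard : ℝ≥0∞) := by
            apply ENat.toENNReal_le.mpr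
            apply Set.encard_mono
            exact Set.inter_subset_inter_right _ (Set.Ioo_subset_Ioo (by linarith) ht)
      _ = ENNReal.ofReal M := by
            rw [hGfin.encard_eq_coe_toFinset_card]
            rw [hMdef, ENNReal.ofReal_natCast]
            rfl
    obtain ⟨t₁, ht₁0, ht₁r₀, hzero⟩ : ∃ t₁ : ℝ, 0 < t₁ ∧ t₁ ≤ r₀ ∧ ∀ t, t ≤ t₁ → nf Λ t = 0 := by
      by_cases hGe : ((Λ \ {0}) ∩ Set.Ioo (-r₀) r₀).Nonempty
      · obtain ⟨x₀, hx₀⟩ := hGe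
        set T := hGfin.toFinset.image (fun x => |x|) with hTdef
        have hTne : T.Nonempty := ⟨|x₀|, Finset.mem_image_of_mem _ (hGfin.mem_toFinset.mpr hx₀)⟩
        obtain ⟨x, hxT, hx⟩ := Finset.mem_image.mp (T.min'_mem hTne)
        have hxG := hGfin.mem_toFinset.mp hxT
        have hminr₀ : T.min' hTne ≤ r₀ := by
          rw [← hx]
          exact (abs_lt.mpr ⟨hxG.2.1, hxG.2.2⟩).le
        refine ⟨T.min' hTne, ?_, hminr₀, ?_⟩
        · rw [← hx]
          exact abs_pos.mpr (by simpa using hxG.1.2)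
        · intro t ht
          rw [nf_encard]
          have hempty : (Λ \ {0}) ∩ Set.Ioo (-t) t = ∅ := by
            rw [Set.eq_empty_iff_forall_notMem]
            rintro y ⟨hy1, hy2⟩
            have hyG : y ∈ (Λ \ {0}) ∩ Set.Ioo (-r₀) r₀ := by
              refine ⟨hy1, ?_⟩
              have h1 := hy2.1
              have h2 := hy2.2
              have : t ≤ r₀ := le_trans ht hminr₀
              constructor <;> nlinarith
            have hmin : T.min' hTne ≤ |y| :=
              T.min'_le _ (Finset.mem_image_of_mem _ (hGfin.mem_toFinset.mpr hyG))
            have : |y| < t := abs_lt.mpr ⟨hy2.1, hy2.2⟩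
            linarith
          rw [hempty]
          simp
      · refine ⟨r₀, hr₀pos, le_rfl, ?_⟩
        intro t ht
        rw [nf_encard]
        have hempty : (Λ \ {0}) ∩ Set.Ioo (-t) t = ∅ := by
          rw [Set.eq_empty_iff_forall_notMem]
          rintro y ⟨hy1, hy2⟩
          apply hGe
          exact ⟨y, hy1, by constructor <;> [linarith [hy2.1]; linarith [hy2.2]]⟩
        rw [hempty]
        simp
    set c₁ := M / t₁ * r₀ with hc₁def
    have hc₁0 : 0 ≤ c₁ := mul_nonneg (div_nonneg hM0 ht₁0.le) hr₀pos.le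
    set H := fun t : ℝ => (Set.Ioc t₁ r₀).indicator (fun _ => ENNReal.ofReal (M/t₁)) t
      + (Set.Ioi r₀).indicator (fun _ => ENNReal.ofReal K₂) t with hHdef
    have hHmeas : Measurable H :=
      (measurable_const.indicator measurableSet_Ioc).add
        (measurable_const.indicator measurableSet_Ioi)
    have hn : ∀ r : ℝ, ∀ t ∈ Set.Ioc (0:ℝ) r, nf Λ t / ENNReal.ofReal t ≤ H t := by
      intro r t ht
      rcases le_or_gt t t₁ with h1 | h1
      · rw [hzero t h1, ENNReal.zero_div]
        exact zero_le
      rcases le_or_gt t r₀ with h2 | h2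
      · calc nf Λ t / ENNReal.ofReal t ≤ ENNReal.ofReal M / ENNReal.ofReal t₁ :=
              ENNReal.div_le_div (hM t h2) (ENNReal.ofReal_le_ofReal h1.le)
        _ = ENNReal.ofReal (M/t₁) := (ENNReal.ofReal_div_of_pos ht₁0).symm
        _ ≤ H t := by
              rw [hHdef]
              simp only []
              rw [Set.indicator_of_mem (Set.mem_Ioc.mpr ⟨h1, h2⟩)]
              exact le_self_add
      · calc nf Λ t / ENNReal.ofReal t ≤ ENNReal.ofReal K₂ := hnf_large t h2.le
        _ ≤ H t := by
              rw [hHdef]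
              simp only []
              rw [Set.indicator_of_mem (Set.mem_Ioi.mpr h2)]
              exact le_add_self
    have hintH : ∀ r : ℝ, 0 ≤ r →
        (∫⁻ t in Set.Ioc (0:ℝ) r, H t) ≤ ENNReal.ofReal (c₁ + K₂ * r) := by
      intro r hr
      rw [hHdef]
      rw [lintegral_add_left ((measurable_const.indicator measurableSet_Ioc)) _]
      have e1 : (∫⁻ t in Set.Ioc (0:ℝ) r,
          (Set.Ioc t₁ r₀).indicator (fun _ => ENNReal.ofReal (M/t₁)) t)
          ≤ ENNReal.ofReal c₁ := by
        rw [lintegral_indicator measurableSet_Ioc]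
        rw [Measure.restrict_restrict measurableSet_Ioc, setLIntegral_const]
        calc ENNReal.ofReal (M/t₁) * volume (Set.Ioc t₁ r₀ ∩ Set.Ioc 0 r)
            ≤ ENNReal.ofReal (M/t₁) * volume (Set.Ioc t₁ r₀) :=
              mul_le_mul_right (measure_mono Set.inter_subset_left) _
        _ ≤ ENNReal.ofReal c₁ := by
              rw [Real.volume_Ioc, ← ENNReal.ofReal_mul (div_nonneg hM0 ht₁0.le), hc₁def]
              apply ENNReal.ofReal_le_ofReal
              have : r₀ - t₁ ≤ r₀ := by linarith
              nlinarith [div_nonneg hM0 ht₁0.le]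
      have e2 : (∫⁻ t in Set.Ioc (0:ℝ) r,
          (Set.Ioi r₀).indicator (fun _ => ENNReal.ofReal K₂) t)
          ≤ ENNReal.ofReal (K₂ * r) := by
        rw [lintegral_indicator measurableSet_Ioi]
        rw [Measure.restrict_restrict measurableSet_Ioi, setLIntegral_const]
        calc ENNReal.ofReal K₂ * volume (Set.Ioi r₀ ∩ Set.Ioc 0 r)
            ≤ ENNReal.ofReal K₂ * volume (Set.Ioc (0:ℝ) r) :=
              mul_le_mul_right (measure_mono Set.inter_subset_right) _
        _ = ENNReal.ofReal (K₂ * r) := by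
              rw [Real.volume_Ioc, ← ENNReal.ofReal_mul hK₂0, sub_zero]
      calc _ ≤ ENNReal.ofReal c₁ + ENNReal.ofReal (K₂ * r) := add_le_add e1 e2
      _ = ENNReal.ofReal (c₁ + K₂ * r) :=
            (ENNReal.ofReal_add hc₁0 (by positivity)).symm
    set eps1 := fun r : ℝ => ENNReal.ofReal (2*α/(Real.pi*r^2) * (c₁ + K₂*r)) with heps1def
    have heps1 : Tendsto eps1 atTop (nhds 0) := eps1_tendsto
    have hup : ∀ᶠ r in atTop, B r ≤ A r + eps1 r := by
      filter_upwards [eventually_gt_atTop (0:ℝ)] with r hr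
      have hc2 : ENNReal.ofReal (2*α/(Real.pi*r^2)) * (∫⁻ t in Set.Ioc (0:ℝ) r, H t)
          ≤ eps1 r := by
        rw [heps1def]
        simp only []
        rw [ENNReal.ofReal_mul (by positivity)]
        exact mul_le_mul_right (hintH r hr.le) _
      calc B r ≤ ENNReal.ofReal (2*α/(Real.pi*r^2))
            * (ENNReal.ofReal (2/α) * JCp Λ r + ∫⁻ t in Set.Ioc (0:ℝ) r, H t) :=
            mul_le_mul_right (JN_le Λ α r hHmeas (hn r) hα) _
      _ = ENNReal.ofReal (2*α/(Real.pi*r^2)) * (ENNReal.ofReal (2/α) * JCp Λ r)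
            + ENNReal.ofReal (2*α/(Real.pi*r^2)) * (∫⁻ t in Set.Ioc (0:ℝ) r, H t) :=
            mul_add _ _ _
      _ ≤ ENNReal.ofReal (4/(Real.pi*r^2)) * JCp Λ r + eps1 r := by
            rw [← mul_assoc, id2 hα]
            exact add_le_add le_rfl hc2
      _ ≤ A r + eps1 r :=
            add_le_add (mul_le_mul_right (JCp_le_JC Λ r) _) le_rfl
    have hdown : ∀ᶠ r in atTop,
        A r ≤ B r + (eps1 r + ENNReal.ofReal (4/(Real.pi*r))) := by
      filter_upwards [eventually_gt_atTop (0:ℝ)] with r hr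
      have hc2 : ENNReal.ofReal (2*α/(Real.pi*r^2)) * (∫⁻ t in Set.Ioc (0:ℝ) r, H t)
          ≤ eps1 r := by
        rw [heps1def]
        simp only []
        rw [ENNReal.ofReal_mul (by positivity)]
        exact mul_le_mul_right (hintH r hr.le) _
      calc A r ≤ ENNReal.ofReal (4/(Real.pi*r^2)) * (JCp Λ r + ENNReal.ofReal r) :=
            mul_le_mul_right (JC_le_JCp Λ r hr.le) _
      _ = ENNReal.ofReal (4/(Real.pi*r^2)) * JCp Λ r
            + ENNReal.ofReal (4/(Real.pi*r^2)) * ENNReal.ofReal r := mul_add _ _ _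
      _ = ENNReal.ofReal (2*α/(Real.pi*r^2)) * (ENNReal.ofReal (2/α) * JCp Λ r)
            + ENNReal.ofReal (4/(Real.pi*r)) := by
            rw [← mul_assoc, id2 hα, id1 hr]
      _ ≤ ENNReal.ofReal (2*α/(Real.pi*r^2))
            * (JN Λ α r + ∫⁻ t in Set.Ioc (0:ℝ) r, H t) + ENNReal.ofReal (4/(Real.pi*r)) :=
            add_le_add (mul_le_mul_right (le_JN Λ α r hHmeas (hn r) hα) _) le_rfl
      _ ≤ B r + (eps1 r + ENNReal.ofReal (4/(Real.pi*r))) := by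
            rw [mul_add, add_assoc]
            exact add_le_add le_rfl (add_le_add hc2 le_rfl)
    have hlim2 : Tendsto (fun r : ℝ => eps1 r + ENNReal.ofReal (4/(Real.pi*r)))
        atTop (nhds 0) := by
      have := heps1.add eps2_tendsto
      simpa using this
    exact le_antisymm (limsup_le_limsup_of_le_add hdown hlim2)
      (limsup_le_limsup_of_le_add hup heps1)

end CircAux

/-- Alternative description of the upper average circular density: for any `α > 0`,
`D⁺_circ(Λ) = limsup_{r→∞} (2α/(πr²)) ∫₀^r #(((Λ∖{0}) × αℤ) ∩ B_t(0)) dt/t`. -/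
theorem circDensity_eq_limsup_count (Λ : Set ℝ) (α : ℝ) (hα : 0 < α) :
    circDensity Λ =
      Filter.limsup (fun r : ℝ =>
        ENNReal.ofReal (2 * α / (Real.pi * r ^ 2)) *
          ∫⁻ t in Set.Ioc (0 : ℝ) r,
            (({p : ℝ × ℝ | p.1 ∈ Λ ∧ p.1 ≠ 0 ∧ (∃ k : ℤ, p.2 = α * k) ∧
                p.1 ^ 2 + p.2 ^ 2 < t ^ 2}.encard : ℝ≥0∞)) / ENNReal.ofReal t)
        Filter.atTop := by
  have h1 : circDensity Λ = Filter.limsup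
      (fun r : ℝ => ENNReal.ofReal (4 / (Real.pi * r ^ 2)) * CircAux.JC Λ r) Filter.atTop := rfl
  rw [h1, CircAux.main Λ hα]
  congr 1
  funext r
  congr 1
  rw [CircAux.JN_def]
  apply lintegral_congr
  intro t
  congr 1
  exact (CircAux.encard_S_eq Λ α t).symm
end

section
/- For every set Λ ⊆ ℝ, the upper average circular density dominates the lower Beurling density: D⁺_circ(Λ) ≥ D⁻(Λ). -/
open MeasureTheory Filter Set
open scoped ENNReal

/-- Lower Beurling density `D⁻(Λ) = liminf_{r→∞} inf_x #(Λ∩[x−r,x+r])/(2r)`. -/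
noncomputable def lowerBeurlingDensity (Λ : Set ℝ) : ℝ≥0∞ :=
  Filter.liminf (fun r : ℝ =>
    ⨅ x : ℝ, ((Λ ∩ Set.Icc (x - r) (x + r)).encard : ℝ≥0∞) / ENNReal.ofReal (2 * r))
    Filter.atTop

lemma aux_tsum_const_le {α : Type*} (s : Set α) (f : α → ℝ≥0∞) (c : ℝ≥0∞)
    (h : ∀ x ∈ s, c ≤ f x) : (s.encard : ℝ≥0∞) * c ≤ ∑' x : s, f x := by
  by_cases hc : c = 0
  · simp [hc]
  rcases s.finite_or_infinite with hs | hs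
  · haveI := hs.fintype
    have hcard : (s.encard : ℝ≥0∞) = (Fintype.card s : ℝ≥0∞) := by
      rw [Set.encard_eq_coe_toFinset_card]; simp [Set.toFinset_card]; rw [← hs.cast_ncard_eq]; exact ENat.toENNReal_coe _
    rw [tsum_eq_sum (s := Finset.univ) (by simp), hcard]
    calc (Fintype.card s : ℝ≥0∞) * c = ∑ _x : s, c := by
          rw [Finset.sum_const, nsmul_eq_mul, Finset.card_univ]
      _ ≤ ∑ x : s, f x := Finset.sum_le_sum fun x _ => h x x.2
  · have h1 : (∑' _ : s, c) ≤ ∑' x : s, f x :=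
      ENNReal.tsum_le_tsum (fun x => h x x.2)
    haveI : Infinite s := hs.to_subtype
    rw [ENNReal.tsum_const_eq_top_of_ne_zero hc] at h1
    simp only [hs.encard_eq]
    rw [show ((⊤:ℕ∞):ℝ≥0∞) = ⊤ by simp, ENNReal.top_mul hc]
    exact h1

lemma aux_sum_pieces {α : Type*} (S : Set α) (f : α → ℝ≥0∞) (m : ℕ) (s : ℕ → Set α)
    (hsub : ∀ j < m, s j ⊆ S)
    (hdisj : ∀ i < m, ∀ j < m, i ≠ j → Disjoint (s i) (s j)) :
    ∑ j ∈ Finset.range m, ∑' x : s j, f x ≤ ∑' x : S, f x := by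
  simp only [tsum_subtype]
  rw [← Summable.tsum_finsetSum (fun j _ => ENNReal.summable)]
  refine ENNReal.tsum_le_tsum fun x => ?_
  by_cases hx : ∃ j ∈ Finset.range m, x ∈ s j
  · obtain ⟨j₀, hj₀m, hj₀⟩ := hx
    rw [Finset.sum_eq_single j₀]
    · rw [Set.indicator_of_mem hj₀, Set.indicator_of_mem (hsub j₀ (Finset.mem_range.1 hj₀m) hj₀)]
    · intro j hjm hne
      refine Set.indicator_of_notMem (fun hxj => ?_) f
      exact (hdisj j (Finset.mem_range.1 hjm) j₀ (Finset.mem_range.1 hj₀m) hne).ne_of_mem hxj hj₀ rfl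
    · intro h; exact absurd hj₀m h
  · push_neg at hx
    rw [Finset.sum_eq_zero (fun j hj => Set.indicator_of_notMem (hx j hj) f)]
    exact zero_le

lemma aux_int01 : ∫ x in (0:ℝ)..1, Real.sqrt (1 - x^2) = Real.pi / 4 := by
  have hcont : Continuous (fun x : ℝ => Real.sqrt (1 - x^2)) :=
    Real.continuous_sqrt.comp (continuous_const.sub (continuous_pow 2))
  have hsplit : (∫ x in (-1:ℝ)..0, Real.sqrt (1 - x^2)) + ∫ x in (0:ℝ)..1, Real.sqrt (1 - x^2)
      = ∫ x in (-1:ℝ)..1, Real.sqrt (1 - x^2) :=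
    intervalIntegral.integral_add_adjacent_intervals
      (hcont.intervalIntegrable _ _) (hcont.intervalIntegrable _ _)
  have hneg : (∫ x in (-1:ℝ)..0, Real.sqrt (1 - x^2)) = ∫ x in (0:ℝ)..1, Real.sqrt (1 - x^2) := by
    have := intervalIntegral.integral_comp_neg (a := (0:ℝ)) (b := 1)
      (fun x : ℝ => Real.sqrt (1 - x^2))
    simp only [neg_zero, neg_sq] at this
    rw [← this]
  have hval := integral_sqrt_one_sub_sq
  rw [hneg] at hsplit
  nlinarith [hsplit, hval]

lemma aux_riemann (n : ℕ) (hn : 1 ≤ n) :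
    (n:ℝ) * Real.pi / 4 - 1 ≤ ∑ k ∈ Finset.range n, Real.sqrt (1 - (((k:ℝ)+1)/n)^2) := by
  set f : ℝ → ℝ := fun x => Real.sqrt (1 - (x/n)^2) with hf
  have hn0 : (n:ℝ) ≠ 0 := Nat.cast_ne_zero.2 (by omega)
  have hanti : AntitoneOn f (Icc (0:ℝ) (0 + n)) := by
    intro x hx y hy hxy
    apply Real.sqrt_le_sqrt
    have h2 : (0:ℝ) ≤ x/n := div_nonneg hx.1 (Nat.cast_nonneg n)
    have h1 : (x/n)^2 ≤ (y/n)^2 := by gcongr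
    linarith
  have hint := hanti.integral_le_sum
  simp only [zero_add] at hint
  have hval : (∫ x in (0:ℝ)..(n:ℝ), f x) = (n:ℝ) * Real.pi / 4 := by
    have h := intervalIntegral.integral_comp_div (a := (0:ℝ)) (b := (n:ℝ)) (c := (n:ℝ))
      (f := fun y : ℝ => Real.sqrt (1 - y^2)) hn0
    rw [hf]
    rw [h]
    rw [zero_div, div_self hn0, smul_eq_mul, aux_int01]
    ring
  have h0 : f 0 = 1 := by simp [hf]
  have hnn : f (n:ℝ) = 0 := by simp [hf, div_self hn0]
  have e1 := Finset.sum_range_succ (fun i : ℕ => f (i:ℝ)) n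
  have e2 := Finset.sum_range_succ' (fun i : ℕ => f (i:ℝ)) n
  push_cast at e2
  have key : ∑ k ∈ Finset.range n, Real.sqrt (1 - (((k:ℝ)+1)/n)^2)
      = (∑ i ∈ Finset.range n, f (i:ℝ)) + f (n:ℝ) - f 0 := by
    have : ∑ k ∈ Finset.range n, Real.sqrt (1 - (((k:ℝ)+1)/n)^2)
        = ∑ i ∈ Finset.range n, f ((i:ℝ) + 1) := by
      refine Finset.sum_congr rfl fun k _ => ?_
      rw [hf]
    rw [this]
    push_cast at e1
    linarith [e1, e2]
  rw [key]
  linarith [hint, hval]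

set_option maxHeartbeats 1000000 in
lemma aux_chord (Λ : Set ℝ) (d r₀ : ℝ) (hd : 0 ≤ d) (hr₀ : 1 ≤ r₀) (n : ℕ) (hn : 2 ≤ n)
    (hcount : ∀ u : ℝ, r₀ ≤ u → ∀ x : ℝ,
      ENNReal.ofReal (2 * u * d) ≤ ((Λ ∩ Icc (x - u) (x + u)).encard : ℝ≥0∞))
    (t : ℝ) (ht : 3 * n * r₀ ≤ t) :
    ENNReal.ofReal ((t/n - r₀) * d * ((n:ℝ) * Real.pi / 2 - 2) * t) ≤ circChordSum Λ t := by
  have hnR : (2:ℝ) ≤ (n:ℝ) := by exact_mod_cast hn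
  have hnpos : (0:ℝ) < n := by linarith
  have ht0 : 0 < t := lt_of_lt_of_le (by nlinarith) ht
  set c : ℝ := t / n with hc
  have hc0 : 0 < c := by positivity
  have htc : (n:ℝ) * c = t := by rw [hc, mul_div_assoc', mul_comm, mul_div_assoc, div_self hnpos.ne', mul_one]
  have htn : 3 * r₀ ≤ c := by
    rw [hc, le_div_iff₀ hnpos]; nlinarith
  set u : ℝ := (c - r₀)/2 with hu
  have hur : r₀ ≤ u := by rw [hu]; linarith
  have hu0 : 0 < u := lt_of_lt_of_le (by linarith) hur
  set a : ℕ → ℝ := fun j => (j:ℝ) * c - t with ha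
  set f : ℝ → ℝ≥0∞ := fun y => ENNReal.ofReal (Real.sqrt (t^2 - y^2)) with hf
  set φ : ℕ → ℝ := fun k => Real.sqrt (t^2 - ((k:ℝ) * c)^2) with hφ
  set M : ℕ → ℕ := fun j => if j < n then n - j else j + 1 - n with hM
  set s : ℕ → Set ℝ := fun j => Λ ∩ Ioc (a j) (a (j+1)) with hs
  clear_value c u a f φ M s
  -- the key pointwise bound
  have habs : ∀ j, j < 2*n → ∀ lam ∈ Ioc (a j) (a (j+1)), lam^2 ≤ (((M j):ℝ) * c)^2 := by
    intro j hj lam hlam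
    have h1 := hlam.1
    have h2 := hlam.2
    rw [ha] at h1 h2
    push_cast at h1 h2
    rcases lt_or_ge j n with hjn | hjn
    · have hMj : ((M j : ℕ) : ℝ) = (n:ℝ) - j := by
        simp only [hM, if_pos hjn]; push_cast [Nat.cast_sub hjn.le]; ring
      have hjR : (j:ℝ) + 1 ≤ (n:ℝ) := by exact_mod_cast hjn
      rw [hMj]
      apply sq_le_sq' <;> nlinarith
    · have hjR : (n:ℝ) ≤ (j:ℝ) := by exact_mod_cast hjn
      have hMj : ((M j : ℕ) : ℝ) = (j:ℝ) + 1 - n := by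
        simp only [hM, if_neg (not_lt.2 hjn)]
        push_cast [Nat.cast_sub (by omega : n ≤ j + 1)]; ring
      rw [hMj]
      apply sq_le_sq' <;> nlinarith
  -- per-piece lower bound
  have piece : ∀ j, j < 2*n →
      ENNReal.ofReal (2*u*d) * ENNReal.ofReal (φ (M j)) ≤ ∑' x : s j, f x := by
    intro j hj
    have hstep : a (j+1) - a j = c := by
      simp only [ha]; push_cast; ring
    have hcard : ENNReal.ofReal (2*u*d) ≤ ((s j).encard : ℝ≥0∞) := by
      refine le_trans (hcount u hur (a (j+1) - u)) ?_
      have hsub2 : Λ ∩ Icc (a (j+1) - u - u) (a (j+1) - u + u) ⊆ s j := by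
        rw [hs]
        apply inter_subset_inter_right
        intro z hz
        have hz1 := hz.1
        have hz2 := hz.2
        constructor
        · have : a (j+1) - u - u = a j + r₀ := by
            rw [hu]; linarith [hstep]
          rw [this] at hz1; linarith
        · linarith
      exact_mod_cast Set.encard_mono hsub2
    have hval : ∀ x ∈ s j, ENNReal.ofReal (φ (M j)) ≤ f x := by
      intro x hx
      rw [hs] at hx
      rw [hf, hφ]
      apply ENNReal.ofReal_le_ofReal
      apply Real.sqrt_le_sqrt
      linarith [habs j hj x hx.2]
    calc ENNReal.ofReal (2*u*d) * ENNReal.ofReal (φ (M j))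
        ≤ ((s j).encard : ℝ≥0∞) * ENNReal.ofReal (φ (M j)) := mul_le_mul_left hcard _
      _ ≤ ∑' x : s j, f x := aux_tsum_const_le _ _ _ hval
  -- assemble the pieces
  have hsum : ∑ j ∈ Finset.range (2*n), (ENNReal.ofReal (2*u*d) * ENNReal.ofReal (φ (M j)))
      ≤ circChordSum Λ t := by
    calc ∑ j ∈ Finset.range (2*n), (ENNReal.ofReal (2*u*d) * ENNReal.ofReal (φ (M j)))
        ≤ ∑ j ∈ Finset.range (2*n), ∑' x : s j, f x :=
          Finset.sum_le_sum fun j hj => piece j (Finset.mem_range.1 hj)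
      _ ≤ ∑' x : (Λ ∩ Icc (-t) t : Set ℝ), f x := by
          apply aux_sum_pieces
          · intro j hj
            rw [hs]
            refine inter_subset_inter_right _ ?_
            intro z hz
            have h1 := hz.1
            have h2 := hz.2
            rw [ha] at h1 h2
            push_cast at h1 h2
            have hj2 : (j:ℝ) + 1 ≤ 2*(n:ℝ) := by exact_mod_cast hj
            constructor
            · have : (0:ℝ) ≤ (j:ℝ) * c := by positivity
              linarith
            · nlinarith
          · intro i hi j hj hij
            rw [hs]
            refine Disjoint.mono inter_subset_right inter_subset_right ?_
            rw [Set.Ioc_disjoint_Ioc]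
            have key : ∀ p q : ℕ, p < q → a (p+1) ≤ a q := by
              intro p q hpq
              rw [ha]
              push_cast
              have : (p:ℝ) + 1 ≤ q := by exact_mod_cast hpq
              nlinarith
            rcases lt_or_gt_of_ne hij with h | h
            · exact le_trans (min_le_left _ _) (le_trans (key i j h) (le_max_right _ _))
            · exact le_trans (min_le_right _ _) (le_trans (key j i h) (le_max_left _ _))
      _ = circChordSum Λ t := by rw [hf, circChordSum]
  refine le_trans ?_ hsum
  have hφnonneg : ∀ k, 0 ≤ φ k := by intro k; rw [hφ]; exact Real.sqrt_nonneg _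
  rw [← Finset.mul_sum, ← ENNReal.ofReal_sum_of_nonneg (fun j _ => hφnonneg _),
    ← ENNReal.ofReal_mul (by positivity : (0:ℝ) ≤ 2*u*d)]
  apply ENNReal.ofReal_le_ofReal
  have eA : ∑ j ∈ Finset.range n, φ (M j) = ∑ k ∈ Finset.range n, φ (k+1) := by
    rw [← Finset.sum_range_reflect (fun k => φ (k+1)) n]
    refine Finset.sum_congr rfl fun j hj => ?_
    have hj' := Finset.mem_range.1 hj
    congr 1
    simp only [hM, if_pos hj']
    omega
  have eB : ∑ j ∈ Finset.range n, φ (M (n+j)) = ∑ k ∈ Finset.range n, φ (k+1) := by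
    refine Finset.sum_congr rfl fun j hj => ?_
    congr 1
    simp only [hM, if_neg (by omega : ¬ n + j < n)]
    omega
  have hsplit : ∑ j ∈ Finset.range (2*n), φ (M j) = 2 * ∑ k ∈ Finset.range n, φ (k+1) := by
    rw [show 2*n = n + n from by ring,
      ← Finset.sum_range_add_sum_Ico (fun j => φ (M j)) (Nat.le_add_right n n),
      Finset.sum_Ico_eq_sum_range]
    simp only [Nat.add_sub_cancel_left]
    rw [eA, eB]
    ring
  have hφval : ∀ k : ℕ, φ (k+1) = t * Real.sqrt (1 - (((k:ℝ)+1)/n)^2) := by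
    intro k
    rw [hφ]
    have he : t^2 - ((↑(k+1):ℝ) * c)^2 = t^2 * (1 - (((k:ℝ)+1)/n)^2) := by
      rw [hc]; push_cast; field_simp
    simp only [he, Real.sqrt_mul (sq_nonneg t), Real.sqrt_sq ht0.le]
  rw [hsplit, Finset.sum_congr rfl (fun k _ => hφval k), ← Finset.mul_sum]
  have hS := aux_riemann n (by omega)
  have h2u : c - r₀ = 2*u := by rw [hu]; ring
  rw [h2u]
  have hP : 0 ≤ u*d*t*((∑ i ∈ Finset.range n, Real.sqrt (1 - (((i:ℝ)+1)/n)^2)) - ((n:ℝ)*Real.pi/4 - 1)) :=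
    mul_nonneg (mul_nonneg (mul_nonneg hu0.le hd) ht0.le) (by linarith)
  nlinarith [hP]

lemma aux_step (Λ : Set ℝ) (d r₀ : ℝ) (hd : 0 ≤ d) (hr₀ : 1 ≤ r₀) (n : ℕ) (hn : 2 ≤ n)
    (hcount : ∀ u : ℝ, r₀ ≤ u → ∀ x : ℝ,
      ENNReal.ofReal (2 * u * d) ≤ ((Λ ∩ Icc (x - u) (x + u)).encard : ℝ≥0∞)) :
    ENNReal.ofReal (d * (1 - 4/((n:ℝ)*Real.pi))) ≤ circDensity Λ := by
  have hπ := Real.pi_pos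
  have hπ3 := Real.pi_gt_three
  have hnR : (2:ℝ) ≤ (n:ℝ) := by exact_mod_cast hn
  have hn0 : (0:ℝ) < n := by linarith
  have hfac : (0:ℝ) ≤ d * ((n:ℝ)*Real.pi/2 - 2) := mul_nonneg hd (by nlinarith)
  set α : ℝ := d*((n:ℝ)*Real.pi/2 - 2)/n with hα
  set β : ℝ := r₀*(d*((n:ℝ)*Real.pi/2 - 2)) with hβ
  have hα0 : 0 ≤ α := div_nonneg hfac hn0.le
  have hβ0 : 0 ≤ β := mul_nonneg (by linarith) hfac
  set T : ℝ := 3*n*r₀ with hT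
  have hT0 : (0:ℝ) < T := by rw [hT]; nlinarith
  have hαT : α * T = 3*r₀*(d*((n:ℝ)*Real.pi/2 - 2)) := by
    rw [hα, hT]; field_simp
  have hβT : β ≤ α * T := by rw [hβ, hαT]; nlinarith
  -- pointwise chord bound
  have gchord : ∀ t : ℝ, T ≤ t → ENNReal.ofReal (α*t - β)
      ≤ circChordSum Λ t / ENNReal.ofReal t := by
    intro t htT
    have ht0 : 0 < t := lt_of_lt_of_le hT0 htT
    have hg0 : 0 ≤ α*t - β := by nlinarith [mul_le_mul_of_nonneg_left htT hα0]
    rw [ENNReal.le_div_iff_mul_le (Or.inl (by simpa using ht0)) (Or.inl ENNReal.ofReal_ne_top)]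
    rw [← ENNReal.ofReal_mul hg0]
    have heq : (α*t - β)*t = (t/n - r₀) * d * ((n:ℝ) * Real.pi / 2 - 2) * t := by
      rw [hα, hβ]; field_simp
    rw [heq]
    exact aux_chord Λ d r₀ hd hr₀ n hn hcount t (by rw [hT] at htT; exact htT)
  -- eventual lower bound on the averaged quantity
  have hF : ∀ R : ℝ, T ≤ R →
      ENNReal.ofReal (4/(Real.pi * R^2) * (α*(R^2 - T^2)/2 - β*(R - T)))
      ≤ ENNReal.ofReal (4 / (Real.pi * R ^ 2)) *
          ∫⁻ t in Set.Ioc (0 : ℝ) R, circChordSum Λ t / ENNReal.ofReal t := by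
    intro R hR
    have hR0 : 0 < R := lt_of_lt_of_le hT0 hR
    rw [ENNReal.ofReal_mul (by positivity : (0:ℝ) ≤ 4/(Real.pi*R^2))]
    apply mul_le_mul_right
    have hIoc : Set.Ioc T R ⊆ Set.Ioc 0 R := Set.Ioc_subset_Ioc_left hT0.le
    refine le_trans ?_ (lintegral_mono_set hIoc)
    have hcontg : Continuous (fun t : ℝ => α*t - β) :=
      (continuous_const.mul continuous_id').sub continuous_const
    have hInt : IntegrableOn (fun t : ℝ => α*t - β) (Set.Ioc T R) volume :=
      hcontg.integrableOn_Ioc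
    have hnn : 0 ≤ᵐ[volume.restrict (Set.Ioc T R)] fun t : ℝ => α*t - β :=
      (ae_restrict_iff' measurableSet_Ioc).2 (ae_of_all _ fun t ht => by
        show (0:ℝ) ≤ α*t - β
        linarith [mul_le_mul_of_nonneg_left ht.1.le hα0, hβT])
    have hval : ∫ t in Set.Ioc T R, (α*t - β) = α*(R^2 - T^2)/2 - β*(R - T) := by
      rw [← intervalIntegral.integral_of_le hR]
      rw [intervalIntegral.integral_sub (f := fun x : ℝ => α * x) (g := fun _ : ℝ => β)
        ((continuous_const.mul continuous_id').intervalIntegrable _ _)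
        (intervalIntegrable_const)]
      rw [intervalIntegral.integral_const_mul, integral_id, intervalIntegral.integral_const]
      simp only [smul_eq_mul]
      ring
    calc ENNReal.ofReal (α*(R^2 - T^2)/2 - β*(R - T))
        = ENNReal.ofReal (∫ t in Set.Ioc T R, (α*t - β)) := by rw [hval]
      _ = ∫⁻ t in Set.Ioc T R, ENNReal.ofReal (α*t - β) :=
          ofReal_integral_eq_lintegral_ofReal hInt hnn
      _ ≤ ∫⁻ t in Set.Ioc T R, circChordSum Λ t / ENNReal.ofReal t :=
          lintegral_mono_ae ((ae_restrict_iff' measurableSet_Ioc).2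
            (ae_of_all _ fun t ht => gchord t ht.1.le))
  -- the limit
  have htend : Tendsto (fun R : ℝ => 4/(Real.pi * R^2) * (α*(R^2 - T^2)/2 - β*(R - T)))
      atTop (nhds (2*α/Real.pi)) := by
    have h1 : Tendsto (fun R : ℝ => R⁻¹) atTop (nhds 0) := tendsto_inv_atTop_zero
    have h2 : Tendsto (fun R : ℝ => 2*α/Real.pi - (2*α*T^2/Real.pi)*(R⁻¹*R⁻¹)
        - (4*β/Real.pi)*R⁻¹ + (4*β*T/Real.pi)*(R⁻¹*R⁻¹)) atTop
        (nhds (2*α/Real.pi - (2*α*T^2/Real.pi)*(0*0) - (4*β/Real.pi)*0 + (4*β*T/Real.pi)*(0*0))) :=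
      ((tendsto_const_nhds.sub ((h1.mul h1).const_mul _)).sub (h1.const_mul _)).add
        ((h1.mul h1).const_mul _)
    simp only [mul_zero, zero_mul, sub_zero, add_zero] at h2
    refine Tendsto.congr' ?_ h2
    filter_upwards [eventually_ge_atTop (1:ℝ)] with R hR1
    have hR0 : R ≠ 0 := by linarith
    field_simp
    ring
  have hev : ∀ᶠ R in (atTop : Filter ℝ),
      ENNReal.ofReal (4/(Real.pi * R^2) * (α*(R^2 - T^2)/2 - β*(R - T)))
      ≤ ENNReal.ofReal (4 / (Real.pi * R ^ 2)) *
          ∫⁻ t in Set.Ioc (0 : ℝ) R, circChordSum Λ t / ENNReal.ofReal t := by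
    filter_upwards [eventually_ge_atTop T] with R hR
    exact hF R hR
  have hlim : Tendsto (fun R : ℝ =>
      ENNReal.ofReal (4/(Real.pi * R^2) * (α*(R^2 - T^2)/2 - β*(R - T))))
      atTop (nhds (ENNReal.ofReal (2*α/Real.pi))) :=
    (ENNReal.continuous_ofReal.tendsto _).comp htend
  have h3 : ENNReal.ofReal (2*α/Real.pi) ≤ circDensity Λ := by
    rw [circDensity]
    refine le_trans ?_ liminf_le_limsup
    rw [← hlim.liminf_eq]
    exact liminf_le_liminf hev
  refine le_trans (le_of_eq ?_) h3
  congr 1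
  rw [hα]
  field_simp
  ring

/-- The upper average circular density dominates the lower Beurling density. -/
theorem lowerBeurlingDensity_le_circDensity (Λ : Set ℝ) :
    lowerBeurlingDensity Λ ≤ circDensity Λ := by
  apply ENNReal.le_of_forall_nnreal_lt
  intro r hr
  rcases eq_or_ne r 0 with rfl | hr0
  · simp
  have hd0 : (0:ℝ) < (r:ℝ) := by positivity
  set d : ℝ := (r:ℝ) with hddef
  rw [lowerBeurlingDensity] at hr
  have hev := eventually_lt_of_lt_liminf hr
  rw [eventually_atTop] at hev
  obtain ⟨r₁, hr₁⟩ := hev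
  set r₀ : ℝ := max r₁ 1 with hr₀def
  have hr₀1 : (1:ℝ) ≤ r₀ := le_max_right _ _
  have hcount : ∀ u : ℝ, r₀ ≤ u → ∀ x : ℝ,
      ENNReal.ofReal (2 * u * d) ≤ ((Λ ∩ Icc (x - u) (x + u)).encard : ℝ≥0∞) := by
    intro u hu x
    have hu1 : (1:ℝ) ≤ u := le_trans hr₀1 hu
    have h := hr₁ u (le_trans (le_max_left _ _) hu)
    have h2 : (r : ℝ≥0∞) < ((Λ ∩ Icc (x - u) (x + u)).encard : ℝ≥0∞) / ENNReal.ofReal (2*u) :=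
      lt_of_lt_of_le h (iInf_le _ x)
    rw [ENNReal.lt_div_iff_mul_lt
      (Or.inl (ENNReal.ofReal_pos.2 (by linarith)).ne')
      (Or.inl ENNReal.ofReal_ne_top)] at h2
    refine le_of_lt (lt_of_le_of_lt (le_of_eq ?_) h2)
    rw [← ENNReal.ofReal_coe_nnreal, ← ENNReal.ofReal_mul (by positivity)]
    rw [← hddef]
    congr 1
    ring
  have key : ∀ n : ℕ, 2 ≤ n → ENNReal.ofReal (d * (1 - 4/((n:ℝ)*Real.pi))) ≤ circDensity Λ :=
    fun n hn => aux_step Λ d r₀ hd0.le hr₀1 n hn hcount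
  have hrt : Tendsto (fun n : ℕ => d * (1 - 4/((n:ℝ)*Real.pi))) atTop (nhds d) := by
    have hrw : ∀ n : ℕ, d * (1 - 4/((n:ℝ)*Real.pi)) = d - (4*d/Real.pi)*(1/(n:ℝ)) := by
      intro n
      rcases Nat.eq_zero_or_pos n with rfl | hn
      · simp
      have : ((n:ℝ)) ≠ 0 := Nat.cast_ne_zero.2 hn.ne'
      field_simp
    simp only [hrw]
    have h0 : Tendsto (fun n : ℕ => d - (4*d/Real.pi)*(1/(n:ℝ))) atTop (nhds (d - (4*d/Real.pi)*0)) :=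
      (tendsto_const_nhds (x := d)).sub (tendsto_one_div_atTop_nhds_zero_nat.const_mul (4*d/Real.pi))
    simpa using h0
  have htop : Tendsto (fun n : ℕ => ENNReal.ofReal (d * (1 - 4/((n:ℝ)*Real.pi)))) atTop
      (nhds (ENNReal.ofReal d)) :=
    (ENNReal.continuous_ofReal.tendsto _).comp hrt
  have hfin : ENNReal.ofReal d ≤ circDensity Λ :=
    le_of_tendsto htop (eventually_atTop.2 ⟨2, fun n hn => key n hn⟩)
  calc (r:ℝ≥0∞) = ENNReal.ofReal d := (ENNReal.ofReal_coe_nnreal (p := r)).symm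
    _ ≤ circDensity Λ := hfin
end

section
/- Let Λ ⊆ ℝ be a set with lower Beurling density D⁻(Λ) > 2, and suppose Λ = Λ₁ ∪ Λ₂. Then D⁺_circ(Λ₁) > 1 or D⁺_circ(Λ₂) > 1. -/
open MeasureTheory Filter Set
open scoped ENNReal

lemma chordSum_eq (Λ : Set ℝ) (t : ℝ) :
    circChordSum Λ t = ∑' lam : Λ,
      (Set.Ici |(lam : ℝ)|).indicator
        (fun s => ENNReal.ofReal (Real.sqrt (s ^ 2 - (lam : ℝ) ^ 2))) t := by
  have h1 := tsum_subtype (Λ ∩ Set.Icc (-t) t)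
    (fun x => ENNReal.ofReal (Real.sqrt (t ^ 2 - x ^ 2)))
  have h2 := tsum_subtype Λ
    (fun x => (Set.Ici |x|).indicator
        (fun s => ENNReal.ofReal (Real.sqrt (s ^ 2 - x ^ 2))) t)
  rw [circChordSum, h1, h2]
  congr 1
  funext x
  by_cases hx : x ∈ Λ
  · have hmem : x ∈ Set.Icc (-t) t ↔ t ∈ Set.Ici |x| := by
      rw [Set.mem_Icc, Set.mem_Ici, ← abs_le]
    by_cases hxt : x ∈ Set.Icc (-t) t
    · rw [Set.indicator_of_mem (Set.mem_inter hx hxt), Set.indicator_of_mem hx,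
        Set.indicator_of_mem (hmem.1 hxt)]
    · rw [Set.indicator_of_notMem (fun h => hxt h.2), Set.indicator_of_mem hx,
        Set.indicator_of_notMem (fun h => hxt (hmem.2 h))]
  · rw [Set.indicator_of_notMem (fun h => hx h.1), Set.indicator_of_notMem hx]

lemma measurable_chordSum {Λ : Set ℝ} (h : Λ.Countable) :
    Measurable (circChordSum Λ) := by
  have : Countable Λ := h.to_subtype
  simp only [funext fun t => chordSum_eq Λ t]
  refine Measurable.ennreal_tsum fun lam => ?_
  exact Measurable.indicator
    (by fun_prop) measurableSet_Ici

lemma chordSum_union_le (Λ₁ Λ₂ : Set ℝ) (t : ℝ) :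
    circChordSum (Λ₁ ∪ Λ₂) t ≤ circChordSum Λ₁ t + circChordSum Λ₂ t := by
  set f : ℝ → ℝ≥0∞ := fun x => ENNReal.ofReal (Real.sqrt (t ^ 2 - x ^ 2)) with hf
  have h1 : ∀ (S : Set ℝ), circChordSum S t = ∑' x : ℝ, (S ∩ Set.Icc (-t) t).indicator f x :=
    fun S => by rw [circChordSum]; exact tsum_subtype (S ∩ Set.Icc (-t) t) f
  rw [h1, h1, h1, ← ENNReal.tsum_add]
  refine ENNReal.tsum_le_tsum fun x => ?_
  rw [Set.union_inter_distrib_right]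
  by_cases h1x : x ∈ Λ₁ ∩ Set.Icc (-t) t
  · calc (Λ₁ ∩ Set.Icc (-t) t ∪ Λ₂ ∩ Set.Icc (-t) t).indicator f x
        = f x := Set.indicator_of_mem (Set.mem_union_left _ h1x) f
      _ ≤ _ := by rw [Set.indicator_of_mem h1x]; exact le_self_add
  · by_cases h2x : x ∈ Λ₂ ∩ Set.Icc (-t) t
    · calc (Λ₁ ∩ Set.Icc (-t) t ∪ Λ₂ ∩ Set.Icc (-t) t).indicator f x
          = f x := Set.indicator_of_mem (Set.mem_union_right _ h2x) f
        _ ≤ _ := by rw [Set.indicator_of_mem h2x]; exact le_add_self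
    · rw [Set.indicator_of_notMem (fun h => h.elim h1x h2x)]
      exact zero_le

/-- counting lower bound for the chord sum via a sub-interval -/
lemma encard_le_tsum_indicator {S A : Set ℝ} (hSA : S ⊆ A) (g : ℝ → ℝ≥0∞)
    (hg : ∀ x ∈ S, 1 ≤ g x) :
    (S.encard : ℝ≥0∞) ≤ ∑' x : A, g x := by
  rw [← ENNReal.tsum_set_one, tsum_subtype S (fun _ => (1:ℝ≥0∞)), tsum_subtype A g]
  refine ENNReal.tsum_le_tsum fun x => ?_
  by_cases hx : x ∈ S
  · rw [Set.indicator_of_mem hx, Set.indicator_of_mem (hSA hx)]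
    exact hg x hx
  · rw [Set.indicator_of_notMem hx]; exact zero_le

lemma chordSum_eq_top {Λ : Set ℝ} {n t : ℝ} (hinf : (Λ ∩ Set.Icc (-n) n).Infinite)
    (hn : 0 ≤ n) (ht : n < t) : circChordSum Λ t = ⊤ := by
  rw [circChordSum]
  have hsub : Λ ∩ Set.Icc (-n) n ⊆ Λ ∩ Set.Icc (-t) t := by
    intro x hx
    exact ⟨hx.1, Set.Icc_subset_Icc (by linarith) ht.le hx.2⟩
  have hc : (0:ℝ) < t ^ 2 - n ^ 2 := by nlinarith
  have key : ((Λ ∩ Set.Icc (-n) n).encard : ℝ≥0∞) ≤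
      ∑' lam : (Λ ∩ Set.Icc (-t) t : Set ℝ),
        ENNReal.ofReal (Real.sqrt (t ^ 2 - (lam : ℝ) ^ 2)) / ENNReal.ofReal (Real.sqrt (t^2 - n^2)) := by
    refine encard_le_tsum_indicator hsub (fun x => ENNReal.ofReal (Real.sqrt (t ^ 2 - x ^ 2)) / ENNReal.ofReal (Real.sqrt (t^2 - n^2))) fun x hx => ?_
    rw [ENNReal.le_div_iff_mul_le (Or.inl ?_) (Or.inr ENNReal.ofReal_ne_top), one_mul]
    · refine ENNReal.ofReal_le_ofReal (Real.sqrt_le_sqrt ?_)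
      have hxn : |x| ≤ n := abs_le.2 ⟨hx.2.1, hx.2.2⟩
      nlinarith [abs_nonneg x, sq_abs x]
    · simp only [ne_eq, ENNReal.ofReal_eq_zero, not_le]
      exact Real.sqrt_pos.2 hc
  rw [Set.Infinite.encard_eq hinf] at key
  simp only [ENat.toENNReal_top, top_le_iff] at key
  simp only [div_eq_mul_inv, ENNReal.tsum_mul_right] at key
  have hcne : ENNReal.ofReal (Real.sqrt (t^2-n^2)) ≠ 0 := by
    simp only [ne_eq, ENNReal.ofReal_eq_zero, not_le]
    exact Real.sqrt_pos.2 hc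
  rcases ENNReal.mul_eq_top.1 key with h | h
  · exact absurd (ENNReal.inv_eq_top.1 h.2) hcne
  · exact h.1

lemma circDensity_eq_top {Λ : Set ℝ} (h : ¬ Λ.Countable) : circDensity Λ = ⊤ := by
  -- find a bounded infinite piece
  obtain ⟨n, hn⟩ : ∃ n : ℕ, (Λ ∩ Set.Icc (-(n:ℝ)) n).Infinite := by
    by_contra hc
    push_neg at hc
    refine h (Set.Countable.mono (fun x hx => ?_) (Set.countable_iUnion fun n : ℕ => (hc n).countable))
    refine Set.mem_iUnion.2 ⟨⌈|x|⌉₊, hx, ?_⟩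
    have h1 := abs_le.1 (Nat.le_ceil |x|)
    exact ⟨h1.1, h1.2⟩
  have hA : ∀ r : ℝ, (n:ℝ) + 1 ≤ r →
      ENNReal.ofReal (4 / (Real.pi * r ^ 2)) *
        ∫⁻ t in Set.Ioc (0 : ℝ) r, circChordSum Λ t / ENNReal.ofReal t = ⊤ := by
    intro r hr
    have hn0 : (0:ℝ) ≤ (n:ℝ) := n.cast_nonneg
    have hint : (∫⁻ t in Set.Ioc (0 : ℝ) r, circChordSum Λ t / ENNReal.ofReal t) = ⊤ := by
      rw [eq_top_iff]
      calc (⊤ : ℝ≥0∞) = ⊤ * volume (Set.Ioc (n:ℝ) r) := by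
              rw [ENNReal.top_mul]
              simp only [Real.volume_Ioc, ne_eq, ENNReal.ofReal_eq_zero, not_le]
              linarith
        _ = ∫⁻ _ in Set.Ioc (n:ℝ) r, (⊤:ℝ≥0∞) := (setLIntegral_const _ _).symm
        _ ≤ ∫⁻ t in Set.Ioc (n:ℝ) r, circChordSum Λ t / ENNReal.ofReal t := by
              refine setLIntegral_mono' measurableSet_Ioc fun t ht => ?_
              rw [chordSum_eq_top hn hn0 ht.1, ENNReal.top_div_of_ne_top ENNReal.ofReal_ne_top]
        _ ≤ ∫⁻ t in Set.Ioc (0:ℝ) r, circChordSum Λ t / ENNReal.ofReal t :=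
              lintegral_mono_set (Set.Ioc_subset_Ioc (by linarith) le_rfl)
    rw [hint, ENNReal.mul_top]
    simp only [ne_eq, ENNReal.ofReal_eq_zero, not_le]
    have : (0:ℝ) < r := by linarith
    positivity
  rw [circDensity]
  have : (fun r : ℝ => ENNReal.ofReal (4 / (Real.pi * r ^ 2)) *
      ∫⁻ t in Set.Ioc (0 : ℝ) r, circChordSum Λ t / ENNReal.ofReal t)
      =ᶠ[Filter.atTop] (fun _ => (⊤:ℝ≥0∞)) :=
    Filter.eventually_atTop.2 ⟨(n:ℝ)+1, hA⟩
  rw [limsup_congr this, limsup_const]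

lemma my_limsup_add_le (u v : ℝ → ℝ≥0∞) :
    Filter.limsup (fun r => u r + v r) Filter.atTop ≤
      Filter.limsup u Filter.atTop + Filter.limsup v Filter.atTop := by
  set a := Filter.limsup u Filter.atTop
  set b := Filter.limsup v Filter.atTop
  rcases eq_or_ne a ⊤ with ha | ha
  · rw [ha, top_add]; exact le_top
  rcases eq_or_ne b ⊤ with hb | hb
  · rw [hb, add_top]; exact le_top
  refine ENNReal.le_of_forall_pos_le_add fun ε hε _ => ?_
  have hε2 : (ε:ℝ≥0∞)/2 ≠ 0 := by
    simp [ENNReal.div_eq_zero_iff, hε.ne']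
  have hu : ∀ᶠ r in Filter.atTop, u r < a + ε/2 :=
    Filter.eventually_lt_of_limsup_lt (ENNReal.lt_add_right ha hε2)
  have hv : ∀ᶠ r in Filter.atTop, v r < b + ε/2 :=
    Filter.eventually_lt_of_limsup_lt (ENNReal.lt_add_right hb hε2)
  have : ∀ᶠ r in Filter.atTop, u r + v r ≤ a + b + ε := by
    filter_upwards [hu, hv] with r h1 h2
    calc u r + v r ≤ (a + ε/2) + (b + ε/2) := add_le_add h1.le h2.le
      _ = a + b + (ε/2 + ε/2) := by ring
      _ = a + b + ε := by rw [ENNReal.add_halves]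
  exact Filter.limsup_le_of_le (by isBoundedDefault) this

/-- step function below a value: telescoping bound -/
lemma sum_step_le (K : ℕ) (v : ℕ → ℝ) (w : ℝ) (hw : 0 ≤ w)
    (hv : ∀ k, v (k + 1) ≤ v k) (hvK : v K = 0)
    (P : ℕ → Prop) [DecidablePred P] (hP : ∀ k, P k → v k ≤ w) :
    ∑ k ∈ Finset.Ico 1 K, (if P k then v k - v (k + 1) else 0) ≤ w := by
  have hterm : ∀ k, (if P k then v k - v (k + 1) else 0) ≤
      min (v k) w - min (v (k + 1)) w := by
    intro k
    by_cases hk : P k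
    · rw [if_pos hk, min_eq_left (hP k hk), min_eq_left ((hv k).trans (hP k hk))]
    · rw [if_neg hk]
      have := min_le_min (hv k) (le_refl w)
      linarith
  calc ∑ k ∈ Finset.Ico 1 K, (if P k then v k - v (k + 1) else 0)
      ≤ ∑ k ∈ Finset.Ico 1 K, (min (v k) w - min (v (k + 1)) w) :=
        Finset.sum_le_sum fun k _ => hterm k
    _ ≤ w := by
        rcases Nat.eq_zero_or_pos K with hK | hK
        · simp [hK, hw]
        · rw [Finset.sum_Ico_eq_sum_range]
          have htel : ∑ i ∈ Finset.range (K - 1),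
              (min (v (1 + i)) w - min (v (1 + i + 1)) w) =
              min (v 1) w - min (v (1 + (K-1))) w := by
            have := Finset.sum_range_sub' (fun i => min (v (1 + i)) w) (K - 1)
            simpa [add_assoc] using this
          rw [htel]
          have hK1 : 1 + (K - 1) = K := by omega
          rw [hK1]
          have h0 : min (v K) w = v K := min_eq_left (hvK.le.trans hw)
          have h1 : min (v 1) w ≤ w := min_le_right _ _
          rw [h0, hvK]; linarith

/-- Abel summation identity -/
lemma abel_id (w : ℕ → ℝ) (K : ℕ) :
    ∑ k ∈ Finset.range K, (w k - w (k + 1)) * (k : ℝ)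
      = (∑ k ∈ Finset.range K, w k) - w 0 - ((K : ℝ) - 1) * w K := by
  induction K with
  | zero => simp
  | succ K ih =>
    rw [Finset.sum_range_succ, ih, Finset.sum_range_succ]
    push_cast
    ring

lemma cont_sqrt : Continuous (fun x : ℝ => Real.sqrt (1 - x ^ 2)) :=
  (continuous_const.sub (continuous_pow 2)).sqrt

lemma integral_zero_one_sqrt : ∫ x in (0:ℝ)..1, Real.sqrt (1 - x ^ 2) = Real.pi / 4 := by
  have hint : ∀ a b : ℝ, IntervalIntegrable (fun x : ℝ => Real.sqrt (1 - x ^ 2)) volume a b :=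
    fun a b => cont_sqrt.intervalIntegrable a b
  have heven : (∫ x in (-1:ℝ)..0, Real.sqrt (1 - x ^ 2))
      = ∫ x in (0:ℝ)..1, Real.sqrt (1 - x ^ 2) := by
    have := intervalIntegral.integral_comp_neg (a := (0:ℝ)) (b := 1)
      (fun x : ℝ => Real.sqrt (1 - x ^ 2))
    simp only [neg_zero] at this
    rw [← this]
    congr 1
    funext x
    rw [neg_pow]
    ring_nf
  have hsplit := intervalIntegral.integral_add_adjacent_intervals
    (hint (-1) 0) (hint 0 1)
  rw [heven] at hsplit
  have := integral_sqrt_one_sub_sq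
  linarith [hsplit, this]

lemma riemann_lower (K : ℕ) (hK : 0 < K) :
    Real.pi / 4 * K ≤ ∑ k ∈ Finset.range K, Real.sqrt (1 - ((k:ℝ)/K)^2) := by
  have hKR : (0:ℝ) < K := Nat.cast_pos.2 hK
  have hint : ∀ a b : ℝ, IntervalIntegrable (fun x : ℝ => Real.sqrt (1 - x ^ 2)) volume a b :=
    fun a b => cont_sqrt.intervalIntegrable a b
  have hadj := intervalIntegral.sum_integral_adjacent_intervals
    (a := fun i : ℕ => (i:ℝ)/K) (f := fun x : ℝ => Real.sqrt (1 - x ^ 2))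
    (μ := volume) (n := K) (fun i _ => hint _ _)
  simp only [Nat.cast_zero, zero_div] at hadj
  push_cast at hadj
  have hKK : ((K:ℝ))/K = 1 := div_self hKR.ne'
  rw [hKK] at hadj
  have hbound : ∀ k ∈ Finset.range K,
      (∫ x in ((k:ℝ)/K)..(((k:ℝ)+1)/K), Real.sqrt (1 - x ^ 2))
        ≤ Real.sqrt (1 - ((k:ℝ)/K)^2) * (1/K) := by
    intro k hk
    have hle : (k:ℝ)/K ≤ ((k:ℝ)+1)/K := by
      gcongr
      linarith
    calc (∫ x in ((k:ℝ)/K)..(((k:ℝ)+1)/K), Real.sqrt (1 - x ^ 2))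
        ≤ ∫ _ in ((k:ℝ)/K)..(((k:ℝ)+1)/K), Real.sqrt (1 - ((k:ℝ)/K) ^ 2) := by
          refine intervalIntegral.integral_mono_on hle (hint _ _)
            (intervalIntegrable_const) fun x hx => ?_
          refine Real.sqrt_le_sqrt ?_
          have h1 : (k:ℝ)/K ≤ x := hx.1
          have h2 : 0 ≤ (k:ℝ)/K := by positivity
          nlinarith
      _ = Real.sqrt (1 - ((k:ℝ)/K)^2) * (1/K) := by
          rw [intervalIntegral.integral_const, smul_eq_mul]
          ring
  have hsum := Finset.sum_le_sum hbound
  rw [hadj] at hsum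
  rw [integral_zero_one_sqrt] at hsum
  have : ∑ k ∈ Finset.range K, Real.sqrt (1 - ((k:ℝ)/K)^2) * (1/K)
      = (∑ k ∈ Finset.range K, Real.sqrt (1 - ((k:ℝ)/K)^2)) * (1/K) := by
    rw [Finset.sum_mul]
  rw [this] at hsum
  have := mul_le_mul_of_nonneg_right hsum (le_of_lt hKR)
  calc Real.pi / 4 * K = Real.pi / 4 * K := rfl
    _ ≤ _ := by
        rw [mul_comm] at this ⊢
        calc (K:ℝ) * (Real.pi / 4) ≤ K * ((∑ k ∈ Finset.range K, Real.sqrt (1 - ((k:ℝ)/K)^2)) * (1/K)) :=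
              mul_le_mul_of_nonneg_left hsum (le_of_lt hKR)
          _ = ∑ k ∈ Finset.range K, Real.sqrt (1 - ((k:ℝ)/K)^2) := by
              field_simp

lemma count_lower {Λ : Set ℝ} {b : ℝ} (hb0 : 0 ≤ b)
    (hb : ENNReal.ofReal b < lowerBeurlingDensity Λ) :
    ∃ s₀ : ℝ, 1 ≤ s₀ ∧ ∀ s, s₀ ≤ s →
      ENNReal.ofReal (2 * s * b) ≤ ((Λ ∩ Set.Icc (-s) s).encard : ℝ≥0∞) := by
  have hev := Filter.eventually_lt_of_lt_liminf hb
  obtain ⟨a, ha⟩ := Filter.eventually_atTop.1 hev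
  refine ⟨max a 1, le_max_right _ _, fun s hs => ?_⟩
  have hs1 : (1:ℝ) ≤ s := le_trans (le_max_right a 1) hs
  have h0 := ha s (le_trans (le_max_left a 1) hs)
  have h1 : ENNReal.ofReal b <
      ((Λ ∩ Set.Icc (-s) s).encard : ℝ≥0∞) / ENNReal.ofReal (2 * s) := by
    refine lt_of_lt_of_le h0 (le_trans (iInf_le _ 0) ?_)
    rw [zero_sub, zero_add]
  have h2s : ENNReal.ofReal (2 * s) ≠ 0 := by
    simp only [ne_eq, ENNReal.ofReal_eq_zero, not_le]; linarith
  rw [ENNReal.lt_div_iff_mul_lt (Or.inl h2s) (Or.inl ENNReal.ofReal_ne_top)] at h1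
  refine le_of_lt (lt_of_le_of_lt (le_of_eq ?_) h1)
  rw [← ENNReal.ofReal_mul hb0, mul_comm b (2*s)]

lemma chord_lower {Λ : Set ℝ} {b s₀ : ℝ} (hb0 : 0 ≤ b) (hs₀ : 1 ≤ s₀)
    (hcount : ∀ s, s₀ ≤ s →
      ENNReal.ofReal (2 * s * b) ≤ ((Λ ∩ Set.Icc (-s) s).encard : ℝ≥0∞))
    (K : ℕ) (hK : 1 ≤ K) {t : ℝ} (ht : (K:ℝ) * s₀ ≤ t) :
    ENNReal.ofReal (2 * b * t^2 *
      (∑ k ∈ Finset.Ico 1 K, (Real.sqrt (1 - ((k:ℝ)/K)^2)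
        - Real.sqrt (1 - (((k:ℝ)+1)/K)^2)) * ((k:ℝ)/K)))
      ≤ circChordSum Λ t := by
  have hKR : (1:ℝ) ≤ (K:ℝ) := by exact_mod_cast hK
  have ht0 : (0:ℝ) < t := lt_of_lt_of_le (by nlinarith) ht
  set W : ℕ → ℝ := fun k => Real.sqrt (1 - ((k:ℝ)/K)^2) with hW
  set v : ℕ → ℝ := fun k => Real.sqrt (t^2 - (t*(k:ℝ)/K)^2) with hv
  have hvW : ∀ k, v k = t * W k := by
    intro k
    show Real.sqrt (t^2 - (t*(k:ℝ)/K)^2) = t * Real.sqrt (1 - ((k:ℝ)/K)^2)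
    have h9 : t^2 - (t*(k:ℝ)/K)^2 = t^2 * (1 - ((k:ℝ)/K)^2) := by ring
    rw [h9, Real.sqrt_mul (sq_nonneg t), Real.sqrt_sq ht0.le]
  have hvmono : ∀ k, v (k+1) ≤ v k := by
    intro k
    refine Real.sqrt_le_sqrt ?_
    have h1 : (0:ℝ) ≤ t*(k:ℝ)/K := by positivity
    have h2 : t*(k:ℝ)/K ≤ t*((k:ℝ)+1)/K := by
      gcongr
      linarith
    push_cast
    nlinarith
  have hvK : v K = 0 := by
    show Real.sqrt (t^2 - (t*(K:ℝ)/K)^2) = 0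
    have h9 : t*(K:ℝ)/K = t := by field_simp
    rw [h9]
    simp
  have hΔ : ∀ k, 0 ≤ v k - v (k+1) := fun k => by linarith [hvmono k]
  -- step 1 : encard bound
  set A : Set ℝ := Λ ∩ Set.Icc (-t) t with hA
  have hcS : circChordSum Λ t
      = ∑' x : A, ENNReal.ofReal (Real.sqrt (t^2 - (x:ℝ)^2)) := rfl
  have step1 : ∀ k ∈ Finset.Ico 1 K,
      ((Λ ∩ Set.Icc (-(t*(k:ℝ)/K)) (t*(k:ℝ)/K)).encard : ℝ≥0∞)
        ≤ ∑' x : A, (if |(x:ℝ)| ≤ t*(k:ℝ)/K then (1:ℝ≥0∞) else 0) := by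
    intro k hk
    obtain ⟨hk1, hk2⟩ := Finset.mem_Ico.1 hk
    refine encard_le_tsum_indicator ?_ (fun x => if |x| ≤ t*(k:ℝ)/K then (1:ℝ≥0∞) else 0)
      (fun x hx => ?_)
    · intro x hx
      refine ⟨hx.1, ?_⟩
      have hkK : t*(k:ℝ)/K ≤ t := by
        rw [div_le_iff₀ (by linarith)]
        have : (k:ℝ) ≤ K := by exact_mod_cast hk2.le
        nlinarith
      exact Set.Icc_subset_Icc (by linarith) hkK hx.2
    · show (1:ℝ≥0∞) ≤ if |x| ≤ t*(k:ℝ)/K then 1 else 0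
      rw [if_pos (abs_le.2 ⟨hx.2.1, hx.2.2⟩)]
  -- step 2 : per-point step bound
  have step2 : ∀ x : A, ∑ k ∈ Finset.Ico 1 K,
      ENNReal.ofReal (v k - v (k+1)) * (if |(x:ℝ)| ≤ t*(k:ℝ)/K then (1:ℝ≥0∞) else 0)
      ≤ ENNReal.ofReal (Real.sqrt (t^2 - (x:ℝ)^2)) := by
    intro x
    have hterm : ∀ k, ENNReal.ofReal (v k - v (k+1)) *
        (if |(x:ℝ)| ≤ t*(k:ℝ)/K then (1:ℝ≥0∞) else 0)
        = ENNReal.ofReal (if |(x:ℝ)| ≤ t*(k:ℝ)/K then v k - v (k+1) else 0) := by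
      intro k
      by_cases hP : |(x:ℝ)| ≤ t*(k:ℝ)/K
      · rw [if_pos hP, if_pos hP, mul_one]
      · rw [if_neg hP, if_neg hP, mul_zero, ENNReal.ofReal_zero]
    simp only [hterm]
    rw [← ENNReal.ofReal_sum_of_nonneg (fun k _ => by
      split
      · exact hΔ k
      · exact le_refl 0)]
    refine ENNReal.ofReal_le_ofReal ?_
    refine sum_step_le K v (Real.sqrt (t^2 - (x:ℝ)^2)) (Real.sqrt_nonneg _)
      hvmono hvK _ (fun k hP => ?_)
    refine Real.sqrt_le_sqrt ?_
    have := abs_nonneg (x:ℝ)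
    nlinarith [sq_abs (x:ℝ)]
  -- combine
  have hcast : ∀ k:ℕ, Real.sqrt (1 - (((k:ℝ)+1)/K)^2) = W (k+1) := by
    intro k
    rw [hW]
    push_cast
    ring_nf
  simp only [hcast]
  calc ENNReal.ofReal (2 * b * t^2 * (∑ k ∈ Finset.Ico 1 K, (W k - W (k+1)) * ((k:ℝ)/K)))
      = ∑ k ∈ Finset.Ico 1 K, ENNReal.ofReal (v k - v (k+1))
          * ENNReal.ofReal (2 * (t*(k:ℝ)/K) * b) := by
        rw [Finset.mul_sum, ENNReal.ofReal_sum_of_nonneg]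
        · refine Finset.sum_congr rfl fun k hk => ?_
          rw [← ENNReal.ofReal_mul (by linarith [hΔ k])]
          congr 1
          rw [hvW k, hvW (k+1)]
          push_cast
          ring
        · intro k hk
          have h1 : 0 ≤ W k - W (k+1) := by
            have := hvW k; have := hvW (k+1); have := hΔ k
            have hWk : W (k+1) ≤ W k := by
              refine Real.sqrt_le_sqrt ?_
              have h8 : (0:ℝ) ≤ (k:ℝ)/K := by positivity
              have h9 : (k:ℝ)/K ≤ ((k:ℝ)+1)/K := by gcongr <;> linarith
              push_cast
              nlinarith
            linarith
          have h2 : (0:ℝ) ≤ (k:ℝ)/K := by positivity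
          positivity
    _ ≤ ∑ k ∈ Finset.Ico 1 K, ENNReal.ofReal (v k - v (k+1))
          * ((Λ ∩ Set.Icc (-(t*(k:ℝ)/K)) (t*(k:ℝ)/K)).encard : ℝ≥0∞) := by
        refine Finset.sum_le_sum fun k hk => ?_
        obtain ⟨hk1, _⟩ := Finset.mem_Ico.1 hk
        refine mul_le_mul_right (hcount _ ?_) _
        have hk1R : (1:ℝ) ≤ (k:ℝ) := by exact_mod_cast hk1
        rw [le_div_iff₀ (by linarith)]
        nlinarith
    _ ≤ ∑ k ∈ Finset.Ico 1 K, ENNReal.ofReal (v k - v (k+1))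
          * ∑' x : A, (if |(x:ℝ)| ≤ t*(k:ℝ)/K then (1:ℝ≥0∞) else 0) := by
        refine Finset.sum_le_sum fun k hk => mul_le_mul_right (step1 k hk) _
    _ = ∑' x : A, ∑ k ∈ Finset.Ico 1 K, ENNReal.ofReal (v k - v (k+1))
          * (if |(x:ℝ)| ≤ t*(k:ℝ)/K then (1:ℝ≥0∞) else 0) := by
        simp only [← ENNReal.tsum_mul_left]
        exact (Summable.tsum_finsetSum (fun k _ => ENNReal.summable)).symm
    _ ≤ ∑' x : A, ENNReal.ofReal (Real.sqrt (t^2 - (x:ℝ)^2)) :=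
        ENNReal.tsum_le_tsum step2
    _ = circChordSum Λ t := hcS.symm

lemma two_lt_circDensity {Λ : Set ℝ} (hΛ : 2 < lowerBeurlingDensity Λ) :
    (2:ℝ≥0∞) < circDensity Λ := by
  -- pick a real density bound b with 2 < b
  obtain ⟨b, hb0, hb2', hbd⟩ := ENNReal.lt_iff_exists_real_btwn.1 hΛ
  have hb2 : (2:ℝ) < b := by
    have : ENNReal.ofReal 2 < ENNReal.ofReal b := by
      simpa [ENNReal.ofReal_ofNat] using hb2'
    exact (ENNReal.ofReal_lt_ofReal_iff_of_nonneg (by norm_num)).1 this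
  obtain ⟨s₀, hs₀, hcount⟩ := count_lower hb0 hbd
  -- choose K
  obtain ⟨K, hKgt⟩ := exists_nat_gt (max (4*b/(Real.pi*(b-2))) 1)
  have hπ : (0:ℝ) < Real.pi := Real.pi_pos
  have hKR : (1:ℝ) < (K:ℝ) := lt_of_le_of_lt (le_max_right _ _) hKgt
  have hK1 : 1 ≤ K := by exact_mod_cast hKR.le
  set W : ℕ → ℝ := fun k => Real.sqrt (1 - ((k:ℝ)/K)^2) with hWdef
  set c : ℝ := ∑ k ∈ Finset.Ico 1 K, (Real.sqrt (1 - ((k:ℝ)/K)^2)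
      - Real.sqrt (1 - (((k:ℝ)+1)/K)^2)) * ((k:ℝ)/K) with hcdef
  have hKpos : (0:ℝ) < K := by linarith
  -- c ≥ π/4 - 1/K  and  c ≥ 0
  have hWmono : ∀ k : ℕ, W (k+1) ≤ W k := by
    intro k
    refine Real.sqrt_le_sqrt ?_
    have h8 : (0:ℝ) ≤ (k:ℝ)/K := by positivity
    have h9 : (k:ℝ)/K ≤ ((k:ℝ)+1)/K := by gcongr; linarith
    push_cast
    nlinarith
  have hterm : ∀ k : ℕ, (Real.sqrt (1 - ((k:ℝ)/K)^2)
      - Real.sqrt (1 - (((k:ℝ)+1)/K)^2)) = W k - W (k+1) := by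
    intro k
    rw [hWdef]
    push_cast
    ring_nf
  have hc0 : 0 ≤ c := by
    rw [hcdef]
    refine Finset.sum_nonneg fun k _ => mul_nonneg ?_ (by positivity)
    rw [hterm k]
    linarith [hWmono k]
  have hclow : Real.pi/4 - 1/K ≤ c := by
    have habel := abel_id W K
    have hW0 : W 0 = 1 := by simp [hWdef]
    have hWK : W K = 0 := by
      rw [hWdef]
      have : ((K:ℝ))/K = 1 := div_self hKpos.ne'
      simp [this]
    have hceq : c = (1/K) * ((∑ k ∈ Finset.range K, W k) - 1) := by
      rw [hcdef]
      have h1 : ∀ k ∈ Finset.Ico 1 K, (Real.sqrt (1 - ((k:ℝ)/K)^2)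
          - Real.sqrt (1 - (((k:ℝ)+1)/K)^2)) * ((k:ℝ)/K)
          = ((W k - W (k+1)) * (k:ℝ)) * (1/K) := by
        intro k _
        rw [hterm k]
        ring
      rw [Finset.sum_congr rfl h1, ← Finset.sum_mul]
      have h2 : ∑ k ∈ Finset.Ico 1 K, (W k - W (k+1)) * (k:ℝ)
          = ∑ k ∈ Finset.range K, (W k - W (k+1)) * (k:ℝ) := by
        rw [Finset.sum_Ico_eq_sub _ hK1]
        simp
      rw [h2, habel, hW0, hWK]
      ring
    rw [hceq]
    have hrie := riemann_lower K (by omega)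
    have : Real.pi/4*K - 1 ≤ (∑ k ∈ Finset.range K, W k) - 1 := by
      simp only [hWdef]
      linarith [hrie]
    calc Real.pi/4 - 1/K = (1/K) * (Real.pi/4*K - 1) := by
          rw [mul_sub, mul_one, mul_comm (1/(K:ℝ)), mul_assoc, mul_one_div,
            div_self hKpos.ne', mul_one]
      _ ≤ (1/K) * ((∑ k ∈ Finset.range K, W k) - 1) := by
          refine mul_le_mul_of_nonneg_left this (by positivity)
  -- main constant inequality
  have hb' : (0:ℝ) < b := by linarith
  have hmain : 2 < 4*b*c/Real.pi := by
    rw [lt_div_iff₀ hπ]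
    have h1 : 4*b/(Real.pi*(b-2)) < K := lt_of_le_of_lt (le_max_left _ _) hKgt
    rw [div_lt_iff₀ (by nlinarith)] at h1
    have h2 := mul_le_mul_of_nonneg_left hclow (by linarith : (0:ℝ) ≤ 4*b)
    have hKinv : (K:ℝ)*(1/K) = 1 := by field_simp
    nlinarith [mul_pos hπ hKpos, hKpos]
  -- eventual lower bound on the circ average
  set t₀ : ℝ := (K:ℝ) * s₀ with ht₀def
  have ht₀pos : 0 < t₀ := by nlinarith
  set g : ℝ → ℝ≥0∞ := fun r =>
    ENNReal.ofReal ((4/(Real.pi*r^2)) * (b*c*(r^2 - t₀^2))) with hgdef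
  have hev : ∀ᶠ r in Filter.atTop, g r ≤
      ENNReal.ofReal (4 / (Real.pi * r ^ 2)) *
        ∫⁻ t in Set.Ioc (0 : ℝ) r, circChordSum Λ t / ENNReal.ofReal t := by
    refine Filter.eventually_atTop.2 ⟨t₀ + 1, fun r hr => ?_⟩
    have hrt : t₀ < r := by linarith
    have hIle : ENNReal.ofReal (b*c*(r^2 - t₀^2)) ≤
        ∫⁻ t in Set.Ioc (0 : ℝ) r, circChordSum Λ t / ENNReal.ofReal t := by
      have hpt : ∀ t ∈ Set.Ioc t₀ r,
          ENNReal.ofReal (2*b*c*t) ≤ circChordSum Λ t / ENNReal.ofReal t := by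
        intro t ht
        have ht1 : t₀ < t := ht.1
        have htpos : 0 < t := lt_trans ht₀pos ht1
        rw [ENNReal.le_div_iff_mul_le (Or.inl ?_) (Or.inl ENNReal.ofReal_ne_top)]
        · rw [← ENNReal.ofReal_mul (by positivity)]
          have : 2*b*c*t*t = 2*b*t^2*c := by ring
          rw [this]
          exact chord_lower hb0 hs₀ hcount K hK1 ht1.le
        · simp only [ne_eq, ENNReal.ofReal_eq_zero, not_le]
          exact htpos
      calc ENNReal.ofReal (b*c*(r^2 - t₀^2))
          = ∫⁻ t in Set.Ioc t₀ r, ENNReal.ofReal (2*b*c*t) := by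
            rw [← MeasureTheory.ofReal_integral_eq_lintegral_ofReal]
            · congr 1
              rw [← intervalIntegral.integral_of_le hrt.le]
              rw [intervalIntegral.integral_const_mul, integral_id]
              ring
            · exact (continuous_const.mul continuous_id).integrableOn_Ioc
            · refine (ae_restrict_iff' measurableSet_Ioc).2
                (Filter.Eventually.of_forall fun t ht => ?_)
              have : 0 < t := lt_trans ht₀pos ht.1
              positivity
        _ ≤ ∫⁻ t in Set.Ioc t₀ r, circChordSum Λ t / ENNReal.ofReal t :=
            setLIntegral_mono' measurableSet_Ioc hpt
        _ ≤ ∫⁻ t in Set.Ioc 0 r, circChordSum Λ t / ENNReal.ofReal t :=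
            lintegral_mono_set (Set.Ioc_subset_Ioc ht₀pos.le le_rfl)
    have hr0 : 0 < r := by linarith
    calc g r = ENNReal.ofReal (4/(Real.pi*r^2)) * ENNReal.ofReal (b*c*(r^2 - t₀^2)) := by
          rw [hgdef]
          exact ENNReal.ofReal_mul (by positivity)
      _ ≤ _ := mul_le_mul_right hIle _
  -- limit of g
  have hgtend : Filter.Tendsto g Filter.atTop (nhds (ENNReal.ofReal (4*b*c/Real.pi))) := by
    have hreal : Filter.Tendsto (fun r : ℝ => (4/(Real.pi*r^2)) * (b*c*(r^2 - t₀^2)))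
        Filter.atTop (nhds (4*b*c/Real.pi)) := by
      have h1 : Filter.Tendsto (fun r : ℝ => (r^2)⁻¹) Filter.atTop (nhds 0) :=
        Filter.Tendsto.inv_tendsto_atTop (tendsto_pow_atTop (by norm_num))
      have h2 : Filter.Tendsto (fun r : ℝ => 4*b*c/Real.pi - (4*b*c*t₀^2/Real.pi) * (r^2)⁻¹)
          Filter.atTop (nhds (4*b*c/Real.pi - (4*b*c*t₀^2/Real.pi) * 0)) :=
        (tendsto_const_nhds.sub (tendsto_const_nhds.mul h1))
      rw [mul_zero, sub_zero] at h2
      refine h2.congr' ?_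
      filter_upwards [Filter.eventually_gt_atTop (0:ℝ)] with r hr
      have : r^2 ≠ 0 := by positivity
      field_simp
    exact (ENNReal.continuous_ofReal.tendsto _).comp hreal
  -- conclude
  have hlim : ENNReal.ofReal (4*b*c/Real.pi) ≤ circDensity Λ := by
    rw [circDensity]
    calc ENNReal.ofReal (4*b*c/Real.pi) = Filter.limsup g Filter.atTop :=
          (hgtend.limsup_eq).symm
      _ ≤ _ := Filter.limsup_le_limsup hev
  refine lt_of_lt_of_le ?_ hlim
  calc (2:ℝ≥0∞) = ENNReal.ofReal 2 := by norm_num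
    _ < ENNReal.ofReal (4*b*c/Real.pi) :=
        (ENNReal.ofReal_lt_ofReal_iff (by nlinarith)).2 hmain


/-- If `D⁻(Λ) > 2` and `Λ = Λ₁ ∪ Λ₂`, then `D⁺_circ(Λ₁) > 1` or `D⁺_circ(Λ₂) > 1`. -/
theorem one_lt_circDensity_of_union (Λ Λ₁ Λ₂ : Set ℝ)
    (hΛ : 2 < lowerBeurlingDensity Λ) (hsplit : Λ = Λ₁ ∪ Λ₂) :
    1 < circDensity Λ₁ ∨ 1 < circDensity Λ₂ := by
  by_cases h1 : Λ₁.Countable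
  · by_cases h2 : Λ₂.Countable
    · -- both countable: use subadditivity
      by_contra hcon
      push_neg at hcon
      obtain ⟨hc1, hc2⟩ := hcon
      have hmain := two_lt_circDensity hΛ
      have hm1 : Measurable (fun t => circChordSum Λ₁ t / ENNReal.ofReal t) :=
        (measurable_chordSum h1).div (ENNReal.measurable_ofReal.comp measurable_id)
      have hsub : circDensity Λ ≤ circDensity Λ₁ + circDensity Λ₂ := by
        have hA : ∀ r : ℝ,
            ENNReal.ofReal (4 / (Real.pi * r ^ 2)) *
              ∫⁻ t in Set.Ioc (0 : ℝ) r, circChordSum Λ t / ENNReal.ofReal t ≤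
            (ENNReal.ofReal (4 / (Real.pi * r ^ 2)) *
              ∫⁻ t in Set.Ioc (0 : ℝ) r, circChordSum Λ₁ t / ENNReal.ofReal t) +
            (ENNReal.ofReal (4 / (Real.pi * r ^ 2)) *
              ∫⁻ t in Set.Ioc (0 : ℝ) r, circChordSum Λ₂ t / ENNReal.ofReal t) := by
          intro r
          rw [← mul_add]
          refine mul_le_mul_right ?_ _
          calc ∫⁻ t in Set.Ioc (0 : ℝ) r, circChordSum Λ t / ENNReal.ofReal t
              ≤ ∫⁻ t in Set.Ioc (0 : ℝ) r,
                  (circChordSum Λ₁ t / ENNReal.ofReal t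
                    + circChordSum Λ₂ t / ENNReal.ofReal t) := by
                refine lintegral_mono fun t => ?_
                rw [← ENNReal.add_div]
                refine ENNReal.div_le_div_right ?_ _
                rw [hsplit]
                exact chordSum_union_le Λ₁ Λ₂ t
            _ = _ := lintegral_add_left hm1 _
        calc circDensity Λ ≤ Filter.limsup (fun r : ℝ =>
              (ENNReal.ofReal (4 / (Real.pi * r ^ 2)) *
                ∫⁻ t in Set.Ioc (0 : ℝ) r, circChordSum Λ₁ t / ENNReal.ofReal t) +
              (ENNReal.ofReal (4 / (Real.pi * r ^ 2)) *
                ∫⁻ t in Set.Ioc (0 : ℝ) r, circChordSum Λ₂ t / ENNReal.ofReal t))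
              Filter.atTop :=
            Filter.limsup_le_limsup (Filter.Eventually.of_forall hA)
          _ ≤ _ := my_limsup_add_le _ _
      have : circDensity Λ ≤ 2 := by
        calc circDensity Λ ≤ circDensity Λ₁ + circDensity Λ₂ := hsub
          _ ≤ 1 + 1 := add_le_add hc1 hc2
          _ = 2 := one_add_one_eq_two
      exact absurd hmain (not_lt.2 this)
    · right
      rw [circDensity_eq_top h2]
      exact ENNReal.one_lt_top
  · left
    rw [circDensity_eq_top h1]
    exact ENNReal.one_lt_top
end

section
/- Let a > 0 and Λ ⊆ ℝ. Let F : ℂ → ℂ be entire, not identically zero, and suppose F(λ + i(π/a)k) = 0 for every λ ∈ Λ∖{0} and every k ∈ ℤ. Let n_F(t) = #{z ∈ ℂ : F(z) = 0, |z| ≤ t} (zeros counted without multiplicity). Then limsup_{r→∞} (1/r²) ∫₀^r n_F(t)/t dt ≥ (a/2) D⁺_circ(Λ). -/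
open MeasureTheory Filter Set
open scoped ENNReal Topology

lemma aux_sum_encard_le {ι : Type*} (J : Finset ι) (g : ι → Set ℂ) :
    ∀ (Z : Set ℂ), (∀ i ∈ J, g i ⊆ Z) →
    (∀ i ∈ J, ∀ j ∈ J, i ≠ j → Disjoint (g i) (g j)) →
    ∑ i ∈ J, ((g i).encard : ℝ≥0∞) ≤ (Z.encard : ℝ≥0∞) := by
  induction J using Finset.cons_induction with
  | empty => intro Z _ _; simp
  | cons a J ha IH =>
    intro Z hsub hdisj
    rw [Finset.sum_cons]
    have h1 : ∑ i ∈ J, ((g i).encard : ℝ≥0∞) ≤ ((Z \ g a).encard : ℝ≥0∞) := by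
      refine IH _ (fun i hi => ?_)
        (fun i hi j hj hij => hdisj i (Finset.mem_cons_of_mem hi) j (Finset.mem_cons_of_mem hj) hij)
      have hd := hdisj a (Finset.mem_cons_self a J) i (Finset.mem_cons_of_mem hi)
        (by rintro rfl; exact ha hi)
      exact subset_diff.2 ⟨hsub i (Finset.mem_cons_of_mem hi), hd.symm⟩
    calc ((g a).encard : ℝ≥0∞) + ∑ i ∈ J, ((g i).encard : ℝ≥0∞)
        ≤ ((g a).encard : ℝ≥0∞) + ((Z \ g a).encard : ℝ≥0∞) := by gcongr
      _ = (((g a) ∪ (Z \ g a)).encard : ℝ≥0∞) := by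
          rw [Set.encard_union_eq disjoint_sdiff_right, ENat.toENNReal_add]
      _ ≤ _ := by
          have h2 : (g a) ∪ (Z \ g a) ⊆ Z :=
            union_subset (hsub a (Finset.mem_cons_self a J)) diff_subset
          exact ENat.toENNReal_le.2 (Set.encard_mono h2)

lemma aux_finite_zeros {F : ℂ → ℂ} (hF : Differentiable ℂ F) (hF0 : F ≠ 0) (u : ℝ) :
    {z : ℂ | F z = 0 ∧ ‖z‖ ≤ u}.Finite := by
  by_contra h
  replace h : {z : ℂ | F z = 0 ∧ ‖z‖ ≤ u}.Infinite := h
  obtain ⟨z₀, -, hacc⟩ := h.exists_accPt_of_subset_isCompact (isCompact_closedBall (0:ℂ) u)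
    (fun z hz => by simpa [Metric.mem_closedBall, Complex.dist_eq] using hz.2)
  have hfreq : ∃ᶠ z in 𝓝[≠] z₀, F z = 0 := by
    have h2 : ∃ᶠ z in 𝓝[≠] z₀, z ∈ {z : ℂ | F z = 0 ∧ ‖z‖ ≤ u} :=
      frequently_mem_iff_neBot.2 hacc
    exact h2.mono fun z hz => hz.1
  have hev : ∀ᶠ z in 𝓝 z₀, F z = 0 :=
    ((hF.analyticAt z₀).frequently_zero_iff_eventually_zero).1 hfreq
  have heq : EqOn F 0 univ :=
    AnalyticOnNhd.eqOn_zero_of_preconnected_of_eventuallyEq_zero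
      (fun z _ => hF.analyticAt z) isPreconnected_univ (mem_univ z₀) hev
  exact hF0 (funext fun z => heq (mem_univ z))


lemma aux_line_count (a : ℝ) (ha : 0 < a) {F : ℂ → ℂ} {Λ : Set ℝ}
    (hzero : ∀ lam ∈ Λ \ {0}, ∀ k : ℤ,
      F ((lam : ℂ) + Complex.I * ((Real.pi / a : ℝ) : ℂ) * (k : ℂ)) = 0)
    {lam t s : ℝ} (hlam : lam ∈ Λ \ {0}) (hmem : lam ∈ Icc (-t) t) (hts : t ≤ s)
    (hgap : Real.pi / a ≤ (s^2 - t^2) / (2*s)) (ht : 0 < t) :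
    ENNReal.ofReal (2*a/Real.pi * Real.sqrt (t^2 - lam^2))
      ≤ ({z : ℂ | F z = 0 ∧ ‖z‖ ≤ s ∧ z.re = lam}.encard : ℝ≥0∞) := by
  have hπ : 0 < Real.pi := Real.pi_pos
  set c : ℝ := Real.pi / a with hc_def
  have hc : 0 < c := div_pos hπ ha
  have hs : 0 < s := lt_of_lt_of_le ht hts
  set A : ℝ := Real.sqrt (t^2 - lam^2) with hA_def
  set B : ℝ := Real.sqrt (s^2 - lam^2) with hB_def
  have hlam2 : lam^2 ≤ t^2 := sq_le_sq' hmem.1 hmem.2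
  have hts2 : t^2 ≤ s^2 := by nlinarith
  have hA2 : A^2 = t^2 - lam^2 := Real.sq_sqrt (by linarith)
  have hB2 : B^2 = s^2 - lam^2 := Real.sq_sqrt (by linarith)
  have hA0 : 0 ≤ A := Real.sqrt_nonneg _
  have hB0 : 0 ≤ B := Real.sqrt_nonneg _
  have hAB : A ≤ B := Real.sqrt_le_sqrt (by linarith)
  have hAt : A ≤ t := by
    calc A ≤ Real.sqrt (t^2) := Real.sqrt_le_sqrt (by nlinarith [sq_nonneg lam])
    _ = t := Real.sqrt_sq ht.le
  have hBs : B ≤ s := by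
    calc B ≤ Real.sqrt (s^2) := Real.sqrt_le_sqrt (by nlinarith [sq_nonneg lam])
    _ = s := Real.sqrt_sq hs.le
  have hgap' : c * (2*s) ≤ s^2 - t^2 := by
    rw [le_div_iff₀ (by linarith : (0:ℝ) < 2*s)] at hgap
    linarith
  have hgain : A + c ≤ B := by
    nlinarith [mul_nonneg (sub_nonneg.2 hAB) (by linarith : (0:ℝ) ≤ 2*s - (A+B))]
  have hca : a / Real.pi * c = 1 := by
    rw [hc_def]; field_simp
  have hx'x : a/Real.pi * A + 1 ≤ a/Real.pi * B := by
    have h1 : a/Real.pi * (A + c) ≤ a/Real.pi * B :=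
      mul_le_mul_of_nonneg_left hgain (by positivity)
    nlinarith
  set K : ℤ := ⌊a/Real.pi * B⌋ with hK_def
  have hK1 : (1:ℤ) ≤ K := Int.le_floor.2 (by push_cast; nlinarith [mul_nonneg (by positivity : (0:ℝ) ≤ a/Real.pi) hA0])
  have hKx : (K:ℝ) ≤ a/Real.pi * B := Int.floor_le _
  have hxK : a/Real.pi * A ≤ (K:ℝ) := by
    have h2 := Int.sub_one_lt_floor (a/Real.pi * B)
    linarith
  set f : ℤ → ℂ := fun k => (lam:ℂ) + Complex.I * ((c : ℝ) : ℂ) * (k : ℂ) with hf_def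
  have himage : f '' ↑(Finset.Icc (-K) K) ⊆
      {z : ℂ | F z = 0 ∧ ‖z‖ ≤ s ∧ z.re = lam} := by
    rintro - ⟨k, hk, rfl⟩
    simp only [Finset.coe_Icc, Set.mem_Icc] at hk
    have hk' : |(k:ℝ)| ≤ (K:ℝ) := by
      rw [abs_le]
      constructor
      · have := hk.1; push_cast; exact_mod_cast this
      · exact_mod_cast hk.2
    refine ⟨hzero lam hlam k, ?_, by simp [hf_def]⟩
    have hck : |c * k| ≤ B := by
      rw [abs_mul, abs_of_pos hc]
      calc c * |(k:ℝ)| ≤ c * (a/Real.pi * B) := by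
            refine mul_le_mul_of_nonneg_left (hk'.trans hKx) hc.le
      _ = (a/Real.pi * c) * B := by ring
      _ = B := by rw [hca, one_mul]
    have hck2 : (c*k)^2 ≤ B^2 := sq_le_sq' (by linarith [abs_le.1 hck]) (by linarith [abs_le.1 hck])
    have him : (f k).im = c * k := by simp [hf_def]
    have hre : (f k).re = lam := by simp [hf_def]
    rw [Complex.norm_def, Complex.normSq_apply, hre, him]
    calc Real.sqrt (lam * lam + c * k * (c * k)) ≤ Real.sqrt (s^2) := by
          apply Real.sqrt_le_sqrt
          have e1 : lam * lam + c * ↑k * (c * ↑k) = lam^2 + (c*↑k)^2 := by ring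
          rw [e1]
          linarith
    _ = s := Real.sqrt_sq hs.le
  have hinj : Set.InjOn f ↑(Finset.Icc (-K) K) := by
    intro k _ k' _ h
    have h2 : Complex.I * ((c:ℝ):ℂ) * (k:ℂ) = Complex.I * ((c:ℝ):ℂ) * (k':ℂ) := by
      simpa [hf_def] using h
    have h3 : (k:ℂ) = (k':ℂ) :=
      mul_left_cancel₀ (mul_ne_zero Complex.I_ne_zero (Complex.ofReal_ne_zero.2 hc.ne')) h2
    exact_mod_cast h3
  have hcard : (f '' ↑(Finset.Icc (-K) K)).encard = ((2*K+1).toNat : ℕ∞) := by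
    rw [hinj.encard_image, Set.encard_coe_eq_coe_finsetCard, Int.card_Icc]
    have h6 : (K + 1 - -K).toNat = (2*K+1).toNat := by omega
    rw [h6]
  calc ENNReal.ofReal (2*a/Real.pi * A)
      ≤ (((2*K+1).toNat : ℕ) : ℝ≥0∞) := by
        rw [← ENNReal.ofReal_natCast]
        apply ENNReal.ofReal_le_ofReal
        have h4 : (((2*K+1).toNat : ℕ) : ℝ) = ((2*K+1 : ℤ) : ℝ) := by
          exact_mod_cast congrArg (Int.cast : ℤ → ℝ)
            (Int.toNat_of_nonneg (show (0:ℤ) ≤ 2*K+1 by omega))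
        rw [h4]
        push_cast
        have h5 : 2*a/Real.pi * A = 2*(a/Real.pi*A) := by ring
        linarith
    _ = ((f '' ↑(Finset.Icc (-K) K)).encard : ℝ≥0∞) := by rw [hcard, ENat.toENNReal_coe]
    _ ≤ _ := ENat.toENNReal_le.2 (Set.encard_mono himage)


lemma aux_key (a : ℝ) (ha : 0 < a) {F : ℂ → ℂ} {Λ : Set ℝ}
    (hzero : ∀ lam ∈ Λ \ {0}, ∀ k : ℤ,
      F ((lam : ℂ) + Complex.I * ((Real.pi / a : ℝ) : ℂ) * (k : ℂ)) = 0)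
    {t s : ℝ} (ht : 0 < t) (hts : t ≤ s)
    (hgap : Real.pi / a ≤ (s^2 - t^2) / (2*s))
    (hfin : ((Λ \ {0}) ∩ Icc (-t) t).Finite) :
    ENNReal.ofReal (2*a/Real.pi) * circChordSum (Λ \ {0}) t
      ≤ ({z : ℂ | F z = 0 ∧ ‖z‖ ≤ s}.encard : ℝ≥0∞) := by
  classical
  haveI : Fintype ((Λ \ {0}) ∩ Icc (-t) t : Set ℝ) := hfin.fintype
  rw [circChordSum, ← ENNReal.tsum_mul_left]
  have h2a : (0:ℝ) ≤ 2*a/Real.pi := div_nonneg (by linarith) Real.pi_pos.le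
  calc ∑' lam : ((Λ \ {0}) ∩ Icc (-t) t : Set ℝ),
        ENNReal.ofReal (2*a/Real.pi) * ENNReal.ofReal (Real.sqrt (t ^ 2 - (lam:ℝ) ^ 2))
      ≤ ∑' lam : ((Λ \ {0}) ∩ Icc (-t) t : Set ℝ),
        (({z : ℂ | F z = 0 ∧ ‖z‖ ≤ s ∧ z.re = (lam:ℝ)}).encard : ℝ≥0∞) := by
        refine ENNReal.tsum_le_tsum fun lam => ?_
        rw [← ENNReal.ofReal_mul h2a]
        exact aux_line_count a ha hzero lam.2.1 lam.2.2 hts hgap ht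
    _ = ∑ lam : ((Λ \ {0}) ∩ Icc (-t) t : Set ℝ),
        (({z : ℂ | F z = 0 ∧ ‖z‖ ≤ s ∧ z.re = (lam:ℝ)}).encard : ℝ≥0∞) :=
        tsum_fintype _
    _ ≤ _ := by
        refine aux_sum_encard_le Finset.univ _ _ (fun i _ => fun z hz => ⟨hz.1, hz.2.1⟩)
          (fun i _ j _ hij => ?_)
        refine Set.disjoint_left.2 fun z hzi hzj => ?_
        exact hij (Subtype.coe_injective (hzi.2.2.symm.trans hzj.2.2))

lemma aux_chord_split (Λ : Set ℝ) {t : ℝ} (ht : 0 ≤ t) :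
    circChordSum Λ t ≤ circChordSum (Λ \ {0}) t + ENNReal.ofReal t := by
  set f : ℝ → ℝ≥0∞ := fun lam => ENNReal.ofReal (Real.sqrt (t ^ 2 - lam ^ 2)) with hf
  have key : ∀ x : ℝ, (Λ ∩ Icc (-t) t).indicator f x ≤
      ((Λ \ {0}) ∩ Icc (-t) t).indicator f x + ({0} : Set ℝ).indicator f x := by
    intro x
    by_cases hx : x ∈ Λ ∩ Icc (-t) t
    · rw [Set.indicator_of_mem hx]
      by_cases hx0 : x = 0
      · subst hx0
        rw [Set.indicator_of_mem (mem_singleton _)]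
        exact le_add_self
      · rw [Set.indicator_of_mem (show x ∈ (Λ \ {0}) ∩ Icc (-t) t from ⟨⟨hx.1, hx0⟩, hx.2⟩) f]
        exact le_self_add
    · rw [Set.indicator_of_notMem hx]
      exact zero_le
  calc circChordSum Λ t = ∑' x : ℝ, (Λ ∩ Icc (-t) t).indicator f x := tsum_subtype _ f
    _ ≤ ∑' x : ℝ, (((Λ \ {0}) ∩ Icc (-t) t).indicator f x + ({0} : Set ℝ).indicator f x) :=
        ENNReal.tsum_le_tsum key
    _ = ∑' x : ℝ, ((Λ \ {0}) ∩ Icc (-t) t).indicator f x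
        + ∑' x : ℝ, ({0} : Set ℝ).indicator f x := ENNReal.tsum_add
    _ ≤ circChordSum (Λ \ {0}) t + ENNReal.ofReal t := by
        gcongr
        · exact le_of_eq (tsum_subtype _ f).symm
        · rw [← tsum_subtype ({0} : Set ℝ) f, tsum_singleton]
          simp only [hf]
          apply ENNReal.ofReal_le_ofReal
          have h7 : Real.sqrt (t^2 - (0:ℝ)^2) = t := by
            rw [zero_pow (by norm_num), sub_zero, Real.sqrt_sq ht]
          exact le_of_eq h7

lemma aux_tail (Λ : Set ℝ) {t T : ℝ} (h0 : 0 < t) (htT : t ≤ T) :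
    circChordSum (Λ \ {0}) t / ENNReal.ofReal t
      ≤ (((Λ \ {0}) ∩ Icc (-T) T).encard : ℝ≥0∞) := by
  rw [ENNReal.div_le_iff (by simpa using h0) ENNReal.ofReal_ne_top]
  calc circChordSum (Λ \ {0}) t
      ≤ ∑' _ : ((Λ \ {0}) ∩ Icc (-t) t : Set ℝ), ENNReal.ofReal t := by
        refine ENNReal.tsum_le_tsum fun lam => ENNReal.ofReal_le_ofReal ?_
        calc Real.sqrt (t^2 - (lam:ℝ)^2) ≤ Real.sqrt (t^2) :=
              Real.sqrt_le_sqrt (by nlinarith [sq_nonneg (lam:ℝ)])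
        _ = t := Real.sqrt_sq h0.le
    _ = (((Λ \ {0}) ∩ Icc (-t) t).encard : ℝ≥0∞) * ENNReal.ofReal t :=
        ENNReal.tsum_set_const _ _
    _ ≤ (((Λ \ {0}) ∩ Icc (-T) T).encard : ℝ≥0∞) * ENNReal.ofReal t := by
        gcongr


lemma aux_scale {θ : ℝ} (hθ : 0 < θ) {g : ℝ → ℝ≥0∞} (hg : Measurable g) (r : ℝ) :
    ∫⁻ t in Ioc (0:ℝ) r, g (θ * t) = ENNReal.ofReal θ⁻¹ * ∫⁻ u in Ioc (0:ℝ) (θ*r), g u := by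
  have hpre : (θ * ·) ⁻¹' (Ioc (0:ℝ) (θ*r)) = Ioc 0 r := by
    ext x
    simp only [Set.mem_preimage, Set.mem_Ioc]
    constructor
    · rintro ⟨h1, h2⟩
      exact ⟨by nlinarith, le_of_mul_le_mul_left h2 hθ⟩
    · rintro ⟨h1, h2⟩
      exact ⟨mul_pos hθ h1, mul_le_mul_of_nonneg_left h2 hθ.le⟩
  calc ∫⁻ t in Ioc (0:ℝ) r, g (θ * t)
      = ∫⁻ u, g u ∂(Measure.map (θ * ·) (volume.restrict (Ioc 0 r))) :=
        (lintegral_map hg (measurable_const_mul θ)).symm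
    _ = ∫⁻ u, g u ∂((Measure.map (θ * ·) volume).restrict (Ioc 0 (θ*r))) := by
        rw [Measure.restrict_map (measurable_const_mul θ) measurableSet_Ioc, hpre]
    _ = ENNReal.ofReal θ⁻¹ * ∫⁻ u in Ioc (0:ℝ) (θ*r), g u := by
        rw [Real.map_volume_mul_left hθ.ne', Measure.restrict_smul, lintegral_smul_measure,
          abs_of_pos (inv_pos.2 hθ), smul_eq_mul]

lemma aux_limsup_const_add {ι : Type*} (F : Filter ι) [F.NeBot] (f : ι → ℝ≥0∞) (c : ℝ≥0∞) :
    Filter.limsup (fun i => c + f i) F = c + Filter.limsup f F :=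
  (Monotone.map_limsSup_of_continuousAt (F := F.map f) (f := fun x : ℝ≥0∞ => c + x)
    (fun _ _ h => add_le_add_right h c) (continuous_add_left c).continuousAt).symm

lemma aux_limsup_comp_mul {θ : ℝ} (hθ : 0 < θ) (A : ℝ → ℝ≥0∞) :
    Filter.limsup (fun r => A (θ * r)) Filter.atTop = Filter.limsup A Filter.atTop := by
  have hco : ⇑(OrderIso.mulLeft₀ θ hθ) = fun r : ℝ => θ * r := rfl
  have h : Filter.map (fun r : ℝ => θ * r) Filter.atTop = Filter.atTop := by
    rw [← hco]; exact (OrderIso.mulLeft₀ θ hθ).map_atTop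
  conv_rhs => rw [← h]
  simp only [Filter.limsup, Filter.map_map]
  rfl


set_option maxHeartbeats 2000000 in
/-- If `F` is entire, not identically zero, and vanishes on `(Λ∖{0}) + i(π/a)ℤ`, then
`limsup_{r→∞} (1/r²) ∫₀^r n_F(t)/t dt ≥ (a/2) D⁺_circ(Λ)`. -/
theorem circDensity_le_limsup_zero_counting (a : ℝ) (ha : 0 < a) (Λ : Set ℝ)
    (F : ℂ → ℂ) (hF : Differentiable ℂ F) (hF0 : F ≠ 0)
    (hzero : ∀ lam ∈ Λ \ {0}, ∀ k : ℤ,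
      F ((lam : ℂ) + Complex.I * ((Real.pi / a : ℝ) : ℂ) * (k : ℂ)) = 0) :
    ENNReal.ofReal (a / 2) * circDensity Λ ≤
      Filter.limsup (fun r : ℝ =>
        ENNReal.ofReal (1 / r ^ 2) *
          ∫⁻ t in Set.Ioc (0 : ℝ) r,
            (({z : ℂ | F z = 0 ∧ ‖z‖ ≤ t}.encard : ℝ≥0∞)) / ENNReal.ofReal t)
        Filter.atTop := by
  have hπ : (0:ℝ) < Real.pi := Real.pi_pos
  set N : ℝ → ℝ≥0∞ := fun u => ({z : ℂ | F z = 0 ∧ ‖z‖ ≤ u}.encard : ℝ≥0∞)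
    with hN_def
  set g : ℝ → ℝ≥0∞ := fun u => N u / ENNReal.ofReal u with hg_def
  set A : ℝ → ℝ≥0∞ :=
    fun r => ENNReal.ofReal (1 / r ^ 2) * ∫⁻ t in Set.Ioc (0:ℝ) r, g t with hA_def
  set R := Filter.limsup A Filter.atTop with hR_def
  have hNmono : Monotone N := fun u v huv =>
    ENat.toENNReal_le.2 (Set.encard_mono fun z hz => ⟨hz.1, hz.2.trans huv⟩)
  have hNmeas : Measurable N := hNmono.measurable
  have hgmeas : Measurable g := hNmeas.div ENNReal.measurable_ofReal
  have hfinI : ∀ T : ℝ, ((Λ \ {0}) ∩ Icc (-T) T).Finite := by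
    intro T
    have hsub : (Λ \ {0}) ∩ Icc (-T) T ⊆
        (fun x : ℝ => (x:ℂ)) ⁻¹' {z : ℂ | F z = 0 ∧ ‖z‖ ≤ T} := by
      rintro lam ⟨hl, hmem⟩
      refine ⟨?_, ?_⟩
      · have h0 := hzero lam hl 0
        simpa using h0
      · rw [Complex.norm_real, Real.norm_eq_abs]
        exact abs_le.2 ⟨hmem.1, hmem.2⟩
    exact (((aux_finite_zeros hF hF0 T).preimage Complex.ofReal_injective.injOn)).subset hsub
  suffices key : ∀ θ : ℝ, 1 < θ →
      Filter.limsup (fun r : ℝ => ENNReal.ofReal (a/2) *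
        (ENNReal.ofReal (4 / (Real.pi * r ^ 2)) *
          ∫⁻ t in Set.Ioc (0:ℝ) r, circChordSum Λ t / ENNReal.ofReal t)) Filter.atTop
        ≤ ENNReal.ofReal (θ^2) * R by
    rw [show circDensity Λ = Filter.limsup (fun r : ℝ =>
        ENNReal.ofReal (4 / (Real.pi * r ^ 2)) *
          ∫⁻ t in Set.Ioc (0:ℝ) r, circChordSum Λ t / ENNReal.ofReal t) Filter.atTop from rfl,
      ← ENNReal.limsup_const_mul_of_ne_top ENNReal.ofReal_ne_top]
    have htend : Filter.Tendsto (fun θ : ℝ => ENNReal.ofReal (θ^2) * R) (𝓝[>] (1:ℝ))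
        (𝓝 (ENNReal.ofReal ((1:ℝ)^2) * R)) := by
      apply Filter.Tendsto.mono_left ?_ nhdsWithin_le_nhds
      exact ENNReal.Tendsto.mul_const
        (ENNReal.tendsto_ofReal ((continuous_pow 2).tendsto (1:ℝ))) (Or.inl (by simp))
    rw [one_pow, ENNReal.ofReal_one, one_mul] at htend
    exact ge_of_tendsto htend (eventually_nhdsWithin_of_forall fun θ hθ => key θ hθ)
  intro θ hθ
  have hθ0 : (0:ℝ) < θ := lt_trans one_pos hθ
  have hθ2 : (0:ℝ) < θ^2 - 1 := by nlinarith
  set c : ℝ := Real.pi / a with hc_def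
  have hc : 0 < c := div_pos hπ ha
  set T : ℝ := max 1 (2*θ*c/(θ^2-1)) with hT_def
  have hT1 : (1:ℝ) ≤ T := le_max_left _ _
  have hT0 : (0:ℝ) < T := lt_of_lt_of_le one_pos hT1
  set M : ℝ≥0∞ := (((Λ \ {0}) ∩ Icc (-T) T).encard : ℝ≥0∞) with hM_def
  have hM_ne_top : M ≠ ⊤ := by
    rw [hM_def, (hfinI T).encard_eq_coe_toFinset_card]
    rw [ENat.toENNReal_coe]
    exact ENNReal.natCast_ne_top _
  set Ec : ℝ≥0∞ := ENNReal.ofReal (2*a/Real.pi) * (M * ENNReal.ofReal T) with hEc_def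
  have hEc_ne_top : Ec ≠ ⊤ :=
    ENNReal.mul_ne_top ENNReal.ofReal_ne_top (ENNReal.mul_ne_top hM_ne_top ENNReal.ofReal_ne_top)
  set e : ℝ → ℝ≥0∞ := fun r => ENNReal.ofReal (1/r^2) * Ec
      + ENNReal.ofReal (2*a/Real.pi) * ENNReal.ofReal (1/r) with he_def
  have h2aπ : (0:ℝ) ≤ 2*a/Real.pi := by positivity
  -- eventual bound
  have hev : ∀ᶠ r in Filter.atTop, ENNReal.ofReal (a/2) *
      (ENNReal.ofReal (4 / (Real.pi * r ^ 2)) *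
        ∫⁻ t in Set.Ioc (0:ℝ) r, circChordSum Λ t / ENNReal.ofReal t)
      ≤ e r + ENNReal.ofReal (θ^2) * A (θ*r) := by
    filter_upwards [Filter.eventually_ge_atTop (max T 1)] with r hr
    have hrT : T ≤ r := le_trans (le_max_left _ _) hr
    have hr1 : (1:ℝ) ≤ r := le_trans (le_max_right _ _) hr
    have hr0 : (0:ℝ) < r := lt_of_lt_of_le one_pos hr1
    have hcoef : ENNReal.ofReal (a/2) * ENNReal.ofReal (4/(Real.pi * r^2))
        = ENNReal.ofReal (1/r^2) * ENNReal.ofReal (2*a/Real.pi) := by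
      rw [← ENNReal.ofReal_mul (by linarith), ← ENNReal.ofReal_mul (by positivity)]
      congr 1
      field_simp
      ring
    have h2 : ∀ t ∈ Set.Ioc (0:ℝ) r, circChordSum Λ t / ENNReal.ofReal t ≤
        circChordSum (Λ \ {0}) t / ENNReal.ofReal t + 1 := by
      intro t ht
      calc circChordSum Λ t / ENNReal.ofReal t
          ≤ (circChordSum (Λ \ {0}) t + ENNReal.ofReal t) / ENNReal.ofReal t := by
            gcongr
            exact aux_chord_split Λ ht.1.le
        _ = circChordSum (Λ \ {0}) t / ENNReal.ofReal t + ENNReal.ofReal t / ENNReal.ofReal t :=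
            ENNReal.add_div
        _ ≤ circChordSum (Λ \ {0}) t / ENNReal.ofReal t + 1 := by
            gcongr
            exact ENNReal.div_self_le_one
    have hIsplit : ∫⁻ t in Set.Ioc (0:ℝ) r, circChordSum (Λ \ {0}) t / ENNReal.ofReal t
        ≤ M * ENNReal.ofReal T
          + ∫⁻ t in Set.Ioc T r, circChordSum (Λ \ {0}) t / ENNReal.ofReal t := by
      calc ∫⁻ t in Set.Ioc (0:ℝ) r, circChordSum (Λ \ {0}) t / ENNReal.ofReal t
          ≤ ∫⁻ t in (Set.Ioc (0:ℝ) T ∪ Set.Ioc T r),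
              circChordSum (Λ \ {0}) t / ENNReal.ofReal t := by
            apply lintegral_mono_set
            intro x hx
            rcases le_or_gt x T with h | h
            · exact Or.inl ⟨hx.1, h⟩
            · exact Or.inr ⟨h, hx.2⟩
        _ ≤ (∫⁻ t in Set.Ioc (0:ℝ) T, circChordSum (Λ \ {0}) t / ENNReal.ofReal t)
            + ∫⁻ t in Set.Ioc T r, circChordSum (Λ \ {0}) t / ENNReal.ofReal t :=
            lintegral_union_le _ _ _
        _ ≤ M * ENNReal.ofReal T
            + ∫⁻ t in Set.Ioc T r, circChordSum (Λ \ {0}) t / ENNReal.ofReal t := by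
            gcongr
            calc ∫⁻ t in Set.Ioc (0:ℝ) T, circChordSum (Λ \ {0}) t / ENNReal.ofReal t
                ≤ ∫⁻ _ in Set.Ioc (0:ℝ) T, M :=
                  setLIntegral_mono' measurableSet_Ioc (fun t ht => aux_tail Λ ht.1 ht.2)
              _ = M * volume (Set.Ioc (0:ℝ) T) := setLIntegral_const _ _
              _ = M * ENNReal.ofReal T := by rw [Real.volume_Ioc, sub_zero]
    have hmain : ENNReal.ofReal (2*a/Real.pi) *
        ∫⁻ t in Set.Ioc T r, circChordSum (Λ \ {0}) t / ENNReal.ofReal t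
        ≤ ∫⁻ u in Set.Ioc (0:ℝ) (θ*r), g u := by
      calc ENNReal.ofReal (2*a/Real.pi) *
          ∫⁻ t in Set.Ioc T r, circChordSum (Λ \ {0}) t / ENNReal.ofReal t
          = ∫⁻ t in Set.Ioc T r,
              ENNReal.ofReal (2*a/Real.pi) * (circChordSum (Λ \ {0}) t / ENNReal.ofReal t) :=
            (lintegral_const_mul' _ _ ENNReal.ofReal_ne_top).symm
        _ ≤ ∫⁻ t in Set.Ioc T r, N (θ*t) / ENNReal.ofReal t := by
            refine setLIntegral_mono' measurableSet_Ioc (fun t ht => ?_)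
            have ht0 : 0 < t := lt_trans hT0 ht.1
            rw [← mul_div_assoc]
            gcongr
            refine aux_key a ha hzero ht0 (by nlinarith) ?_ (hfinI t)
            have h2θt : (0:ℝ) < 2*(θ*t) := by positivity
            rw [le_div_iff₀ h2θt]
            have htT' : 2*θ*c/(θ^2-1) ≤ t := le_trans (le_max_right 1 _) (le_of_lt ht.1)
            rw [div_le_iff₀ hθ2] at htT'
            nlinarith [mul_le_mul_of_nonneg_right htT' ht0.le]
        _ ≤ ∫⁻ t in Set.Ioc (0:ℝ) r, N (θ*t) / ENNReal.ofReal t :=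
            lintegral_mono_set (Set.Ioc_subset_Ioc_left hT0.le)
        _ = ∫⁻ t in Set.Ioc (0:ℝ) r, ENNReal.ofReal θ * g (θ*t) := by
            refine setLIntegral_congr_fun measurableSet_Ioc (fun t ht => ?_)
            show N (θ*t) / ENNReal.ofReal t
              = ENNReal.ofReal θ * (N (θ*t) / ENNReal.ofReal (θ*t))
            rw [ENNReal.ofReal_mul hθ0.le, ← mul_div_assoc]
            exact (ENNReal.mul_div_mul_left _ _ (ENNReal.ofReal_pos.2 hθ0).ne'
              ENNReal.ofReal_ne_top).symm
        _ = ENNReal.ofReal θ * ∫⁻ t in Set.Ioc (0:ℝ) r, g (θ*t) :=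
            lintegral_const_mul' _ _ ENNReal.ofReal_ne_top
        _ = ENNReal.ofReal θ * (ENNReal.ofReal θ⁻¹ * ∫⁻ u in Set.Ioc (0:ℝ) (θ*r), g u) := by
            rw [aux_scale hθ0 hgmeas]
        _ = ∫⁻ u in Set.Ioc (0:ℝ) (θ*r), g u := by
            rw [← mul_assoc, ← ENNReal.ofReal_mul hθ0.le, mul_inv_cancel₀ hθ0.ne',
              ENNReal.ofReal_one, one_mul]
    have e1 : ENNReal.ofReal (1/r^2) * (ENNReal.ofReal (2*a/Real.pi) * ENNReal.ofReal r)
        = ENNReal.ofReal (2*a/Real.pi) * ENNReal.ofReal (1/r) := by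
      rw [← ENNReal.ofReal_mul h2aπ, ← ENNReal.ofReal_mul (by positivity),
        ← ENNReal.ofReal_mul h2aπ]
      congr 1
      field_simp
    have e2 : ENNReal.ofReal (1/r^2) * ∫⁻ u in Set.Ioc (0:ℝ) (θ*r), g u
        = ENNReal.ofReal (θ^2) * A (θ*r) := by
      have hh : ENNReal.ofReal (1/r^2)
          = ENNReal.ofReal (θ^2) * ENNReal.ofReal (1/(θ*r)^2) := by
        rw [← ENNReal.ofReal_mul (by positivity)]
        congr 1
        field_simp
      calc ENNReal.ofReal (1/r^2) * ∫⁻ u in Set.Ioc (0:ℝ) (θ*r), g u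
          = ENNReal.ofReal (θ^2) *
            (ENNReal.ofReal (1/(θ*r)^2) * ∫⁻ u in Set.Ioc (0:ℝ) (θ*r), g u) := by
            rw [hh, mul_assoc]
        _ = ENNReal.ofReal (θ^2) * A (θ*r) := rfl
    calc ENNReal.ofReal (a/2) *
        (ENNReal.ofReal (4 / (Real.pi * r ^ 2)) *
          ∫⁻ t in Set.Ioc (0:ℝ) r, circChordSum Λ t / ENNReal.ofReal t)
        = ENNReal.ofReal (1/r^2) * (ENNReal.ofReal (2*a/Real.pi) *
            ∫⁻ t in Set.Ioc (0:ℝ) r, circChordSum Λ t / ENNReal.ofReal t) := by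
          rw [← mul_assoc, hcoef, mul_assoc]
      _ ≤ ENNReal.ofReal (1/r^2) * (ENNReal.ofReal (2*a/Real.pi) *
            ∫⁻ t in Set.Ioc (0:ℝ) r,
              (circChordSum (Λ \ {0}) t / ENNReal.ofReal t + 1)) := by
          exact mul_le_mul_right (mul_le_mul_right
            (setLIntegral_mono' measurableSet_Ioc h2) _) _
      _ = ENNReal.ofReal (1/r^2) * (ENNReal.ofReal (2*a/Real.pi) *
            ((∫⁻ t in Set.Ioc (0:ℝ) r, circChordSum (Λ \ {0}) t / ENNReal.ofReal t)
              + ENNReal.ofReal r)) := by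
          rw [lintegral_add_right _ measurable_const, setLIntegral_one, Real.volume_Ioc, sub_zero]
      _ ≤ ENNReal.ofReal (1/r^2) * (ENNReal.ofReal (2*a/Real.pi) *
            ((M * ENNReal.ofReal T
              + ∫⁻ t in Set.Ioc T r, circChordSum (Λ \ {0}) t / ENNReal.ofReal t)
              + ENNReal.ofReal r)) := by
          gcongr
      _ = ENNReal.ofReal (1/r^2) * Ec
          + ENNReal.ofReal (1/r^2) * (ENNReal.ofReal (2*a/Real.pi) * ENNReal.ofReal r)
          + ENNReal.ofReal (1/r^2) * (ENNReal.ofReal (2*a/Real.pi) *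
              ∫⁻ t in Set.Ioc T r, circChordSum (Λ \ {0}) t / ENNReal.ofReal t) := by
          rw [hEc_def]; ring
      _ ≤ ENNReal.ofReal (1/r^2) * Ec
          + ENNReal.ofReal (1/r^2) * (ENNReal.ofReal (2*a/Real.pi) * ENNReal.ofReal r)
          + ENNReal.ofReal (1/r^2) * ∫⁻ u in Set.Ioc (0:ℝ) (θ*r), g u := by
          gcongr
      _ = e r + ENNReal.ofReal (θ^2) * A (θ*r) := by
          rw [he_def]
          simp only []
          rw [e1, e2]
  calc Filter.limsup (fun r : ℝ => ENNReal.ofReal (a/2) *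
        (ENNReal.ofReal (4 / (Real.pi * r ^ 2)) *
          ∫⁻ t in Set.Ioc (0:ℝ) r, circChordSum Λ t / ENNReal.ofReal t)) Filter.atTop
      ≤ Filter.limsup (fun r => e r + ENNReal.ofReal (θ^2) * A (θ*r)) Filter.atTop :=
        Filter.limsup_le_limsup hev
    _ ≤ ENNReal.ofReal (θ^2) * R := by
      apply ENNReal.le_of_forall_pos_le_add
      intro ε hε hlt
      have htend_e : Filter.Tendsto e Filter.atTop (𝓝 0) := by
        have t1 : Filter.Tendsto (fun r : ℝ => 1/r^2) Filter.atTop (𝓝 0) := by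
          simpa [Function.comp_def, one_div] using
            (tendsto_inv_atTop_zero.comp (tendsto_pow_atTop (two_ne_zero)))
        have t2 : Filter.Tendsto (fun r : ℝ => 1/r) Filter.atTop (𝓝 0) := by
          simpa [one_div] using tendsto_inv_atTop_zero
        have t1' : Filter.Tendsto (fun r : ℝ => ENNReal.ofReal (1/r^2) * Ec)
            Filter.atTop (𝓝 0) := by
          have := ENNReal.Tendsto.mul_const (ENNReal.tendsto_ofReal t1) (Or.inr hEc_ne_top)
          simpa using this
        have t2' : Filter.Tendsto (fun r : ℝ =>
            ENNReal.ofReal (2*a/Real.pi) * ENNReal.ofReal (1/r)) Filter.atTop (𝓝 0) := by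
          have := ENNReal.Tendsto.const_mul (a := ENNReal.ofReal (2*a/Real.pi))
            (ENNReal.tendsto_ofReal t2) (Or.inr ENNReal.ofReal_ne_top)
          simpa using this
        rw [he_def]
        simpa using t1'.add t2'
      have heε : ∀ᶠ r in Filter.atTop, e r ≤ (ε : ℝ≥0∞) :=
        (htend_e.eventually_lt_const (by exact_mod_cast hε)).mono fun r h => h.le
      calc Filter.limsup (fun r => e r + ENNReal.ofReal (θ^2) * A (θ*r)) Filter.atTop
          ≤ Filter.limsup (fun r => (ε : ℝ≥0∞) + ENNReal.ofReal (θ^2) * A (θ*r))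
              Filter.atTop := by
            refine Filter.limsup_le_limsup (heε.mono fun r h => ?_)
            exact add_le_add_left h _
        _ = (ε : ℝ≥0∞) + ENNReal.ofReal (θ^2) *
              Filter.limsup (fun r => A (θ*r)) Filter.atTop := by
            rw [aux_limsup_const_add, ENNReal.limsup_const_mul_of_ne_top ENNReal.ofReal_ne_top]
        _ = (ε : ℝ≥0∞) + ENNReal.ofReal (θ^2) * R := by rw [aux_limsup_comp_mul hθ0]
        _ = ENNReal.ofReal (θ^2) * R + ε := add_comm _ _
end

section
/- Let f : ℝ → ℝ be differentiable and let δ ∈ ℝ, δ ≠ 0. If the zero set {x ∈ ℝ : f(x) = 0} has an accumulation point, then the zero set {x ∈ ℝ : f(x) + δ f'(x) = 0} also has an accumulation point. -/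
lemma rolle_step (f : ℝ → ℝ) (hf : Differentiable ℝ f) (δ : ℝ) (hδ : δ ≠ 0)
    (u v : ℝ) (huv : u < v) (hu : f u = 0) (hv : f v = 0) :
    ∃ c ∈ Set.Ioo u v, f c + δ * deriv f c = 0 := by
  set F : ℝ → ℝ := fun x => Real.exp (x / δ) * f x with hF
  have hder : ∀ x : ℝ, HasDerivAt F
      ((1/δ) * Real.exp (x/δ) * f x + Real.exp (x/δ) * deriv f x) x := by
    intro x
    have h1 : HasDerivAt (fun x : ℝ => Real.exp (x/δ)) ((1/δ) * Real.exp (x/δ)) x := by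
      have := ((hasDerivAt_id x).div_const δ).exp
      simpa [mul_comm] using this
    exact h1.mul (hf x).hasDerivAt
  have hcont : ContinuousOn F (Set.Icc u v) :=
    (Continuous.mul (by continuity) hf.continuous).continuousOn
  have hFI : F u = F v := by simp [hF, hu, hv]
  obtain ⟨c, hc, hc0⟩ := exists_deriv_eq_zero huv hcont hFI
  refine ⟨c, hc, ?_⟩
  have hd := (hder c).deriv
  rw [hd] at hc0
  have hE : Real.exp (c/δ) ≠ 0 := (Real.exp_pos _).ne'
  field_simp at hc0
  -- hc0 : f c + δ * deriv f c = 0 (up to arrangement)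
  nlinarith [hc0, Real.exp_pos (c/δ)]

/-- If the zero set of a differentiable `f : ℝ → ℝ` has an accumulation point and
`δ ≠ 0`, then the zero set of `f + δ f'` also has an accumulation point. -/
theorem accPt_zeroSet_add_deriv (f : ℝ → ℝ) (hf : Differentiable ℝ f)
    (δ : ℝ) (hδ : δ ≠ 0)
    (h : ∃ x₀ : ℝ, AccPt x₀ (Filter.principal {x : ℝ | f x = 0})) :
    ∃ x₀ : ℝ, AccPt x₀ (Filter.principal {x : ℝ | f x + δ * deriv f x = 0}) := by
  obtain ⟨x₀, hx₀⟩ := h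
  have hacc := accPt_iff_nhds.mp hx₀
  -- f x₀ = 0 by continuity
  have hfx₀ : f x₀ = 0 := by
    by_contra hne
    have hU : {x : ℝ | f x ≠ 0} ∈ nhds x₀ :=
      (isOpen_compl_iff.mpr (isClosed_eq hf.continuous continuous_const)).mem_nhds hne
    obtain ⟨y, ⟨hy1, hy2⟩, _⟩ := hacc _ hU
    exact hy1 hy2
  refine ⟨x₀, accPt_iff_nhds.mpr ?_⟩
  intro U hU
  obtain ⟨ε, hε, hball⟩ := Metric.mem_nhds_iff.mp hU
  obtain ⟨a, ⟨ha1, ha2⟩, ha3⟩ := hacc _ (Metric.ball_mem_nhds x₀ hε)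
  rcases lt_or_gt_of_ne ha3 with hlt | hgt
  · obtain ⟨c, hc, hc0⟩ := rolle_step f hf δ hδ a x₀ hlt ha2 hfx₀
    refine ⟨c, ⟨hball ?_, hc0⟩, ne_of_lt hc.2⟩
    rw [Metric.mem_ball] at ha1 ⊢
    rw [Real.dist_eq] at ha1 ⊢
    rw [abs_lt] at ha1 ⊢
    constructor <;> [linarith [hc.1, hc.2]; linarith [hc.1, hc.2]]
  · obtain ⟨c, hc, hc0⟩ := rolle_step f hf δ hδ x₀ a hgt hfx₀ ha2
    refine ⟨c, ⟨hball ?_, hc0⟩, (ne_of_gt hc.1)⟩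
    rw [Metric.mem_ball] at ha1 ⊢
    rw [Real.dist_eq] at ha1 ⊢
    rw [abs_lt] at ha1 ⊢
    constructor <;> [linarith [hc.1, hc.2]; linarith [hc.1, hc.2]]
end

section
/- Let f : ℝ → ℝ be differentiable and let δ ∈ ℝ, δ ≠ 0. Then D⁺_circ({x ∈ ℝ : f(x) = 0}) ≤ D⁺_circ({x ∈ ℝ : f(x) + δ f'(x) = 0}). -/
open MeasureTheory Filter Set
open scoped ENNReal Topology

private lemma rolle_aux (f : ℝ → ℝ) (hf : Differentiable ℝ f) (δ : ℝ) (hδ : δ ≠ 0)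
    {a b : ℝ} (hab : a < b) (ha : f a = 0) (hb : f b = 0) :
    ∃ c, a < c ∧ c < b ∧ f c + δ * deriv f c = 0 := by
  have key : ∀ x : ℝ, HasDerivAt (fun y => Real.exp (y / δ) * f y)
      (Real.exp (x / δ) * (1 / δ) * f x + Real.exp (x / δ) * deriv f x) x := by
    intro x
    have h1 : HasDerivAt (fun y : ℝ => y / δ) (1 / δ) x := (hasDerivAt_id x).div_const δ
    have h2 : HasDerivAt (fun y : ℝ => Real.exp (y / δ)) (Real.exp (x / δ) * (1 / δ)) x :=
      h1.exp
    exact h2.mul (hf x).hasDerivAt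
  obtain ⟨c, hc, h0⟩ := exists_hasDerivAt_eq_zero (f := fun y => Real.exp (y / δ) * f y)
    (f' := fun x => Real.exp (x / δ) * (1 / δ) * f x + Real.exp (x / δ) * deriv f x)
    hab
    (((Real.continuous_exp.comp (continuous_id.div_const δ)).mul hf.continuous).continuousOn)
    (by simp [ha, hb]) (fun x _ => key x)
  refine ⟨c, hc.1, hc.2, ?_⟩
  have hexp : Real.exp (c / δ) ≠ 0 := Real.exp_ne_zero _
  have h3 : Real.exp (c / δ) * (f c + δ * deriv f c) = 0 := by
    field_simp at h0 ⊢
    nlinarith [h0]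
  rcases mul_eq_zero.mp h3 with h | h
  · exact absurd h hexp
  · exact h

private lemma isolated_aux (f : ℝ → ℝ) (hf : Differentiable ℝ f) {x : ℝ} (hx : f x = 0)
    (hx' : deriv f x ≠ 0) :
    ∃ ε > 0, ∀ z, z ≠ x → |z - x| < ε → f z ≠ 0 := by
  have h := (hf x).hasDerivAt
  rw [hasDerivAt_iff_tendsto_slope] at h
  have h2 : ∀ᶠ z in 𝓝[≠] x, slope f x z ≠ 0 := h.eventually_ne hx'
  rw [eventually_iff, Metric.mem_nhdsWithin_iff] at h2
  obtain ⟨ε, hε, h3⟩ := h2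
  refine ⟨ε, hε, fun z hz hzx hfz => ?_⟩
  have : slope f x z ≠ 0 := h3 ⟨by rwa [Metric.mem_ball, Real.dist_eq], hz⟩
  apply this
  simp [slope, hfz, hx]

private def Good (f : ℝ → ℝ) (δ : ℝ) (x c : ℝ) : Prop :=
  (f c + δ * deriv f c = 0) ∧
    (c = x ∨
      (f c ≠ 0 ∧ 0 < c ∧ c < x ∧ ∀ z, f z = 0 → 0 ≤ z → z < x → z < c) ∨
      (f c ≠ 0 ∧ c < 0 ∧ x < c ∧ ∀ z, f z = 0 → z ≤ 0 → x < z → c < z))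

private lemma Good.abs_le {f : ℝ → ℝ} {δ x c : ℝ} (h : Good f δ x c) : |c| ≤ |x| := by
  rcases h.2 with rfl | ⟨-, h1, h2, -⟩ | ⟨-, h1, h2, -⟩
  · exact le_refl _
  · rw [abs_of_pos h1]
    exact le_trans h2.le (le_abs_self x)
  · rw [abs_of_neg h1]
    calc -c ≤ -x := by linarith
    _ ≤ |x| := neg_le_abs x

private lemma Good.inj {f : ℝ → ℝ} {δ x₁ x₂ c : ℝ} (hx₁ : f x₁ = 0) (hx₂ : f x₂ = 0)
    (h₁ : Good f δ x₁ c) (h₂ : Good f δ x₂ c) : x₁ = x₂ := by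
  by_contra hne
  rcases h₁.2 with rfl | ⟨hc1, hp1, hp2, hp3⟩ | ⟨hc1, hn1, hn2, hn3⟩ <;>
    rcases h₂.2 with h2 | ⟨hc1', hp1', hp2', hp3'⟩ | ⟨hc1', hn1', hn2', hn3'⟩
  · exact hne h2
  · exact hc1' hx₁
  · exact hc1' hx₁
  · exact hc1 (h2 ▸ hx₂)
  · rcases lt_trichotomy x₁ x₂ with h | h | h
    · exact absurd (hp3' x₁ hx₁ (by linarith) h) (by linarith)
    · exact hne h
    · exact absurd (hp3 x₂ hx₂ (by linarith) h) (by linarith)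
  · linarith
  · exact hc1 (h2 ▸ hx₂)
  · linarith
  · rcases lt_trichotomy x₁ x₂ with h | h | h
    · exact absurd (hn3 x₂ hx₂ (by linarith) h) (by linarith)
    · exact hne h
    · exact absurd (hn3' x₁ hx₁ (by linarith) h) (by linarith)

private lemma exists_good_pos (f : ℝ → ℝ) (hf : Differentiable ℝ f) (δ : ℝ) (hδ : δ ≠ 0)
    {x z₀ : ℝ} (hx : f x = 0) (hgx : f x + δ * deriv f x ≠ 0)
    (hz₀ : f z₀ = 0) (hz₀0 : 0 ≤ z₀) (hz₀x : z₀ < x) : ∃ c, Good f δ x c := by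
  have hx' : deriv f x ≠ 0 := by
    intro h
    exact hgx (by rw [h, hx]; ring)
  obtain ⟨ε, hε, hiso⟩ := isolated_aux f hf hx hx'
  have hzero : ∀ z, f z = 0 → z < x → z ≤ x - ε := by
    intro z hz hzx
    by_contra h
    exact hiso z (ne_of_lt hzx) (by rw [abs_lt]; constructor <;> linarith) hz
  set s : Set ℝ := {z | f z = 0} ∩ Icc 0 (x - ε) with hs
  have hclosed : IsClosed {z : ℝ | f z = 0} := isClosed_eq hf.continuous continuous_const
  have hcpt : IsCompact s := isCompact_Icc.inter_left hclosed
  have hsne : s.Nonempty := ⟨z₀, hz₀, hz₀0, hzero z₀ hz₀ hz₀x⟩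
  have hm := hcpt.sSup_mem hsne
  set m := sSup s with hmdef
  obtain ⟨hmz, hm0, hmx⟩ := hm
  have hmltx : m < x := by linarith
  obtain ⟨c, hc1, hc2, hc3⟩ := rolle_aux f hf δ hδ hmltx hmz hx
  have hub : ∀ z, f z = 0 → 0 ≤ z → z < x → z ≤ m := by
    intro z hz hz0 hzx
    exact le_csSup hcpt.bddAbove ⟨hz, hz0, hzero z hz hzx⟩
  have hfc : f c ≠ 0 := by
    intro h
    exact absurd (hub c h (by linarith) hc2) (by linarith)
  exact ⟨c, hc3, Or.inr (Or.inl ⟨hfc, by linarith, hc2,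
    fun z hz hz0 hzx => lt_of_le_of_lt (hub z hz hz0 hzx) hc1⟩)⟩

private lemma exists_good_neg (f : ℝ → ℝ) (hf : Differentiable ℝ f) (δ : ℝ) (hδ : δ ≠ 0)
    {x z₀ : ℝ} (hx : f x = 0) (hgx : f x + δ * deriv f x ≠ 0)
    (hz₀ : f z₀ = 0) (hz₀0 : z₀ ≤ 0) (hz₀x : x < z₀) : ∃ c, Good f δ x c := by
  have hx' : deriv f x ≠ 0 := by
    intro h
    exact hgx (by rw [h, hx]; ring)
  obtain ⟨ε, hε, hiso⟩ := isolated_aux f hf hx hx'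
  have hzero : ∀ z, f z = 0 → x < z → x + ε ≤ z := by
    intro z hz hzx
    by_contra h
    exact hiso z (ne_of_gt hzx) (by rw [abs_lt]; constructor <;> linarith) hz
  set s : Set ℝ := {z | f z = 0} ∩ Icc (x + ε) 0 with hs
  have hclosed : IsClosed {z : ℝ | f z = 0} := isClosed_eq hf.continuous continuous_const
  have hcpt : IsCompact s := isCompact_Icc.inter_left hclosed
  have hsne : s.Nonempty := ⟨z₀, hz₀, hzero z₀ hz₀ hz₀x, hz₀0⟩
  have hm := hcpt.sInf_mem hsne
  set m := sInf s with hmdef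
  obtain ⟨hmz, hmx, hm0⟩ := hm
  have hmgtx : x < m := by linarith
  obtain ⟨c, hc1, hc2, hc3⟩ := rolle_aux f hf δ hδ hmgtx hx hmz
  have hlb : ∀ z, f z = 0 → z ≤ 0 → x < z → m ≤ z := by
    intro z hz hz0 hzx
    exact csInf_le hcpt.bddBelow ⟨hz, hzero z hz hzx, hz0⟩
  have hfc : f c ≠ 0 := by
    intro h
    exact absurd (hlb c h (by linarith) hc1) (by linarith)
  exact ⟨c, hc3, Or.inr (Or.inr ⟨hfc, by linarith, hc1,
    fun z hz hz0 hzx => lt_of_lt_of_le hc2 (hlb z hz hz0 hzx)⟩)⟩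

private lemma chord_le (f : ℝ → ℝ) (hf : Differentiable ℝ f) (δ : ℝ) (hδ : δ ≠ 0)
    {t : ℝ} (ht : 0 < t) :
    circChordSum {x | f x = 0} t ≤
      circChordSum {x | f x + δ * deriv f x = 0} t + 3 * ENNReal.ofReal t := by
  classical
  set ch : ℝ → ℝ≥0∞ := fun x => ENNReal.ofReal (Real.sqrt (t ^ 2 - x ^ 2)) with hch
  set A : Set ℝ := {x | f x = 0} ∩ Icc (-t) t with hA
  set B : Set ℝ := {x | f x + δ * deriv f x = 0} ∩ Icc (-t) t with hB
  set E : Set ℝ := {x | x ∈ A ∧ ¬ ∃ c, Good f δ x c} with hE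
  have hcht : ∀ x : ℝ, ch x ≤ ENNReal.ofReal t := by
    intro x
    apply ENNReal.ofReal_le_ofReal
    calc Real.sqrt (t ^ 2 - x ^ 2) ≤ Real.sqrt (t ^ 2) :=
          Real.sqrt_le_sqrt (by nlinarith [sq_nonneg x])
      _ = t := Real.sqrt_sq ht.le
  -- any point of E is a zero of f where f + δ f' does not vanish
  have hEzero : ∀ x ∈ E, f x = 0 := fun x hx => hx.1.1
  have hEg : ∀ x ∈ E, f x + δ * deriv f x ≠ 0 := by
    intro x hx h
    exact hx.2 ⟨x, h, Or.inl rfl⟩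
  -- E has at most one positive and at most one negative element
  have hPsub : ∀ x₁ ∈ E, ∀ x₂ ∈ E, 0 < x₁ → 0 < x₂ → x₁ = x₂ := by
    intro x₁ hx₁ x₂ hx₂ h₁ h₂
    rcases lt_trichotomy x₁ x₂ with h | h | h
    · exact absurd (exists_good_pos f hf δ hδ (hEzero x₂ hx₂) (hEg x₂ hx₂)
        (hEzero x₁ hx₁) h₁.le h) hx₂.2
    · exact h
    · exact absurd (exists_good_pos f hf δ hδ (hEzero x₁ hx₁) (hEg x₁ hx₁)
        (hEzero x₂ hx₂) h₂.le h) hx₁.2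
  have hNsub : ∀ x₁ ∈ E, ∀ x₂ ∈ E, x₁ < 0 → x₂ < 0 → x₁ = x₂ := by
    intro x₁ hx₁ x₂ hx₂ h₁ h₂
    rcases lt_trichotomy x₁ x₂ with h | h | h
    · exact absurd (exists_good_neg f hf δ hδ (hEzero x₁ hx₁) (hEg x₁ hx₁)
        (hEzero x₂ hx₂) h₂.le h) hx₁.2
    · exact h
    · exact absurd (exists_good_neg f hf δ hδ (hEzero x₂ hx₂) (hEg x₂ hx₂)
        (hEzero x₁ hx₁) h₁.le h) hx₂.2
  obtain ⟨u, v, hEuv⟩ : ∃ u v : ℝ, E ⊆ {0, u, v} := by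
    refine ⟨if h : (E ∩ Ioi 0).Nonempty then h.some else 0,
            if h : (E ∩ Iio 0).Nonempty then h.some else 0, fun x hx => ?_⟩
    rcases lt_trichotomy x 0 with h | h | h
    · have hne : (E ∩ Iio 0).Nonempty := ⟨x, hx, h⟩
      have := hne.some_mem
      right; right
      rw [dif_pos hne]
      exact (hNsub x hx _ this.1 h this.2).symm ▸ rfl
    · left; exact h
    · have hne : (E ∩ Ioi 0).Nonempty := ⟨x, hx, h⟩
      have := hne.some_mem
      right; left
      rw [dif_pos hne]
      exact (hPsub x hx _ this.1 h this.2).symm ▸ rfl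
  -- the injection on A \ E
  have hgood : ∀ x : ↥(A \ E), ∃ c, Good f δ (x : ℝ) c := by
    rintro ⟨x, hxA, hxE⟩
    by_contra h
    exact hxE ⟨hxA, h⟩
  choose Φ hΦ using hgood
  have habs : ∀ x : ↥(A \ E), |Φ x| ≤ |(x : ℝ)| := fun x => (hΦ x).abs_le
  have hmemB : ∀ x : ↥(A \ E), Φ x ∈ B := by
    intro x
    have hxt : |(x : ℝ)| ≤ t := abs_le.mpr ⟨x.2.1.2.1, x.2.1.2.2⟩
    have := (habs x).trans hxt
    exact ⟨(hΦ x).1, (abs_le.mp this).1, (abs_le.mp this).2⟩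
  set Ψ : ↥(A \ E) → ↥B := fun x => ⟨Φ x, hmemB x⟩ with hΨ
  have hΨinj : Function.Injective Ψ := by
    intro x₁ x₂ h
    have hc : Φ x₁ = Φ x₂ := congrArg Subtype.val h
    have := Good.inj (x₁.2.1.1) (x₂.2.1.1) (hΦ x₁) (hc ▸ hΦ x₂)
    exact Subtype.ext this
  have hmono : ∀ x : ↥(A \ E), ch (x : ℝ) ≤ ch (Φ x) := by
    intro x
    apply ENNReal.ofReal_le_ofReal
    apply Real.sqrt_le_sqrt
    have h2 : (Φ x) ^ 2 ≤ (x : ℝ) ^ 2 := by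
      rw [← sq_abs (Φ x), ← sq_abs (x : ℝ)]
      exact pow_le_pow_left₀ (abs_nonneg _) (habs x) 2
    linarith
  -- put the pieces together
  have hBsum : ∑' x : ↥(A \ E), ch (x : ℝ) ≤ ∑' y : ↥B, ch (y : ℝ) := by
    calc ∑' x : ↥(A \ E), ch (x : ℝ) ≤ ∑' x : ↥(A \ E), ch ((Ψ x : ℝ)) :=
          ENNReal.tsum_le_tsum fun x => hmono x
      _ ≤ ∑' y : ↥B, ch (y : ℝ) :=
          ENNReal.tsum_comp_le_tsum_of_injective hΨinj (fun y : ↥B => ch (y : ℝ))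
  have hEsum : ∑' x : ↥(A ∩ E), ch (x : ℝ) ≤ 3 * ENNReal.ofReal t := by
    have h1 : A ∩ E ⊆ (↑({0, u, v} : Finset ℝ) : Set ℝ) := by
      intro x hx
      simpa using hEuv hx.2
    calc ∑' x : ↥(A ∩ E), ch (x : ℝ) ≤ ∑' x : ↥(↑({0, u, v} : Finset ℝ) : Set ℝ), ch (x : ℝ) :=
          ENNReal.tsum_mono_subtype ch h1
      _ = ∑ i ∈ ({0, u, v} : Finset ℝ), ch i := Finset.tsum_subtype _ ch
      _ ≤ ∑ _i ∈ ({0, u, v} : Finset ℝ), ENNReal.ofReal t :=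
          Finset.sum_le_sum fun i _ => hcht i
      _ = ({0, u, v} : Finset ℝ).card • ENNReal.ofReal t := by rw [Finset.sum_const]
      _ ≤ 3 * ENNReal.ofReal t := by
          rw [nsmul_eq_mul]
          apply mul_le_mul_left
          have hcard : ({0, u, v} : Finset ℝ).card ≤ 3 := by
            apply (Finset.card_insert_le _ _).trans
            have := (Finset.card_insert_le u ({v} : Finset ℝ))
            simp only [Finset.card_singleton] at this ⊢
            omega
          exact_mod_cast Nat.cast_le.mpr hcard
  calc circChordSum {x | f x = 0} t = ∑' x : ↥((A \ E) ∪ (A ∩ E)), ch (x : ℝ) := by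
        rw [Set.diff_union_inter]; rfl
    _ ≤ (∑' x : ↥(A \ E), ch (x : ℝ)) + ∑' x : ↥(A ∩ E), ch (x : ℝ) :=
        ENNReal.tsum_union_le ch _ _
    _ ≤ (∑' y : ↥B, ch (y : ℝ)) + 3 * ENNReal.ofReal t := add_le_add hBsum hEsum
    _ = circChordSum {x | f x + δ * deriv f x = 0} t + 3 * ENNReal.ofReal t := rfl


/-- For differentiable `f : ℝ → ℝ` and `δ ≠ 0`,
`D⁺_circ({f = 0}) ≤ D⁺_circ({f + δ f' = 0})`. -/
theorem circDensity_zeroSet_le_circDensity_zeroSet_add_deriv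
    (f : ℝ → ℝ) (hf : Differentiable ℝ f) (δ : ℝ) (hδ : δ ≠ 0) :
    circDensity {x : ℝ | f x = 0} ≤ circDensity {x : ℝ | f x + δ * deriv f x = 0} := by
  set Zf : Set ℝ := {x | f x = 0}
  set Zg : Set ℝ := {x | f x + δ * deriv f x = 0}
  set F : ℝ → ℝ≥0∞ := fun r => ENNReal.ofReal (4 / (Real.pi * r ^ 2)) *
      ∫⁻ t in Set.Ioc (0 : ℝ) r, circChordSum Zf t / ENNReal.ofReal t with hF
  set G : ℝ → ℝ≥0∞ := fun r => ENNReal.ofReal (4 / (Real.pi * r ^ 2)) *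
      ∫⁻ t in Set.Ioc (0 : ℝ) r, circChordSum Zg t / ENNReal.ofReal t with hG
  set H : ℝ → ℝ≥0∞ := fun r =>
      ENNReal.ofReal (4 / (Real.pi * r ^ 2)) * (3 * ENNReal.ofReal r) with hH
  -- pointwise bound F ≤ G + H
  have hFG : ∀ r : ℝ, F r ≤ G r + H r := by
    intro r
    have hint : (∫⁻ t in Set.Ioc (0 : ℝ) r, circChordSum Zf t / ENNReal.ofReal t) ≤
        (∫⁻ t in Set.Ioc (0 : ℝ) r, circChordSum Zg t / ENNReal.ofReal t) +
          3 * ENNReal.ofReal r := by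
      have step : (∫⁻ t in Set.Ioc (0 : ℝ) r, circChordSum Zf t / ENNReal.ofReal t) ≤
          ∫⁻ t in Set.Ioc (0 : ℝ) r,
            (circChordSum Zg t / ENNReal.ofReal t + 3) := by
        apply setLIntegral_mono' measurableSet_Ioc
        intro x hx
        have hx0 : (0 : ℝ) < x := hx.1
        have hch := chord_le f hf δ hδ hx0
        have hne : ENNReal.ofReal x ≠ 0 := by
          simp [ENNReal.ofReal_eq_zero, not_le, hx0]
        have hnetop : ENNReal.ofReal x ≠ ⊤ := ENNReal.ofReal_ne_top
        calc circChordSum Zf x / ENNReal.ofReal x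
            ≤ (circChordSum Zg x + 3 * ENNReal.ofReal x) / ENNReal.ofReal x :=
              ENNReal.div_le_div_right hch _
          _ = circChordSum Zg x / ENNReal.ofReal x +
                (3 * ENNReal.ofReal x) / ENNReal.ofReal x := by
              rw [ENNReal.add_div]
          _ = circChordSum Zg x / ENNReal.ofReal x + 3 := by
              rw [mul_div_assoc, ENNReal.div_self hne hnetop, mul_one]
      calc (∫⁻ t in Set.Ioc (0 : ℝ) r, circChordSum Zf t / ENNReal.ofReal t)
          ≤ ∫⁻ t in Set.Ioc (0 : ℝ) r, (circChordSum Zg t / ENNReal.ofReal t + 3) := step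
        _ = (∫⁻ t in Set.Ioc (0 : ℝ) r, circChordSum Zg t / ENNReal.ofReal t) +
              3 * (volume (Set.Ioc (0 : ℝ) r)) := by
            rw [lintegral_add_right _ measurable_const, setLIntegral_const]
        _ ≤ (∫⁻ t in Set.Ioc (0 : ℝ) r, circChordSum Zg t / ENNReal.ofReal t) +
              3 * ENNReal.ofReal r := by
            gcongr
            rw [Real.volume_Ioc]
            exact ENNReal.ofReal_le_ofReal (by linarith)
    calc F r ≤ ENNReal.ofReal (4 / (Real.pi * r ^ 2)) *
          ((∫⁻ t in Set.Ioc (0 : ℝ) r, circChordSum Zg t / ENNReal.ofReal t) +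
            3 * ENNReal.ofReal r) := mul_le_mul_right hint _
      _ = G r + H r := by rw [mul_add]
  -- H tends to zero
  have hH0 : Tendsto H atTop (nhds 0) := by
    have heq : ∀ᶠ r in (atTop : Filter ℝ), ENNReal.ofReal (12 / (Real.pi * r)) = H r := by
      filter_upwards [eventually_gt_atTop (0 : ℝ)] with r hr
      have h4 : (0:ℝ) ≤ 4 / (Real.pi * r ^ 2) := by positivity
      rw [hH]
      show ENNReal.ofReal (12 / (Real.pi * r)) =
        ENNReal.ofReal (4 / (Real.pi * r ^ 2)) * (3 * ENNReal.ofReal r)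
      rw [← ENNReal.ofReal_ofNat 3, ← ENNReal.ofReal_mul (by norm_num),
        ← ENNReal.ofReal_mul h4]
      congr 1
      have hπ : Real.pi ≠ 0 := Real.pi_ne_zero
      field_simp
      ring
    have hlim : Tendsto (fun r : ℝ => ENNReal.ofReal (12 / (Real.pi * r))) atTop (nhds 0) := by
      rw [show (0 : ℝ≥0∞) = ENNReal.ofReal 0 by simp]
      apply ENNReal.tendsto_ofReal
      have : Tendsto (fun r : ℝ => Real.pi * r) atTop atTop :=
        Tendsto.const_mul_atTop Real.pi_pos tendsto_id
      exact Tendsto.div_atTop tendsto_const_nhds this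
    exact hlim.congr' heq
  -- conclude via limsup
  show Filter.limsup F atTop ≤ Filter.limsup G atTop
  rcases eq_top_or_lt_top (Filter.limsup G atTop) with htop | hlt
  · rw [htop]; exact le_top
  apply ENNReal.le_of_forall_pos_le_add
  intro ε hε _
  have hev : ∀ᶠ r in (atTop : Filter ℝ), F r ≤ G r + (ε : ℝ≥0∞) := by
    have : ∀ᶠ r in (atTop : Filter ℝ), H r < (ε : ℝ≥0∞) :=
      hH0.eventually_lt_const (by exact_mod_cast hε)
    filter_upwards [this] with r hr
    exact (hFG r).trans (add_le_add_right hr.le _)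
  calc Filter.limsup F atTop ≤ Filter.limsup (fun r => G r + (ε : ℝ≥0∞)) atTop :=
        Filter.limsup_le_limsup hev
    _ = Filter.limsup G atTop + (ε : ℝ≥0∞) := by
        have hmono : Monotone (fun x : ℝ≥0∞ => x + (ε : ℝ≥0∞)) :=
          fun a b hab => add_le_add_left hab _
        have := hmono.map_limsup_of_continuousAt (F := (atTop : Filter ℝ)) G
          ((continuous_add_right (ε : ℝ≥0∞)).continuousAt)
        exact this.symm
end

section
/- Let α > 0 and ε ∈ (0,1). There exists a constant C = C_{α,ε} > 0 such that for every t ≥ C and every set Λ' ⊆ ℝ with 0 ∉ Λ' and no accumulation points, ∑_{λ ∈ Λ'∩[−t,t]} (2/α)√(t²−λ²) ≤ #((Λ' × αℤ) ∩ B_{(1+ε)t}(0)), where B_s(0) is the open Euclidean disk of radius s centered at the origin of ℝ². -/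
open MeasureTheory Filter Set
open scoped ENNReal

private lemma biUnion_encard_eq (α : ℝ) (hα : α ≠ 0) (f : ℝ → Set ℤ) (s : Finset ℝ) :
    ((⋃ lam ∈ s, (fun k : ℤ => ((lam, α * k) : ℝ × ℝ)) '' f lam).encard : ℝ≥0∞)
      = ∑ lam ∈ s, ((f lam).encard : ℝ≥0∞) := by
  classical
  induction s using Finset.induction with
  | empty => simp
  | @insert a s ha ih =>
    have hinj : Function.Injective (fun k : ℤ => ((a, α * k) : ℝ × ℝ)) := by
      intro k k' h
      have h2 : α * (k : ℝ) = α * (k' : ℝ) := congrArg Prod.snd h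
      exact_mod_cast mul_left_cancel₀ hα h2
    have hdisj : Disjoint ((fun k : ℤ => ((a, α * k) : ℝ × ℝ)) '' f a)
        (⋃ lam ∈ s, (fun k : ℤ => ((lam, α * k) : ℝ × ℝ)) '' f lam) := by
      rw [Set.disjoint_left]
      rintro p ⟨k, -, rfl⟩ hp
      simp only [Set.mem_iUnion, Set.mem_image] at hp
      obtain ⟨lam, hlam, k', -, hk'⟩ := hp
      have : lam = a := congrArg Prod.fst hk'
      exact ha (this ▸ hlam)
    rw [Finset.set_biUnion_insert, Set.encard_union_eq hdisj, Finset.sum_insert ha,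
      hinj.encard_image, ENat.toENNReal_add, ih]

/-- For `α > 0`, `ε ∈ (0,1)`, there is `C > 0` such that for every `t ≥ C` and every
`Λ' ⊆ ℝ∖{0}` without accumulation points,
`∑_{λ ∈ Λ'∩[−t,t]} (2/α)√(t²−λ²) ≤ #((Λ' × αℤ) ∩ B_{(1+ε)t}(0))`. -/
theorem chordSum_le_count_of_dilate (α ε : ℝ) (hα : 0 < α) (hε : ε ∈ Set.Ioo (0 : ℝ) 1) :
    ∃ C : ℝ, 0 < C ∧ ∀ t : ℝ, C ≤ t → ∀ Λ' : Set ℝ, 0 ∉ Λ' →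
      (∀ R : ℝ, 0 < R → (Λ' ∩ Set.Icc (-R) R).Finite) →
      (∑' lam : (Λ' ∩ Set.Icc (-t) t : Set ℝ),
          ENNReal.ofReal ((2 / α) * Real.sqrt (t ^ 2 - (lam : ℝ) ^ 2)))
        ≤ ({p : ℝ × ℝ | p.1 ∈ Λ' ∧ (∃ k : ℤ, p.2 = α * k) ∧
              p.1 ^ 2 + p.2 ^ 2 < ((1 + ε) * t) ^ 2}.encard : ℝ≥0∞) := by
  classical
  obtain ⟨hε0, hε1⟩ := hε
  refine ⟨α / ε + 1, by positivity, ?_⟩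
  intro t ht Λ' h0 hfin
  have ht0 : 0 < t := lt_of_lt_of_le (by positivity) ht
  have htα : α ≤ ε * t := by
    have h1 : α / ε ≤ t := by linarith
    have := (div_le_iff₀ hε0).mp h1
    linarith [this]
  have hF : (Λ' ∩ Set.Icc (-t) t).Finite := hfin t ht0
  set K : ℝ → Set ℤ := fun lam => {k : ℤ | lam ^ 2 + (α * k) ^ 2 < ((1 + ε) * t) ^ 2} with hK
  -- per-λ bound
  have step1 : ∀ lam ∈ Λ' ∩ Set.Icc (-t) t,
      ENNReal.ofReal ((2 / α) * Real.sqrt (t ^ 2 - lam ^ 2)) ≤ ((K lam).encard : ℝ≥0∞) := by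
    intro lam hlam
    obtain ⟨-, hlo, hhi⟩ := hlam
    have hlam2 : lam ^ 2 ≤ t ^ 2 := by nlinarith
    set s := Real.sqrt (t ^ 2 - lam ^ 2) with hs
    have hs0 : 0 ≤ s := Real.sqrt_nonneg _
    have hs2 : s ^ 2 = t ^ 2 - lam ^ 2 := Real.sq_sqrt (by linarith)
    have hst : s ≤ t := by nlinarith
    set n : ℕ := ⌈s / α⌉₊ with hn
    have hsn : s / α ≤ n := Nat.le_ceil _
    have hns : (n : ℝ) < s / α + 1 := Nat.ceil_lt_add_one (by positivity)
    have hαn : α * n < s + α := by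
      have := (mul_lt_mul_iff_right₀ hα).mpr hns
      rw [mul_add, mul_one, mul_div_cancel₀ _ (ne_of_gt hα)] at this
      linarith
    have hsub : (Finset.Icc (-(n : ℤ)) n : Set ℤ) ⊆ K lam := by
      intro k hk
      simp only [Finset.coe_Icc, Set.mem_Icc] at hk
      have hk1 : (k : ℝ) ≤ n := by exact_mod_cast hk.2
      have hk2 : -(n : ℝ) ≤ k := by exact_mod_cast hk.1
      have hαn0 : (0 : ℝ) ≤ α * n := by positivity
      have hk2n : (k : ℝ) ^ 2 ≤ (n : ℝ) ^ 2 := by nlinarith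
      have h1 : (α * k) ^ 2 ≤ (α * n) ^ 2 := by
        have := mul_le_mul_of_nonneg_left hk2n (sq_nonneg α)
        calc (α * (k : ℝ)) ^ 2 = α ^ 2 * (k : ℝ) ^ 2 := by ring
          _ ≤ α ^ 2 * (n : ℝ) ^ 2 := this
          _ = (α * (n : ℝ)) ^ 2 := by ring
      have h2 : (α * n) ^ 2 < (s + α) ^ 2 := by
        have h := mul_self_lt_mul_self hαn0 hαn
        calc (α * (n:ℝ)) ^ 2 = (α * n) * (α * n) := sq (α * n) ▸ by ring
          _ < (s + α) * (s + α) := h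
          _ = (s + α) ^ 2 := by ring
      have h3 : (s + α) ^ 2 ≤ (s + ε * t) ^ 2 := by
        have h := mul_self_le_mul_self (by positivity : (0:ℝ) ≤ s + α) (by linarith : s + α ≤ s + ε * t)
        calc (s + α) ^ 2 = (s + α) * (s + α) := by ring
          _ ≤ (s + ε * t) * (s + ε * t) := h
          _ = (s + ε * t) ^ 2 := by ring
      have hq : ε * t * s ≤ ε * t * t := mul_le_mul_of_nonneg_left hst (by positivity)
      have h4 : (s + ε * t) ^ 2 ≤ ((1 + ε) * t) ^ 2 - lam ^ 2 := by nlinarith [hq]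
      show lam ^ 2 + (α * ↑k) ^ 2 < ((1 + ε) * t) ^ 2
      linarith
    have hcard : ((Finset.Icc (-(n : ℤ)) n).card : ℕ∞) = (2 * n + 1 : ℕ) := by
      rw [Int.card_Icc]
      congr 1
      omega
    have hKcard : ((2 * n + 1 : ℕ) : ℕ∞) ≤ (K lam).encard := by
      calc ((2 * n + 1 : ℕ) : ℕ∞) = ((Finset.Icc (-(n : ℤ)) n).card : ℕ∞) := hcard.symm
      _ = (Finset.Icc (-(n : ℤ)) n : Set ℤ).encard := (Set.encard_coe_eq_coe_finsetCard _).symm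
      _ ≤ (K lam).encard := Set.encard_mono hsub
    have hofreal : ENNReal.ofReal ((2 / α) * s) ≤ ((2 * n + 1 : ℕ) : ℝ≥0∞) := by
      rw [← ENNReal.ofReal_natCast]
      apply ENNReal.ofReal_le_ofReal
      push_cast
      have h : (2 / α) * s = 2 * (s / α) := by ring
      rw [h]
      linarith [hsn]
    refine hofreal.trans ?_
    rw [← ENat.toENNReal_coe]
    exact ENat.toENNReal_le.mpr hKcard
  -- the union of grid points is contained in the counted set
  have hsubS : (⋃ lam ∈ hF.toFinset, (fun k : ℤ => ((lam, α * k) : ℝ × ℝ)) '' K lam)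
      ⊆ {p : ℝ × ℝ | p.1 ∈ Λ' ∧ (∃ k : ℤ, p.2 = α * k) ∧
          p.1 ^ 2 + p.2 ^ 2 < ((1 + ε) * t) ^ 2} := by
    intro p hp
    simp only [Set.mem_iUnion, Set.mem_image, Set.Finite.mem_toFinset] at hp
    obtain ⟨lam, hlam, k, hkK, rfl⟩ := hp
    exact ⟨hlam.1, ⟨k, rfl⟩, hkK⟩
  calc (∑' lam : (Λ' ∩ Set.Icc (-t) t : Set ℝ),
          ENNReal.ofReal ((2 / α) * Real.sqrt (t ^ 2 - (lam : ℝ) ^ 2)))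
      = ∑ lam ∈ hF.toFinset, ENNReal.ofReal ((2 / α) * Real.sqrt (t ^ 2 - lam ^ 2)) := by
        exact (tsum_congr_set_coe
            (fun lam => ENNReal.ofReal ((2 / α) * Real.sqrt (t ^ 2 - lam ^ 2)))
            hF.coe_toFinset.symm).trans (Finset.tsum_subtype' hF.toFinset
            (fun lam => ENNReal.ofReal ((2 / α) * Real.sqrt (t ^ 2 - lam ^ 2))))
    _ ≤ ∑ lam ∈ hF.toFinset, ((K lam).encard : ℝ≥0∞) :=
        Finset.sum_le_sum fun lam hl => step1 lam (hF.mem_toFinset.mp hl)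
    _ = ((⋃ lam ∈ hF.toFinset, (fun k : ℤ => ((lam, α * k) : ℝ × ℝ)) '' K lam).encard : ℝ≥0∞) :=
        (biUnion_encard_eq α (ne_of_gt hα) K hF.toFinset).symm
    _ ≤ _ := ENat.toENNReal_le.mpr (Set.encard_mono hsubS)
end
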